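/- arXiv:1705.01688 — 10 statements merged into one kernel-verified Lean document; each statement's English description precedes it below -/
import Mathlib

section
/- Let K : ℝ → ℝ be a continuous function with K(r) ≤ 0 for all r. Then there exists a twice continuously differentiable function h : ℝ → ℝ satisfying h''(r) + K(r)·h(r) = 0 for all r ∈ ℝ, with h(0) = 1, with 0 ≤ h(r) ≤ 1 for all r ≤ 0, and with h'(0) ≥ 0. -/
open Set MeasureTheory intervalIntegral Real Filter

lemma primitive_hasDerivAt {F : ℝ → ℝ} (hF : Continuous F) (t : ℝ) :
    HasDerivAt (fun r => ∫ s in (0:ℝ)..r, F s) (F t) t :=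
  integral_hasDerivAt_right (hF.intervalIntegrable _ _)
    (hF.stronglyMeasurableAtFilter _ _) hF.continuousAt

lemma primitive_continuous {F : ℝ → ℝ} (hF : Continuous F) :
    Continuous (fun r => ∫ s in (0:ℝ)..r, F s) := by
  have : Differentiable ℝ (fun r => ∫ s in (0:ℝ)..r, F s) :=
    fun t => (primitive_hasDerivAt hF t).differentiableAt
  exact this.continuous

lemma abs_integral_abs_pow (n : ℕ) (t : ℝ) :
    |∫ s in (0:ℝ)..t, |s| ^ n| = |t| ^ (n + 1) / (n + 1) := by
  have habs : ∀ u : ℝ, 0 ≤ u → |∫ s in (0:ℝ)..u, |s| ^ n| = |u| ^ (n + 1) / (n + 1) := by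
    intro u hu
    have : (∫ s in (0:ℝ)..u, |s| ^ n) = ∫ s in (0:ℝ)..u, s ^ n := by
      apply integral_congr
      intro s hs
      rw [uIcc_of_le hu] at hs
      simp [abs_of_nonneg hs.1]
    rw [this, integral_pow, zero_pow (Nat.succ_ne_zero n), sub_zero, abs_div, abs_pow,
      abs_of_nonneg (by positivity : (0:ℝ) ≤ (n:ℝ)+1)]
  rcases le_or_gt 0 t with ht | ht
  · exact habs t ht
  · have h0 : (∫ s in (0:ℝ)..t, |s| ^ n) = ∫ s in (0:ℝ)..t, |(-s)| ^ n := by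
      congr 1; ext s; rw [abs_neg]
    rw [h0, show (∫ s in (0:ℝ)..t, |(-s)| ^ n) = ∫ s in (-t)..(-0:ℝ), |s| ^ n from
      integral_comp_neg (fun s => |s| ^ n), neg_zero, integral_symm, abs_neg,
      habs (-t) (by linarith), abs_neg]

/-- key bound: if `|G s| ≤ c * |s|^n / n!` on the interval, then
`|∫ s in 0..t, G s| ≤ c * |t|^(n+1) / (n+1)!`. -/
lemma integral_bound {G : ℝ → ℝ} (hG : Continuous G) (c : ℝ) (hc : 0 ≤ c) (n : ℕ) (t : ℝ)
    (hb : ∀ s ∈ uIcc (0:ℝ) t, |G s| ≤ c * |s| ^ n / n.factorial) :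
    |∫ s in (0:ℝ)..t, G s| ≤ c * |t| ^ (n + 1) / (n + 1).factorial := by
  have key : ‖∫ s in (0:ℝ)..t, G s‖ ≤ |∫ s in (0:ℝ)..t, c / n.factorial * |s| ^ n| := by
    apply intervalIntegral.norm_integral_le_abs_of_norm_le
    · apply MeasureTheory.ae_restrict_of_forall_mem measurableSet_uIoc
      intro s hs
      have := hb s (uIoc_subset_uIcc hs)
      rw [Real.norm_eq_abs]
      calc |G s| ≤ c * |s| ^ n / n.factorial := this
        _ = c / n.factorial * |s| ^ n := by ring
    · exact ((continuous_const).mul (continuous_abs.pow n)).intervalIntegrable _ _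
  rw [Real.norm_eq_abs] at key
  calc |∫ s in (0:ℝ)..t, G s| ≤ |∫ s in (0:ℝ)..t, c / n.factorial * |s| ^ n| := key
    _ = (c / n.factorial) * |∫ s in (0:ℝ)..t, |s| ^ n| := by
        rw [intervalIntegral.integral_const_mul, abs_mul, abs_of_nonneg (by positivity)]
    _ = (c / n.factorial) * (|t| ^ (n + 1) / (n + 1)) := by rw [abs_integral_abs_pow]
    _ = c * |t| ^ (n + 1) / (n + 1).factorial := by
        rw [div_mul_div_comm, Nat.factorial_succ]
        push_cast
        ring_nf

variable {q : ℝ → ℝ}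

/-- The Volterra operator for `f'' = q f`, `f 0 = a`, `f' 0 = b`, on `C(Icc (-T) T, ℝ)`. -/
noncomputable def volOp (hq : Continuous q) (a b T : ℝ) (hT : -T ≤ T)
    (f : C(Icc (-T) T, ℝ)) : C(Icc (-T) T, ℝ) :=
  have hF : Continuous fun s => q s * f (projIcc (-T) T hT s) :=
    hq.mul (f.continuous.comp continuous_projIcc)
  ⟨fun t => a + b * t + ((t:ℝ) * ∫ s in (0:ℝ)..t, q s * f (projIcc (-T) T hT s))
      - ∫ s in (0:ℝ)..t, s * (q s * f (projIcc (-T) T hT s)),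
   (((continuous_const.add (continuous_const.mul continuous_subtype_val)).add
      (continuous_subtype_val.mul ((primitive_continuous hF).comp continuous_subtype_val))).sub
      ((primitive_continuous (continuous_id.mul hF)).comp continuous_subtype_val))⟩

lemma volOp_apply (hq : Continuous q) (a b T : ℝ) (hT : -T ≤ T) (f : C(Icc (-T) T, ℝ))
    (t : Icc (-T) T) :
    volOp hq a b T hT f t = a + b * t + ((t:ℝ) * ∫ s in (0:ℝ)..t, q s * f (projIcc (-T) T hT s))
      - ∫ s in (0:ℝ)..t, s * (q s * f (projIcc (-T) T hT s)) := rfl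

lemma mem_Icc_of_uIcc {T t s : ℝ} (htT : t ∈ Icc (-T) T) (hs : s ∈ uIcc (0:ℝ) t) :
    s ∈ Icc (-T) T := by
  rcases le_total 0 t with h | h
  · rw [uIcc_of_le h] at hs
    exact ⟨by linarith [hs.1, htT.1, htT.2], by linarith [hs.2, htT.2]⟩
  · rw [uIcc_of_ge h] at hs
    exact ⟨by linarith [hs.1, htT.1], by linarith [hs.2, htT.2, htT.1]⟩

lemma abs_le_of_uIcc {t s : ℝ} (hs : s ∈ uIcc (0:ℝ) t) : |s| ≤ |t| := by
  rcases le_total 0 t with h | h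
  · rw [uIcc_of_le h] at hs
    rw [abs_of_nonneg hs.1, abs_of_nonneg h]; exact hs.2
  · rw [uIcc_of_ge h] at hs
    rw [abs_of_nonpos (le_trans hs.2 (le_refl 0)), abs_of_nonpos h]; linarith [hs.1]

lemma volOp_iterate_bound (hq : Continuous q) (a b T : ℝ) (hT : -T ≤ T) {M : ℝ}
    (hM : ∀ s ∈ Icc (-T) T, |q s| ≤ M) (hM0 : 0 ≤ M) (hT0 : 0 ≤ T)
    (f g : C(Icc (-T) T, ℝ)) :
    ∀ (n : ℕ) (t : Icc (-T) T),
      |((volOp hq a b T hT)^[n] f) t - ((volOp hq a b T hT)^[n] g) t|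
        ≤ dist f g * (2*T*M) ^ n * |(t:ℝ)| ^ n / n.factorial := by
  intro n
  induction n with
  | zero =>
    intro t
    simp only [Function.iterate_zero_apply, pow_zero, Nat.factorial_zero, Nat.cast_one,
      mul_one, div_one]
    rw [← Real.dist_eq]
    exact ContinuousMap.dist_apply_le_dist t
  | succ n ih =>
    intro t
    rw [Function.iterate_succ_apply', Function.iterate_succ_apply']
    set F := (volOp hq a b T hT)^[n] f with hF
    set G := (volOp hq a b T hT)^[n] g with hG
    set pp := projIcc (-T) T hT with hπ
    have hcF : Continuous fun s => q s * F (pp s) := hq.mul (F.continuous.comp continuous_projIcc)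
    have hcG : Continuous fun s => q s * G (pp s) := hq.mul (G.continuous.comp continuous_projIcc)
    have hint1 : (∫ s in (0:ℝ)..t, q s * F (pp s)) - (∫ s in (0:ℝ)..t, q s * G (pp s))
        = ∫ s in (0:ℝ)..t, (q s * F (pp s) - q s * G (pp s)) :=
      (intervalIntegral.integral_sub (hcF.intervalIntegrable _ _)
        (hcG.intervalIntegrable _ _)).symm
    have hint2 : (∫ s in (0:ℝ)..t, s * (q s * F (pp s))) - (∫ s in (0:ℝ)..t, s * (q s * G (pp s)))
        = ∫ s in (0:ℝ)..t, (s * (q s * F (pp s)) - s * (q s * G (pp s))) :=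
      (intervalIntegral.integral_sub ((continuous_id.mul hcF).intervalIntegrable _ _)
        ((continuous_id.mul hcG).intervalIntegrable _ _)).symm
    have hdiff : volOp hq a b T hT F t - volOp hq a b T hT G t
        = (t:ℝ) * (∫ s in (0:ℝ)..t, (q s * F (pp s) - q s * G (pp s)))
          - ∫ s in (0:ℝ)..t, (s * (q s * F (pp s)) - s * (q s * G (pp s))) := by
      rw [volOp_apply, volOp_apply, ← hint1, ← hint2, ← hπ]
      ring
    set d := dist f g with hd
    have hd0 : 0 ≤ d := dist_nonneg
    set c := M * (d * (2*T*M)^n) with hc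
    have hc0 : 0 ≤ c := by positivity
    -- pointwise bound on the difference
    have hptw : ∀ s ∈ uIcc (0:ℝ) t.1, |q s * F (pp s) - q s * G (pp s)| ≤ c * |s|^n / n.factorial := by
      intro s hs
      have hsIcc : s ∈ Icc (-T) T := mem_Icc_of_uIcc t.2 hs
      have hqs : |q s| ≤ M := hM s hsIcc
      have hπs : ((pp s : ℝ)) = s := by rw [hπ, projIcc_of_mem hT hsIcc]
      have := ih (pp s)
      rw [hπs] at this
      calc |q s * F (pp s) - q s * G (pp s)| = |q s| * |F (pp s) - G (pp s)| := by
            rw [← abs_mul]; ring_nf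
        _ ≤ M * (d * (2*T*M)^n * |s|^n / n.factorial) :=
            mul_le_mul hqs this (abs_nonneg _) hM0
        _ = c * |s|^n / n.factorial := by rw [hc]; ring
    have hb1 : |∫ s in (0:ℝ)..t, (q s * F (pp s) - q s * G (pp s))|
        ≤ c * |(t:ℝ)|^(n+1) / (n+1).factorial :=
      integral_bound (hcF.sub hcG) c hc0 n t hptw
    have hptw2 : ∀ s ∈ uIcc (0:ℝ) t.1,
        |s * (q s * F (pp s)) - s * (q s * G (pp s))| ≤ (T * c) * |s|^n / n.factorial := by
      intro s hs
      have h1 := hptw s hs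
      have h2 : |s| ≤ T := by
        have := abs_le_of_uIcc hs
        have ht' : |(t:ℝ)| ≤ T := abs_le.2 ⟨t.2.1, t.2.2⟩
        linarith
      calc |s * (q s * F (pp s)) - s * (q s * G (pp s))|
          = |s| * |q s * F (pp s) - q s * G (pp s)| := by rw [← abs_mul]; ring_nf
        _ ≤ T * (c * |s|^n / n.factorial) := by
            apply mul_le_mul h2 h1 (abs_nonneg _) hT0
        _ = (T * c) * |s|^n / n.factorial := by ring
    have hb2 : |∫ s in (0:ℝ)..t, (s * (q s * F (pp s)) - s * (q s * G (pp s)))|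
        ≤ (T * c) * |(t:ℝ)|^(n+1) / (n+1).factorial :=
      integral_bound ((continuous_id.mul hcF).sub (continuous_id.mul hcG)) (T*c)
        (by positivity) n t hptw2
    have ht' : |(t:ℝ)| ≤ T := abs_le.2 ⟨t.2.1, t.2.2⟩
    calc |volOp hq a b T hT F t - volOp hq a b T hT G t|
        ≤ |(t:ℝ)| * |∫ s in (0:ℝ)..t, (q s * F (pp s) - q s * G (pp s))|
          + |∫ s in (0:ℝ)..t, (s * (q s * F (pp s)) - s * (q s * G (pp s)))| := by
          rw [hdiff]
          calc |_ - _| ≤ |(t:ℝ) * ∫ s in (0:ℝ)..t, (q s * F (pp s) - q s * G (pp s))|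
              + |∫ s in (0:ℝ)..t, (s * (q s * F (pp s)) - s * (q s * G (pp s)))| := abs_sub _ _
            _ = _ := by rw [abs_mul]
      _ ≤ T * (c * |(t:ℝ)|^(n+1) / (n+1).factorial) + (T * c) * |(t:ℝ)|^(n+1) / (n+1).factorial := by
          have := mul_le_mul ht' hb1 (abs_nonneg _) hT0
          linarith
      _ = d * (2*T*M)^(n+1) * |(t:ℝ)|^(n+1) / (n+1).factorial := by
          rw [hc]; ring

lemma volOp_exists_fixed (hq : Continuous q) (a b T : ℝ) (hT0 : 0 < T) :
    ∃ x : C(Icc (-T) T, ℝ), volOp hq a b T (by linarith) x = x ∧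
      ∀ y : C(Icc (-T) T, ℝ), volOp hq a b T (by linarith) y = y → y = x := by
  have hT : -T ≤ T := by linarith
  obtain ⟨M₀, hM₀⟩ := (isCompact_Icc : IsCompact (Icc (-T) T)).exists_bound_of_continuousOn
    hq.continuousOn
  set M := max M₀ 0 with hMdef
  have hM : ∀ s ∈ Icc (-T) T, |q s| ≤ M := fun s hs => le_trans (hM₀ s hs) (le_max_left _ _)
  have hM0 : (0:ℝ) ≤ M := le_max_right _ _
  -- choose n with κ < 1
  have htend := FloorSemiring.tendsto_pow_div_factorial_atTop (2*T*M*T)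
  obtain ⟨n, hn⟩ := (htend.eventually (gt_mem_nhds (by norm_num : (0:ℝ) < 1))).exists
  set κ : ℝ := (2*T*M)^n * T^n / n.factorial with hκdef
  have hκ0 : 0 ≤ κ := by positivity
  have hκ1 : κ < 1 := by
    have : (2*T*M*T)^n / n.factorial = κ := by rw [hκdef, mul_pow]
    rw [← this]
    exact hn
  have hdist : ∀ f g : C(Icc (-T) T, ℝ),
      dist ((volOp hq a b T hT)^[n] f) ((volOp hq a b T hT)^[n] g) ≤ κ * dist f g := by
    intro f g
    rw [ContinuousMap.dist_le (by positivity)]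
    intro t
    have := volOp_iterate_bound hq a b T hT hM hM0 hT0.le f g n t
    rw [Real.dist_eq]
    have hbt : |(t:ℝ)|^n ≤ T^n := by
      apply pow_le_pow_left₀ (abs_nonneg _) (abs_le.2 ⟨t.2.1, t.2.2⟩)
    calc |((volOp hq a b T hT)^[n] f) t - ((volOp hq a b T hT)^[n] g) t|
        ≤ dist f g * (2*T*M) ^ n * |(t:ℝ)| ^ n / n.factorial := this
      _ ≤ dist f g * (2*T*M) ^ n * T ^ n / n.factorial := by gcongr
      _ = κ * dist f g := by rw [hκdef]; ring
  haveI : Nonempty C(Icc (-T) T, ℝ) := ⟨0⟩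
  set Φn := (volOp hq a b T hT)^[n] with hΦn
  have hL : LipschitzWith κ.toNNReal Φn :=
    LipschitzWith.of_dist_le_mul (fun f g => by
      rw [Real.coe_toNNReal κ hκ0]; exact hdist f g)
  have hcon : ContractingWith κ.toNNReal Φn := ⟨by
    exact Real.toNNReal_lt_one.mpr hκ1, hL⟩
  refine ⟨hcon.fixedPoint Φn, ContractingWith.isFixedPt_fixedPoint_iterate hcon, ?_⟩
  intro y hy
  exact hcon.fixedPoint_unique ((Function.IsFixedPt.iterate hy n : Φn y = y))

section glob
variable (hq : Continuous q) (a b : ℝ)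

lemma levelT (n : ℕ) : (0:ℝ) < (n:ℝ) + 1 := by positivity

/-- The solution at level `n`, on `Icc (-(n+1)) (n+1)`. -/
noncomputable def sol (n : ℕ) : C(Icc (-((n:ℝ)+1)) ((n:ℝ)+1), ℝ) :=
  (volOp_exists_fixed hq a b ((n:ℝ)+1) (levelT n)).choose

lemma sol_fix (n : ℕ) :
    volOp hq a b ((n:ℝ)+1) (by have := levelT n; linarith) (sol hq a b n) = sol hq a b n :=
  (volOp_exists_fixed hq a b ((n:ℝ)+1) (levelT n)).choose_spec.1

lemma sol_unique (n : ℕ) (y : C(Icc (-((n:ℝ)+1)) ((n:ℝ)+1), ℝ))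
    (hy : volOp hq a b ((n:ℝ)+1) (by have := levelT n; linarith) y = y) : y = sol hq a b n :=
  (volOp_exists_fixed hq a b ((n:ℝ)+1) (levelT n)).choose_spec.2 y hy

lemma incl_mem {m n : ℕ} (hmn : m ≤ n) {r : ℝ} (hr : r ∈ Icc (-((m:ℝ)+1)) ((m:ℝ)+1)) :
    r ∈ Icc (-((n:ℝ)+1)) ((n:ℝ)+1) := by
  have : (m:ℝ) ≤ n := Nat.cast_le.2 hmn
  exact ⟨by linarith [hr.1], by linarith [hr.2]⟩

lemma sol_consistent {m n : ℕ} (hmn : m ≤ n) {r : ℝ}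
    (hr : r ∈ Icc (-((m:ℝ)+1)) ((m:ℝ)+1)) :
    sol hq a b n ⟨r, incl_mem hmn hr⟩ = sol hq a b m ⟨r, hr⟩ := by
  have hTm : -(((m:ℝ))+1) ≤ ((m:ℝ)+1) := by have := levelT m; linarith
  have hTn : -(((n:ℝ))+1) ≤ ((n:ℝ)+1) := by have := levelT n; linarith
  set y : C(Icc (-((m:ℝ)+1)) ((m:ℝ)+1), ℝ) :=
    ⟨fun t => sol hq a b n ⟨t.1, incl_mem hmn t.2⟩,
     (sol hq a b n).continuous.comp (by
        apply Continuous.subtype_mk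
        exact continuous_subtype_val)⟩ with hy
  have hyfix : volOp hq a b ((m:ℝ)+1) hTm y = y := by
    ext t
    rw [volOp_apply]
    have key : ∀ s ∈ uIcc (0:ℝ) t.1,
        (y (projIcc _ _ hTm s) : ℝ) = sol hq a b n (projIcc _ _ hTn s) := by
      intro s hs
      have hsm : s ∈ Icc (-((m:ℝ)+1)) ((m:ℝ)+1) := mem_Icc_of_uIcc t.2 hs
      rw [projIcc_of_mem hTm hsm, projIcc_of_mem hTn (incl_mem hmn hsm)]
      rfl
    have h1 : ∀ (hP : -((n:ℝ)+1) ≤ ((n:ℝ)+1)), (∫ s in (0:ℝ)..t.1, q s * y (projIcc _ _ hTm s))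
        = ∫ s in (0:ℝ)..t.1, q s * sol hq a b n (projIcc _ _ hP s) := by
      intro hP
      apply integral_congr
      intro s hs
      dsimp only
      rw [key s hs]
    have h2 : ∀ (hP : -((n:ℝ)+1) ≤ ((n:ℝ)+1)), (∫ s in (0:ℝ)..t.1, s * (q s * y (projIcc _ _ hTm s)))
        = ∫ s in (0:ℝ)..t.1, s * (q s * sol hq a b n (projIcc _ _ hP s)) := by
      intro hP
      apply integral_congr
      intro s hs
      dsimp only
      rw [key s hs]
    have hfixn := congrFun (congrArg DFunLike.coe (sol_fix hq a b n)) ⟨t.1, incl_mem hmn t.2⟩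
    rw [volOp_apply] at hfixn
    rw [h1 hTn, h2 hTn]
    exact hfixn
  have := sol_unique hq a b m y hyfix
  rw [← this]
  rfl

/-- The global solution of the Volterra equation. -/
noncomputable def gsol : ℝ → ℝ :=
  fun r => sol hq a b ⌊|r|⌋₊ ⟨r, by
    have := Nat.lt_floor_add_one |r|
    constructor <;> [linarith [abs_nonneg r, neg_abs_le r]; linarith [le_abs_self r]]⟩

lemma floor_mem (r : ℝ) : r ∈ Icc (-((⌊|r|⌋₊:ℝ)+1)) ((⌊|r|⌋₊:ℝ)+1) := by
  have := Nat.lt_floor_add_one |r|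
  constructor <;> [linarith [abs_nonneg r, neg_abs_le r]; linarith [le_abs_self r]]

lemma gsol_eq (n : ℕ) (r : ℝ) (hr : r ∈ Icc (-((n:ℝ)+1)) ((n:ℝ)+1)) :
    gsol hq a b r = sol hq a b n ⟨r, hr⟩ := by
  rcases le_total (⌊|r|⌋₊) n with h | h
  · rw [show gsol hq a b r = sol hq a b ⌊|r|⌋₊ ⟨r, floor_mem r⟩ from rfl,
      ← sol_consistent hq a b h (floor_mem r)]
  · rw [show gsol hq a b r = sol hq a b ⌊|r|⌋₊ ⟨r, floor_mem r⟩ from rfl,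
      ← sol_consistent hq a b h hr]

lemma gsol_continuous : Continuous (gsol hq a b) := by
  rw [continuous_iff_continuousAt]
  intro r
  set n := ⌊|r|⌋₊ with hn
  have hTn : -(((n:ℝ))+1) ≤ ((n:ℝ)+1) := by have := levelT n; linarith
  have hU : Ioo (-((n:ℝ)+1)) ((n:ℝ)+1) ∈ nhds r := by
    apply Ioo_mem_nhds
    · have := Nat.lt_floor_add_one |r|; linarith [abs_nonneg r, neg_abs_le r]
    · have := Nat.lt_floor_add_one |r|; linarith [le_abs_self r]
  have hEq : ∀ x ∈ Ioo (-((n:ℝ)+1)) ((n:ℝ)+1),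
      gsol hq a b x = sol hq a b n (projIcc _ _ hTn x) := by
    intro x hx
    have hx' : x ∈ Icc (-((n:ℝ)+1)) ((n:ℝ)+1) := Ioo_subset_Icc_self hx
    rw [gsol_eq hq a b n x hx', projIcc_of_mem hTn hx']
  have hg : Continuous fun x => (sol hq a b n (projIcc _ _ hTn x) : ℝ) :=
    (sol hq a b n).continuous.comp continuous_projIcc
  apply hg.continuousAt.congr
  filter_upwards [hU] with x hx
  exact (hEq x hx).symm

lemma gsol_eqn (t : ℝ) :
    gsol hq a b t = a + b * t + (t * ∫ s in (0:ℝ)..t, q s * gsol hq a b s)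
      - ∫ s in (0:ℝ)..t, s * (q s * gsol hq a b s) := by
  set n := ⌊|t|⌋₊ with hn
  have hTn : -(((n:ℝ))+1) ≤ ((n:ℝ)+1) := by have := levelT n; linarith
  have ht : t ∈ Icc (-((n:ℝ)+1)) ((n:ℝ)+1) := floor_mem t
  have h0 : gsol hq a b t = sol hq a b n ⟨t, ht⟩ := gsol_eq hq a b n t ht
  have := congrFun (congrArg DFunLike.coe (sol_fix hq a b n)) ⟨t, ht⟩
  rw [volOp_apply] at this
  have key : ∀ (hP : -((n:ℝ)+1) ≤ ((n:ℝ)+1)), ∀ s ∈ uIcc (0:ℝ) t,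
      q s * (sol hq a b n (projIcc _ _ hP s) : ℝ) = q s * gsol hq a b s := by
    intro hP s hs
    have hsm : s ∈ Icc (-((n:ℝ)+1)) ((n:ℝ)+1) := mem_Icc_of_uIcc ht hs
    rw [projIcc_of_mem hP hsm, ← gsol_eq hq a b n s hsm]
  have h1 : ∀ (hP : -((n:ℝ)+1) ≤ ((n:ℝ)+1)), (∫ s in (0:ℝ)..t, q s * sol hq a b n (projIcc _ _ hP s))
      = ∫ s in (0:ℝ)..t, q s * gsol hq a b s := by
    intro hP
    apply integral_congr
    intro s hs
    dsimp only
    rw [key hP s hs]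
  have h2 : ∀ (hP : -((n:ℝ)+1) ≤ ((n:ℝ)+1)), (∫ s in (0:ℝ)..t, s * (q s * sol hq a b n (projIcc _ _ hP s)))
      = ∫ s in (0:ℝ)..t, s * (q s * gsol hq a b s) := by
    intro hP
    apply integral_congr
    intro s hs
    dsimp only
    rw [key hP s hs]
  rw [h0, ← this, h1, h2]

end glob

/-- Global existence for the linear second-order ODE `h'' = q h`. -/
lemma exists_ode_solution {q : ℝ → ℝ} (hq : Continuous q) (a b : ℝ)
    (hyp : ∃ h : ℝ → ℝ, Continuous h ∧ ∀ t : ℝ, h t =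
      a + b * t + (t * ∫ s in (0:ℝ)..t, q s * h s) - ∫ s in (0:ℝ)..t, s * (q s * h s)) :
    ∃ h : ℝ → ℝ, ContDiff ℝ 2 h ∧ (∀ r, deriv (deriv h) r = q r * h r) ∧
      h 0 = a ∧ deriv h 0 = b := by
  obtain ⟨h, hcont, heqn⟩ := hyp
  have hqh : Continuous fun s => q s * h s := hq.mul hcont
  set P : ℝ → ℝ := fun r => ∫ s in (0:ℝ)..r, q s * h s with hPdef
  set Q : ℝ → ℝ := fun r => ∫ s in (0:ℝ)..r, s * (q s * h s) with hQdef
  have hPd : ∀ r, HasDerivAt P (q r * h r) r := primitive_hasDerivAt hqh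
  have hQd : ∀ r, HasDerivAt Q (r * (q r * h r)) r :=
    primitive_hasDerivAt (continuous_id.mul hqh)
  have hEq : h = fun r => a + b * r + r * P r - Q r := funext heqn
  have hd1 : ∀ r, HasDerivAt h (b + P r) r := by
    intro r
    have H : HasDerivAt (fun r => a + b * r + r * P r - Q r)
        (0 + b * 1 + (1 * P r + r * (q r * h r)) - r * (q r * h r)) r :=
      (((hasDerivAt_const r a).add (HasDerivAt.const_mul b (hasDerivAt_id r))).add
        ((hasDerivAt_id r).mul (hPd r))).sub (hQd r)
    have hv : 0 + b * 1 + (1 * P r + r * (q r * h r)) - r * (q r * h r) = b + P r := by ring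
    rw [hv] at H
    rw [hEq]
    exact H
  have hderiv : deriv h = fun r => b + P r := funext fun r => (hd1 r).deriv
  have hd2 : ∀ r, HasDerivAt (deriv h) (q r * h r) r := by
    intro r
    have H : HasDerivAt (fun r => b + P r) (0 + q r * h r) r :=
      (hasDerivAt_const r b).add (hPd r)
    rw [zero_add] at H
    rw [hderiv]
    exact H
  have hdd : ∀ r, deriv (deriv h) r = q r * h r := fun r => (hd2 r).deriv
  have hcdd : Continuous (deriv (deriv h)) := by
    have : deriv (deriv h) = fun r => q r * h r := funext hdd
    rw [this]
    exact hqh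
  have hC1 : ContDiff ℝ 1 (deriv h) :=
    contDiff_one_iff_deriv.2 ⟨fun r => (hd2 r).differentiableAt, hcdd⟩
  have hC2 : ContDiff ℝ 2 h := by
    rw [show (2 : WithTop ℕ∞) = 1 + 1 from rfl, contDiff_succ_iff_deriv]
    exact ⟨fun r => (hd1 r).differentiableAt, by simp, hC1⟩
  refine ⟨h, hC2, hdd, ?_, ?_⟩
  · rw [heqn 0]
    simp [hPdef, hQdef]
  · rw [hderiv]
    simp [hPdef]

/-- Persistence: a solution of `h'' = q h`, `q ≥ 0`, that is positive with nonpositive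
slope at `r₀` stays above `h r₀` (with nonpositive slope) for all `r ≤ r₀`. -/
lemma persist {q h : ℝ → ℝ} (hq0 : ∀ r, 0 ≤ q r) (hh : ContDiff ℝ 2 h)
    (hode : ∀ r, deriv (deriv h) r = q r * h r) {r₀ : ℝ}
    (hpos : 0 < h r₀) (hder : deriv h r₀ ≤ 0) :
    ∀ r ≤ r₀, h r₀ ≤ h r ∧ deriv h r ≤ 0 := by
  have hC1 : ContDiff ℝ 1 (deriv h) := by
    rw [show (2 : WithTop ℕ∞) = 1 + 1 from rfl, contDiff_succ_iff_deriv] at hh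
    exact hh.2.2
  have hdercont : Continuous (deriv h) := hC1.continuous
  have hcont : Continuous h := hh.continuous
  have hdiff : Differentiable ℝ h := hh.differentiable (by norm_num)
  have hderdiff : Differentiable ℝ (deriv h) := (contDiff_one_iff_deriv.1 hC1).1
  intro r₁ hr₁
  rcases eq_or_lt_of_le hr₁ with hr | hr₁'
  · rw [hr]; exact ⟨le_refl _, hder⟩
  set S := {r : ℝ | r ∈ Icc r₁ r₀ ∧ ∀ s ∈ Icc r r₀, h r₀ ≤ h s ∧ deriv h s ≤ 0} with hS
  have hr₀S : r₀ ∈ S := ⟨⟨hr₁, le_refl _⟩, fun s hs => by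
    have : s = r₀ := le_antisymm hs.2 hs.1
    rw [this]; exact ⟨le_refl _, hder⟩⟩
  have hbdd : BddBelow S := ⟨r₁, fun r hr => hr.1.1⟩
  have hne : S.Nonempty := ⟨r₀, hr₀S⟩
  set ρ := sInf S with hρ
  have hρ₁ : r₁ ≤ ρ := le_csInf hne (fun r hr => hr.1.1)
  have hρ₀ : ρ ≤ r₀ := csInf_le hbdd hr₀S
  have hprop_gt : ∀ s, ρ < s → s ≤ r₀ → h r₀ ≤ h s ∧ deriv h s ≤ 0 := by
    intro s hρs hs0
    obtain ⟨r, hrS, hrs⟩ := exists_lt_of_csInf_lt hne hρs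
    exact hrS.2 s ⟨hrs.le, hs0⟩
  have hρS : ∀ s ∈ Icc ρ r₀, h r₀ ≤ h s ∧ deriv h s ≤ 0 := by
    intro s hs
    rcases eq_or_lt_of_le hs.1 with he | hlt
    · have goalρ : h r₀ ≤ h ρ ∧ deriv h ρ ≤ 0 := by
        rcases eq_or_lt_of_le hρ₀ with he0 | hlt0
        · rw [he0]; exact ⟨le_refl _, hder⟩
        · haveI : (nhdsWithin ρ (Ioi ρ)).NeBot := nhdsGT_neBot ρ
          constructor
          · apply ge_of_tendsto (x := nhdsWithin ρ (Ioi ρ))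
              ((hcont.tendsto ρ).mono_left nhdsWithin_le_nhds)
            filter_upwards [Ioo_mem_nhdsGT_of_mem
              (⟨le_refl ρ, hlt0⟩ : ρ ∈ Ico ρ r₀)] with x hx
            exact (hprop_gt x hx.1 hx.2.le).1
          · apply le_of_tendsto (x := nhdsWithin ρ (Ioi ρ))
              ((hdercont.tendsto ρ).mono_left nhdsWithin_le_nhds)
            filter_upwards [Ioo_mem_nhdsGT_of_mem
              (⟨le_refl ρ, hlt0⟩ : ρ ∈ Ico ρ r₀)] with x hx
            exact (hprop_gt x hx.1 hx.2.le).2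
      rw [← he]
      exact goalρ
    · exact hprop_gt s hlt hs.2
  rcases eq_or_lt_of_le hρ₁ with he | hl
  · exact hρS r₁ ⟨he.symm.le, hr₁⟩
  · exfalso
    have hρmem := hρS ρ ⟨le_refl _, hρ₀⟩
    have hhρ : 0 < h ρ := lt_of_lt_of_le hpos hρmem.1
    have hdρ : deriv h ρ ≤ 0 := hρmem.2
    have hev : ∀ᶠ x in nhds ρ, 0 < h x :=
      (hcont.tendsto ρ).eventually (eventually_gt_nhds hhρ)
    obtain ⟨δ, hδ0, hball⟩ := Metric.eventually_nhds_iff.1 hev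
    set c := max r₁ (ρ - δ/2) with hc
    have hcρ : c < ρ := max_lt hl (by linarith)
    have hcIcc : ∀ s ∈ Icc c ρ, 0 < h s := by
      intro s hs
      apply hball
      rw [Real.dist_eq, abs_lt]
      have h1 : ρ - δ/2 ≤ c := le_max_right _ _
      constructor <;> [linarith [hs.1]; linarith [hs.2]]
    have hmono : MonotoneOn (deriv h) (Icc c ρ) := by
      apply monotoneOn_of_deriv_nonneg (convex_Icc c ρ) hdercont.continuousOn
        hderdiff.differentiableOn
      intro x hx
      rw [interior_Icc] at hx
      rw [hode x]
      exact mul_nonneg (hq0 x) (hcIcc x ⟨hx.1.le, hx.2.le⟩).le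
    have hρIcc : ρ ∈ Icc c ρ := right_mem_Icc.2 hcρ.le
    have hder_le : ∀ s ∈ Icc c ρ, deriv h s ≤ 0 :=
      fun s hs => le_trans (hmono hs hρIcc hs.2) hdρ
    have hanti : AntitoneOn h (Icc c ρ) := by
      apply antitoneOn_of_deriv_nonpos (convex_Icc c ρ) hcont.continuousOn
        hdiff.differentiableOn
      intro x hx
      rw [interior_Icc] at hx
      exact hder_le x ⟨hx.1.le, hx.2.le⟩
    have hcS : c ∈ S := by
      refine ⟨⟨le_max_left _ _, le_trans hcρ.le hρ₀⟩, ?_⟩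
      intro s hs
      rcases le_total s ρ with h1 | h1
      · have hs' : s ∈ Icc c ρ := ⟨hs.1, h1⟩
        exact ⟨le_trans hρmem.1 (hanti hs' hρIcc h1), hder_le s hs'⟩
      · exact hρS s ⟨h1, hs.2⟩
    have : ρ ≤ c := csInf_le hbdd hcS
    linarith

lemma C2.deriv_contDiff {f : ℝ → ℝ} (hf : ContDiff ℝ 2 f) : ContDiff ℝ 1 (deriv f) := by
  rw [show (2 : WithTop ℕ∞) = 1 + 1 from rfl, contDiff_succ_iff_deriv] at hf
  exact hf.2.2

lemma C2.hasDeriv1 {f : ℝ → ℝ} (hf : ContDiff ℝ 2 f) (r : ℝ) : HasDerivAt f (deriv f r) r :=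
  ((hf.differentiable (by norm_num)) r).hasDerivAt

lemma C2.hasDeriv2 {f : ℝ → ℝ} (hf : ContDiff ℝ 2 f) (r : ℝ) :
    HasDerivAt (deriv f) (deriv (deriv f) r) r :=
  (((C2.deriv_contDiff hf).differentiable (by norm_num)) r).hasDerivAt

lemma C2.deriv_continuous {f : ℝ → ℝ} (hf : ContDiff ℝ 2 f) : Continuous (deriv f) :=
  (C2.deriv_contDiff hf).continuous

/-- Uniqueness: a solution vanishing to first order at a point vanishes to the right. -/
lemma vanish {q h : ℝ → ℝ} (hq : Continuous q) (hh : ContDiff ℝ 2 h)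
    (hode : ∀ r, deriv (deriv h) r = q r * h r) {r₂ t : ℝ} (hrt : r₂ ≤ t)
    (h0 : h r₂ = 0) (h0' : deriv h r₂ = 0) : h t = 0 := by
  obtain ⟨M₀, hM₀⟩ := (isCompact_Icc : IsCompact (Icc r₂ t)).exists_bound_of_continuousOn
    hq.continuousOn
  set K := max 1 M₀ with hK
  set f : ℝ → ℝ × ℝ := fun s => (h s, deriv h s) with hf
  have hfd : ∀ s, HasDerivAt f (deriv h s, q s * h s) s := by
    intro s
    have h1 : HasDerivAt h (deriv h s) s := C2.hasDeriv1 hh s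
    have h2 : HasDerivAt (deriv h) (q s * h s) s := by
      have := C2.hasDeriv2 hh s
      rwa [hode s] at this
    exact h1.prodMk h2
  have hcont : ContinuousOn f (Icc r₂ t) :=
    ((hh.continuous.prodMk (C2.deriv_continuous hh))).continuousOn
  have key := norm_le_gronwallBound_of_norm_deriv_right_le (f := f)
    (f' := fun s => (deriv h s, q s * h s)) (δ := 0) (K := K) (ε := 0) (a := r₂) (b := t)
    hcont (fun x _ => (hfd x).hasDerivWithinAt) (by
      rw [hf]
      simp only [Prod.norm_def, h0, h0', norm_zero]
      simp) (by
      intro x hx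
      rw [Prod.norm_def, Prod.norm_def]
      simp only [add_zero]
      apply max_le
      · calc ‖deriv h x‖ ≤ max ‖h x‖ ‖deriv h x‖ := le_max_right _ _
          _ ≤ K * max ‖h x‖ ‖deriv h x‖ := by
              nlinarith [le_max_left (1:ℝ) M₀, le_max_left ‖h x‖ ‖deriv h x‖,
                norm_nonneg (h x), norm_nonneg (deriv h x)]
      · calc ‖q x * h x‖ = ‖q x‖ * ‖h x‖ := norm_mul _ _
          _ ≤ K * ‖h x‖ := by
              apply mul_le_mul_of_nonneg_right _ (norm_nonneg _)
              exact le_trans (hM₀ x ⟨hx.1, hx.2.le⟩) (le_max_right _ _)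
          _ ≤ K * max ‖h x‖ ‖deriv h x‖ := by
              apply mul_le_mul_of_nonneg_left (le_max_left _ _)
              nlinarith [le_max_left (1:ℝ) M₀]
      )
  have := key t ⟨hrt, le_refl _⟩
  rw [gronwallBound_ε0_δ0] at this
  have h1 : ‖h t‖ ≤ ‖f t‖ := by rw [hf, Prod.norm_def]; exact le_max_left _ _
  have : ‖h t‖ ≤ 0 := le_trans h1 this
  simpa using le_antisymm this (norm_nonneg _)

/-- The Wronskian of two solutions is constant. -/
lemma wronskian_const {q f g : ℝ → ℝ} (hf : ContDiff ℝ 2 f) (hg : ContDiff ℝ 2 g)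
    (hodef : ∀ r, deriv (deriv f) r = q r * f r) (hodeg : ∀ r, deriv (deriv g) r = q r * g r)
    (r : ℝ) :
    f r * deriv g r - deriv f r * g r = f 0 * deriv g 0 - deriv f 0 * g 0 := by
  set W : ℝ → ℝ := fun r => f r * deriv g r - deriv f r * g r with hW
  have hWd : ∀ r, HasDerivAt W 0 r := by
    intro r
    have h1 : HasDerivAt (fun r => f r * deriv g r)
        (deriv f r * deriv g r + f r * (q r * g r)) r := by
      have := (C2.hasDeriv1 hf r).mul (C2.hasDeriv2 hg r)
      rwa [hodeg r] at this
    have h2 : HasDerivAt (fun r => deriv f r * g r)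
        ((q r * f r) * g r + deriv f r * deriv g r) r := by
      have := (C2.hasDeriv2 hf r).mul (C2.hasDeriv1 hg r)
      rwa [hodef r] at this
    have h3 := h1.sub h2
    have : deriv f r * deriv g r + f r * (q r * g r) - ((q r * f r) * g r + deriv f r * deriv g r)
        = 0 := by ring
    rwa [this] at h3
  exact is_const_of_deriv_eq_zero (fun r => (hWd r).differentiableAt)
    (fun r => (hWd r).deriv) r 0

/-- Linear combinations of solutions are solutions. -/
lemma combo {q f g : ℝ → ℝ} (hf : ContDiff ℝ 2 f) (hg : ContDiff ℝ 2 g)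
    (hodef : ∀ r, deriv (deriv f) r = q r * f r) (hodeg : ∀ r, deriv (deriv g) r = q r * g r)
    (c : ℝ) :
    ContDiff ℝ 2 (fun r => f r + c * g r) ∧
    (∀ r, deriv (fun r => f r + c * g r) r = deriv f r + c * deriv g r) ∧
    (∀ r, deriv (deriv (fun r => f r + c * g r)) r = q r * (f r + c * g r)) := by
  set h : ℝ → ℝ := fun r => f r + c * g r with hh
  have hd1 : ∀ r, HasDerivAt h (deriv f r + c * deriv g r) r :=
    fun r => (C2.hasDeriv1 hf r).add ((C2.hasDeriv1 hg r).const_mul c)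
  have hderiv : deriv h = fun r => deriv f r + c * deriv g r := funext fun r => (hd1 r).deriv
  have hd2 : ∀ r, HasDerivAt (deriv h) (q r * h r) r := by
    intro r
    rw [hderiv]
    have H := (C2.hasDeriv2 hf r).add ((C2.hasDeriv2 hg r).const_mul c)
    rw [hodef r, hodeg r] at H
    have : q r * f r + c * (q r * g r) = q r * h r := by rw [hh]; ring
    rwa [this] at H
  refine ⟨hf.add (contDiff_const.mul hg), fun r => (hd1 r).deriv, fun r => (hd2 r).deriv⟩

/-- Global existence with initial data for `h'' = q h`. -/
lemma exists_sol {q : ℝ → ℝ} (hq : Continuous q) (a b : ℝ) :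
    ∃ h : ℝ → ℝ, ContDiff ℝ 2 h ∧ (∀ r, deriv (deriv h) r = q r * h r) ∧
      h 0 = a ∧ deriv h 0 = b :=
  exists_ode_solution hq a b ⟨gsol hq a b, gsol_continuous hq a b, gsol_eqn hq a b⟩

/-- Existence half of Proposition 4.1 (scalar Jacobi equation): for continuous
`K ≤ 0` there is a `C²` solution of `h'' + K h = 0` with `h 0 = 1`,
`0 ≤ h ≤ 1` on `(-∞, 0]`, and `h' 0 ≥ 0`. -/
theorem stmt_0 (K : ℝ → ℝ) (hKcont : Continuous K) (hKnonpos : ∀ r : ℝ, K r ≤ 0) :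
    ∃ h : ℝ → ℝ, ContDiff ℝ 2 h ∧
      (∀ r : ℝ, deriv (deriv h) r + K r * h r = 0) ∧
      h 0 = 1 ∧
      (∀ r : ℝ, r ≤ 0 → 0 ≤ h r ∧ h r ≤ 1) ∧
      0 ≤ deriv h 0 := by
  set q : ℝ → ℝ := fun r => -K r with hqdef
  have hq : Continuous q := hKcont.neg
  have hq0 : ∀ r, 0 ≤ q r := fun r => by simp [hqdef]; exact hKnonpos r
  obtain ⟨f₀, hf₀C2, hf₀ode, hf₀0, hf₀0'⟩ := exists_sol hq 1 0
  obtain ⟨g, hgC2, hgode, hg0, hg0'⟩ := exists_sol hq 0 1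
  -- f₀ ≥ 1 on (-∞, 0]
  have hf₀big : ∀ r ≤ (0:ℝ), 1 ≤ f₀ r ∧ deriv f₀ r ≤ 0 := by
    have := persist hq0 hf₀C2 hf₀ode (r₀ := 0) (by rw [hf₀0]; norm_num) (by rw [hf₀0'])
    intro r hr
    have h := this r hr
    rw [hf₀0] at h
    exact h
  have hf₀pos : ∀ r ≤ (0:ℝ), 0 < f₀ r := fun r hr => lt_of_lt_of_le one_pos (hf₀big r hr).1
  -- Wronskian ≡ 1
  have hW : ∀ r, f₀ r * deriv g r - deriv f₀ r * g r = 1 := by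
    intro r
    rw [wronskian_const hf₀C2 hgC2 hf₀ode hgode r, hf₀0, hg0, hf₀0', hg0']
    ring
  -- g < 0 on (-∞, 0)
  have hgneg : ∀ r < (0:ℝ), g r < 0 := by
    have hmono : StrictMonoOn (fun r => g r / f₀ r) (Iic 0) := by
      apply strictMonoOn_of_deriv_pos (convex_Iic 0)
      · exact (hgC2.continuous.continuousOn).div hf₀C2.continuous.continuousOn
          (fun x hx => ne_of_gt (hf₀pos x hx))
      · intro x hx
        rw [interior_Iic] at hx
        have hd : HasDerivAt (fun r => g r / f₀ r)
            ((deriv g x * f₀ x - g x * deriv f₀ x) / (f₀ x) ^ 2) x :=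
          (C2.hasDeriv1 hgC2 x).div (C2.hasDeriv1 hf₀C2 x) (ne_of_gt (hf₀pos x hx.le))
        rw [hd.deriv]
        have hnum : deriv g x * f₀ x - g x * deriv f₀ x = 1 := by
          have := hW x; nlinarith [hW x]
        rw [hnum]
        exact div_pos one_pos (pow_pos (hf₀pos x hx.le) 2)
    intro r hr
    have := hmono (mem_Iic.2 hr.le) (mem_Iic.2 (le_refl 0)) hr
    simp only [hg0, zero_div] at this
    have hpos := hf₀pos r hr.le
    by_contra hcon
    push_neg at hcon
    have : 0 ≤ g r / f₀ r := div_nonneg hcon hpos.le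
    linarith
  -- the critical slope
  set Φs : Set ℝ := (fun r => f₀ r / (- g r)) '' Iio 0 with hΦs
  have hΦne : Φs.Nonempty := ⟨_, ⟨(-1:ℝ), by norm_num, rfl⟩⟩
  have hΦbdd : BddBelow Φs := by
    refine ⟨0, ?_⟩
    rintro x ⟨r, hr, rfl⟩
    have h1 := hf₀pos r (le_of_lt hr)
    have h2 := hgneg r hr
    exact (div_pos h1 (by linarith)).le
  set c : ℝ := sInf Φs with hc
  have hc0 : 0 ≤ c := le_csInf hΦne (fun x hx => by
    obtain ⟨r, hr, rfl⟩ := hx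
    have h1 := hf₀pos r (le_of_lt hr)
    have h2 := hgneg r hr
    exact (div_pos h1 (by linarith)).le)
  have hcle : ∀ r < (0:ℝ), c ≤ f₀ r / (- g r) :=
    fun r hr => csInf_le hΦbdd ⟨r, hr, rfl⟩
  -- the principal solution
  obtain ⟨hhC2, hhd, hhdd⟩ := combo hf₀C2 hgC2 hf₀ode hgode c
  set h : ℝ → ℝ := fun r => f₀ r + c * g r with hhdef
  have hh0 : h 0 = 1 := by rw [hhdef]; simp [hf₀0, hg0]
  have hh0' : deriv h 0 = c := by rw [hhd 0, hf₀0', hg0']; ring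
  have hhpos : ∀ r ≤ (0:ℝ), 0 ≤ h r := by
    intro r hr
    rcases eq_or_lt_of_le hr with he | hlt
    · rw [he] at *; rw [hh0]; norm_num
    · have h2 := hgneg r hlt
      have hle := hcle r hlt
      rw [le_div_iff₀ (by linarith : 0 < -g r)] at hle
      rw [hhdef]
      dsimp only
      nlinarith
  -- strict positivity on (-∞, 0)
  have hhpos' : ∀ r < (0:ℝ), 0 < h r := by
    intro s hs0
    rcases lt_or_eq_of_le (hhpos s hs0.le) with hlt | heq
    · exact hlt
    · exfalso
      have hmin : IsLocalMin h s := by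
        apply Filter.eventually_of_mem (Iio_mem_nhds hs0)
        intro x hx
        rw [← heq]
        exact hhpos x (le_of_lt hx)
      have hds : deriv h s = 0 := hmin.deriv_eq_zero
      have := vanish hq hhC2 hhdd hs0.le heq.symm hds
      rw [hh0] at this
      norm_num at this
  -- nonnegative derivative on (-∞, 0]
  have hhder : ∀ r ≤ (0:ℝ), 0 ≤ deriv h r := by
    by_contra hcon
    push_neg at hcon
    obtain ⟨r₀, hr₀le, hr₀der⟩ := hcon
    have hr₀ : r₀ < 0 := by
      rcases eq_or_lt_of_le hr₀le with he | hlt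
      · exfalso; rw [he, hh0'] at hr₀der; linarith
      · exact hlt
    -- minimum of h on [r₀, 0]
    have hIcc_ne : (Icc r₀ (0:ℝ)).Nonempty := ⟨r₀, le_refl _, hr₀le⟩
    obtain ⟨smin, hsmin_mem, hsmin⟩ := isCompact_Icc.exists_isMinOn hIcc_ne
      hhC2.continuous.continuousOn
    set m : ℝ := h smin with hm
    have hm0 : 0 < m := by
      rcases lt_or_eq_of_le hsmin_mem.2 with hlt | he
      · exact hhpos' smin hlt
      · rw [hm, he, hh0]; norm_num
    obtain ⟨G, hG⟩ := (isCompact_Icc : IsCompact (Icc r₀ (0:ℝ))).exists_bound_of_continuousOn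
      hgC2.continuous.continuousOn
    have hG0 : 0 ≤ G := le_trans (norm_nonneg (g r₀)) (hG r₀ ⟨le_refl _, hr₀le⟩)
    set ε : ℝ := min (m / (2*(G+1))) ((- deriv h r₀) / (2*(|deriv g r₀|+1))) with hε
    have hε0 : 0 < ε := by
      apply lt_min
      · exact div_pos hm0 (by linarith)
      · exact div_pos (by linarith) (by positivity)
    -- the perturbed solution
    obtain ⟨hfcC2, hfcd, hfcdd⟩ := combo hf₀C2 hgC2 hf₀ode hgode (c + ε)
    set fc : ℝ → ℝ := fun r => f₀ r + (c + ε) * g r with hfc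
    have hfc_eq : ∀ r, fc r = h r + ε * g r := by
      intro r; rw [hfc, hhdef]; dsimp only; ring
    have hεG : ε * G < m := by
      have h1 : ε ≤ m / (2*(G+1)) := min_le_left _ _
      have h2 : ε * G ≤ m / (2*(G+1)) * G := mul_le_mul_of_nonneg_right h1 hG0
      have h3 : m / (2*(G+1)) * G < m := by
        rw [div_mul_eq_mul_div, div_lt_iff₀ (by linarith)]
        nlinarith
      exact lt_of_le_of_lt h2 h3
    have hfc_r₀ : 0 < fc r₀ := by
      rw [hfc_eq r₀]
      have h1 : m ≤ h r₀ := hsmin ⟨le_refl _, hr₀le⟩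
      have h2 : |g r₀| ≤ G := by
        have := hG r₀ ⟨le_refl _, hr₀le⟩; rwa [Real.norm_eq_abs] at this
      have h3 : ε * g r₀ ≥ -(ε * G) := by nlinarith [abs_le.1 h2]
      linarith
    have hfc_der : deriv fc r₀ ≤ 0 := by
      rw [hfcd r₀]
      have hhd_r₀ : deriv h r₀ = deriv f₀ r₀ + c * deriv g r₀ := hhd r₀
      have h1 : ε ≤ (- deriv h r₀) / (2*(|deriv g r₀|+1)) := min_le_right _ _
      have h2 : ε * |deriv g r₀| ≤ (- deriv h r₀) / (2*(|deriv g r₀|+1)) * (|deriv g r₀|+1) := by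
        apply mul_le_mul h1 (by linarith [abs_nonneg (deriv g r₀)]) (abs_nonneg _) (le_of_lt (div_pos (by linarith) (by positivity)))
      have h3 : (- deriv h r₀) / (2*(|deriv g r₀|+1)) * (|deriv g r₀|+1) = (- deriv h r₀)/2 := by
        field_simp
      have h4 : ε * deriv g r₀ ≤ ε * |deriv g r₀| :=
        mul_le_mul_of_nonneg_left (le_abs_self _) hε0.le
      nlinarith
    have hpersist := persist hq0 hfcC2 hfcdd hfc_r₀ hfc_der
    -- fc > 0 everywhere on (-∞, 0)
    have hfc_pos : ∀ r < (0:ℝ), 0 < fc r := by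
      intro r hrneg
      rcases le_total r r₀ with hle | hge
      · exact lt_of_lt_of_le hfc_r₀ (hpersist r hle).1
      · rw [hfc_eq r]
        have h1 : m ≤ h r := hsmin ⟨hge, hrneg.le⟩
        have h2 : |g r| ≤ G := by
          have := hG r ⟨hge, hrneg.le⟩; rwa [Real.norm_eq_abs] at this
        have h3 : ε * g r ≥ -(ε * G) := by nlinarith [abs_le.1 h2]
        linarith
    -- contradiction with minimality of c
    have : c + ε ≤ c := by
      apply le_csInf hΦne
      rintro x ⟨r, hrneg, rfl⟩
      have hfcr := hfc_pos r hrneg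
      have hgr := hgneg r hrneg
      rw [le_div_iff₀ (by linarith : 0 < -g r)]
      rw [hfc] at hfcr
      dsimp only at hfcr
      nlinarith
    linarith
  -- h is monotone on (-∞, 0], hence ≤ 1 there
  have hmono : MonotoneOn h (Iic 0) := by
    apply monotoneOn_of_deriv_nonneg (convex_Iic 0) hhC2.continuous.continuousOn
      ((hhC2.differentiable (by norm_num)).differentiableOn)
    intro x hx
    rw [interior_Iic] at hx
    exact hhder x hx.le
  refine ⟨h, hhC2, ?_, hh0, ?_, ?_⟩
  · intro r
    rw [hhdd r, hqdef]
    ring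
  · intro r hr
    refine ⟨hhpos r hr, ?_⟩
    have := hmono (mem_Iic.2 hr) (mem_Iic.2 (le_refl 0)) hr
    rwa [hh0] at this
  · rw [hh0']
    exact hc0
end

section
/- Let K : ℝ → ℝ be a continuous function with K(r) ≤ 0 for all r. Suppose h₁, h₂ : ℝ → ℝ are twice continuously differentiable, satisfy hᵢ''(r) + K(r)·hᵢ(r) = 0 for all r ∈ ℝ and hᵢ(0) = 1 (i = 1,2), and each is bounded on (-∞, 0] (i.e., there is a constant C with |hᵢ(r)| ≤ C for all r ≤ 0). Then h₁ = h₂ on all of ℝ; in particular h₁'(0) = h₂'(0). -/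
open Set

/-- Core lemma: a `C²` solution of `g'' = -K g` with `K ≤ 0`, `g 0 = 0`,
bounded on `(-∞,0]`, vanishes identically. -/
theorem zero_of_bdd (K : ℝ → ℝ) (hKcont : Continuous K) (hKnonpos : ∀ r : ℝ, K r ≤ 0)
    (g : ℝ → ℝ) (gC2 : ContDiff ℝ 2 g)
    (gode : ∀ r : ℝ, deriv (deriv g) r = -(K r) * g r)
    (g0 : g 0 = 0)
    (gbdd : ∃ C : ℝ, ∀ r : ℝ, r ≤ 0 → |g r| ≤ C) :
    ∀ r : ℝ, g r = 0 := by
  obtain ⟨C, hC⟩ := gbdd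
  have hC0 : 0 ≤ C := le_trans (abs_nonneg _) (hC 0 le_rfl)
  have gdiff : Differentiable ℝ g := gC2.differentiable (by norm_num)
  have hsucc : ContDiff ℝ (1 + 1) g := by exact_mod_cast gC2
  have g'C1 : ContDiff ℝ 1 (deriv g) := (contDiff_succ_iff_deriv.mp hsucc).2.2
  have g'diff : Differentiable ℝ (deriv g) := g'C1.differentiable one_ne_zero
  have g'cont : Continuous (deriv g) := g'diff.continuous
  have g''cont : Continuous (deriv (deriv g)) := by
    have : Continuous fun r => -(K r) * g r := (hKcont.neg).mul gdiff.continuous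
    exact (funext gode ▸ this)
  -- φ = g * g' is monotone
  set φ : ℝ → ℝ := fun r => g r * deriv g r with hφ
  have φdiff : Differentiable ℝ φ := gdiff.mul g'diff
  have φderiv : ∀ r, deriv φ r = (deriv g r) ^ 2 + -(K r) * (g r) ^ 2 := by
    intro r
    have := deriv_fun_mul (gdiff r) (g'diff r)
    rw [hφ, this, gode r]; ring
  have φmono : Monotone φ := by
    apply monotone_of_deriv_nonneg φdiff
    intro x
    rw [φderiv x]
    have h1 : 0 ≤ -(K x) := by linarith [hKnonpos x]
    nlinarith [sq_nonneg (deriv g x), sq_nonneg (g x)]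
  -- φ ≥ 0 on Iic 0
  have φnonneg : ∀ r : ℝ, r ≤ 0 → 0 ≤ φ r := by
    intro r₀ hr₀
    by_contra hneg
    push_neg at hneg
    -- consider ψ r = g r ^ 2 - 2 * φ r₀ * r, antitone on Iic r₀
    set ψ : ℝ → ℝ := fun r => g r ^ 2 - 2 * φ r₀ * r with hψ
    have ψdiff : Differentiable ℝ ψ := by
      apply Differentiable.sub
      · exact gdiff.pow 2
      · exact (differentiable_const _).mul differentiable_id
    have ψderiv : ∀ r, deriv ψ r = 2 * φ r - 2 * φ r₀ := by
      intro r
      rw [hψ]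
      have h1 : deriv (fun r => g r ^ 2 - 2 * φ r₀ * r) r
          = deriv (fun r => g r ^ 2) r - deriv (fun r => 2 * φ r₀ * r) r :=
        deriv_sub ((gdiff r).pow 2) (((differentiable_const _).mul differentiable_id) r)
      rw [h1, deriv_fun_pow (gdiff r) 2]
      have h2 : deriv (fun r : ℝ => 2 * φ r₀ * r) r = 2 * φ r₀ := by
        simp [deriv_const_mul, mul_comm]
      rw [h2, hφ]; ring
    have ψanti : AntitoneOn ψ (Iic r₀) := by
      apply antitoneOn_of_deriv_nonpos (convex_Iic r₀) ψdiff.continuous.continuousOn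
        (ψdiff.differentiableOn)
      intro x hx
      rw [interior_Iic] at hx
      rw [ψderiv x]
      have : φ x ≤ φ r₀ := φmono (le_of_lt hx)
      linarith
    -- pick a very negative r
    set r : ℝ := r₀ + (C ^ 2 + 1) / (2 * φ r₀) with hr
    have hden : 2 * φ r₀ < 0 := by linarith
    have hrlt : r ≤ r₀ := by
      rw [hr]
      have : (C ^ 2 + 1) / (2 * φ r₀) ≤ 0 :=
        div_nonpos_of_nonneg_of_nonpos (by positivity) (le_of_lt hden)
      linarith
    have key : ψ r₀ ≤ ψ r := ψanti hrlt (le_refl r₀ : r₀ ∈ Iic r₀) hrlt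
    have hprod : 2 * φ r₀ * (r - r₀) = C ^ 2 + 1 := by
      rw [hr, add_sub_cancel_left]
      rw [mul_comm]
      exact div_mul_cancel₀ _ (ne_of_lt hden)
    have hgr2 : C ^ 2 + 1 ≤ g r ^ 2 := by
      have : g r₀ ^ 2 - 2 * φ r₀ * r₀ ≤ g r ^ 2 - 2 * φ r₀ * r := key
      nlinarith [sq_nonneg (g r₀)]
    have hb : |g r| ≤ C := hC r (le_trans hrlt hr₀)
    have : g r ^ 2 ≤ C ^ 2 := by
      rw [← sq_abs]
      exact pow_le_pow_left₀ (abs_nonneg _) hb 2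
    linarith
  -- g² monotone on Iic 0, hence g = 0 on Iic 0
  have gzero_neg : ∀ r : ℝ, r ≤ 0 → g r = 0 := by
    have gsqmono : MonotoneOn (fun r => g r ^ 2) (Iic 0) := by
      apply monotoneOn_of_deriv_nonneg (convex_Iic 0)
        ((gdiff.pow 2).continuous.continuousOn) ((gdiff.pow 2).differentiableOn)
      intro x hx
      rw [interior_Iic] at hx
      have hd := deriv_pow (gdiff x) 2
      norm_num at hd
      rw [hd]
      have h2 : 0 ≤ g x * deriv g x := φnonneg x (le_of_lt hx)
      linarith
    intro r hr
    have : g r ^ 2 ≤ g 0 ^ 2 := gsqmono (mem_Iic.mpr hr) self_mem_Iic hr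
    rw [g0] at this
    nlinarith [sq_nonneg (g r)]
  -- deriv g 0 = 0
  have g'0 : deriv g 0 = 0 := by
    have h1 : HasDerivWithinAt g (deriv g 0) (Iic 0) 0 :=
      (gdiff 0).hasDerivAt.hasDerivWithinAt
    have h2 : HasDerivWithinAt g 0 (Iic 0) 0 := by
      have hc : HasDerivWithinAt (fun _ : ℝ => (0:ℝ)) 0 (Iic 0) 0 :=
        (hasDerivWithinAt_const _ _ _)
      exact hc.congr (fun x hx => gzero_neg x hx) g0
    exact (uniqueDiffOn_Iic 0 0 (self_mem_Iic)).eq_deriv _ h1 h2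
  -- forward: Gronwall
  intro t
  rcases le_or_gt t 0 with ht | ht
  · exact gzero_neg t ht
  · -- bound K on [0, t]
    obtain ⟨M, hM⟩ := (isCompact_Icc (a := (0:ℝ)) (b := t)).exists_bound_of_continuousOn
      hKcont.continuousOn
    set L : ℝ := max M 1 with hL
    have hL1 : 1 ≤ L := le_max_right _ _
    set f : ℝ → ℝ × ℝ := fun s => (g s, deriv g s) with hf
    have fcont : ContinuousOn f (Icc 0 t) :=
      (gdiff.continuous.prodMk g'cont).continuousOn
    have fderiv : ∀ x ∈ Ico (0:ℝ) t,
        HasDerivWithinAt f (deriv g x, -(K x) * g x) (Ici x) x := by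
      intro x _
      have h1 : HasDerivAt g (deriv g x) x := (gdiff x).hasDerivAt
      have h2 : HasDerivAt (deriv g) (-(K x) * g x) x := by
        have := (g'diff x).hasDerivAt
        rwa [gode x] at this
      exact (h1.prodMk h2).hasDerivWithinAt
    have fa : ‖f 0‖ ≤ 0 := by
      rw [hf]
      simp only [Prod.norm_def]
      rw [gzero_neg 0 le_rfl, g'0]
      simp
    have fbound : ∀ x ∈ Ico (0:ℝ) t,
        ‖(deriv g x, -(K x) * g x)‖ ≤ L * ‖f x‖ + 0 := by
      intro x hx
      have hxI : x ∈ Icc (0:ℝ) t := ⟨hx.1, le_of_lt hx.2⟩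
      have hMx : |K x| ≤ M := by simpa using hM x hxI
      rw [Prod.norm_def, Prod.norm_def]
      simp only [Real.norm_eq_abs]
      have hnn : (0:ℝ) ≤ max |g x| |deriv g x| :=
        le_trans (abs_nonneg _) (le_max_left _ _)
      rw [add_zero]
      apply max_le
      · calc |deriv g x| ≤ max |g x| |deriv g x| := le_max_right _ _
          _ ≤ L * max |g x| |deriv g x| := le_mul_of_one_le_left hnn hL1
      · have : |(-(K x)) * g x| = |K x| * |g x| := by
          rw [abs_mul, abs_neg]
        rw [this]
        calc |K x| * |g x| ≤ M * |g x| := by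
              apply mul_le_mul_of_nonneg_right hMx (abs_nonneg _)
          _ ≤ L * max |g x| |deriv g x| := by
              apply mul_le_mul (le_max_left _ _) (le_max_left _ _) (abs_nonneg _)
                (le_trans zero_le_one hL1)
    have := norm_le_gronwallBound_of_norm_deriv_right_le fcont fderiv fa fbound t
      ⟨le_of_lt ht, le_rfl⟩
    rw [gronwallBound_of_K_ne_0] at this
    · simp only [zero_mul, zero_div, add_zero, zero_add, mul_zero] at this
      have hnorm : ‖f t‖ ≤ 0 := by linarith [this]
      have : f t = 0 := norm_le_zero_iff.mp hnorm
      have := congrArg Prod.fst this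
      simpa [hf] using this
    · intro h
      rw [h] at hL1; linarith


/-- Uniqueness half of Proposition 4.1 (scalar form): a solution of
`h'' + K h = 0` with `K ≤ 0`, `h 0 = 1`, bounded on `(-∞, 0]`, is unique. -/
theorem stmt_1 (K : ℝ → ℝ) (hKcont : Continuous K) (hKnonpos : ∀ r : ℝ, K r ≤ 0)
    (h₁ h₂ : ℝ → ℝ)
    (h₁C2 : ContDiff ℝ 2 h₁) (h₂C2 : ContDiff ℝ 2 h₂)
    (h₁ode : ∀ r : ℝ, deriv (deriv h₁) r + K r * h₁ r = 0)
    (h₂ode : ∀ r : ℝ, deriv (deriv h₂) r + K r * h₂ r = 0)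
    (h₁0 : h₁ 0 = 1) (h₂0 : h₂ 0 = 1)
    (h₁bdd : ∃ C : ℝ, ∀ r : ℝ, r ≤ 0 → |h₁ r| ≤ C)
    (h₂bdd : ∃ C : ℝ, ∀ r : ℝ, r ≤ 0 → |h₂ r| ≤ C) :
    h₁ = h₂ ∧ deriv h₁ 0 = deriv h₂ 0 := by
  set g : ℝ → ℝ := fun r => h₁ r - h₂ r with hgdef
  have h₁diff : Differentiable ℝ h₁ := h₁C2.differentiable (by norm_num)
  have h₂diff : Differentiable ℝ h₂ := h₂C2.differentiable (by norm_num)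
  have h₁succ : ContDiff ℝ (1 + 1) h₁ := by exact_mod_cast h₁C2
  have h₂succ : ContDiff ℝ (1 + 1) h₂ := by exact_mod_cast h₂C2
  have h₁'diff : Differentiable ℝ (deriv h₁) :=
    ((contDiff_succ_iff_deriv.mp h₁succ).2.2).differentiable one_ne_zero
  have h₂'diff : Differentiable ℝ (deriv h₂) :=
    ((contDiff_succ_iff_deriv.mp h₂succ).2.2).differentiable one_ne_zero
  have gC2 : ContDiff ℝ 2 g := h₁C2.sub h₂C2
  have hderiv : deriv g = fun r => deriv h₁ r - deriv h₂ r :=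
    funext fun r => deriv_sub (h₁diff r) (h₂diff r)
  have gode : ∀ r : ℝ, deriv (deriv g) r = -(K r) * g r := by
    intro r
    rw [hderiv, deriv_fun_sub (h₁'diff r) (h₂'diff r)]
    have e1 := h₁ode r
    have e2 := h₂ode r
    simp only [hgdef]
    ring_nf
    ring_nf at e1 e2
    linarith
  have g0 : g 0 = 0 := by simp [hgdef, h₁0, h₂0]
  have gbdd : ∃ C : ℝ, ∀ r : ℝ, r ≤ 0 → |g r| ≤ C := by
    obtain ⟨C₁, hC₁⟩ := h₁bdd
    obtain ⟨C₂, hC₂⟩ := h₂bdd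
    exact ⟨C₁ + C₂, fun r hr => le_trans (abs_sub _ _) (add_le_add (hC₁ r hr) (hC₂ r hr))⟩
  have hzero := zero_of_bdd K hKcont hKnonpos g gC2 gode g0 gbdd
  have heq : h₁ = h₂ := funext fun r => by have := hzero r; simp [hgdef] at this; linarith
  exact ⟨heq, by rw [heq]⟩
end

section
/- Let K : ℝ → ℝ be continuous with K(r) ≤ 0 for all r, let s > 0, and let h : ℝ → ℝ be twice continuously differentiable with h''(r) + K(r)·h(r) = 0 on [-s, 0], h(-s) = 0, and h(0) = 1. Then 0 ≤ h(r) ≤ 1 + r/s for all r ∈ [-s, 0], and 0 < h'(-s) ≤ 1/s. -/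
open Set


/-- Intermediate claim in the proof of Proposition 4.1: for the two-point
boundary-value solution of `h'' + K h = 0` with `K ≤ 0`, `h (-s) = 0`,
`h 0 = 1`, convexity gives `0 ≤ h r ≤ 1 + r/s` on `[-s, 0]` and
`0 < h'(-s) ≤ 1/s`. -/
theorem stmt_2 (K : ℝ → ℝ) (hKcont : Continuous K) (hKnonpos : ∀ r : ℝ, K r ≤ 0)
    (s : ℝ) (hs : 0 < s)
    (h : ℝ → ℝ) (hC2 : ContDiff ℝ 2 h)
    (hode : ∀ r ∈ Set.Icc (-s) 0, deriv (deriv h) r + K r * h r = 0)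
    (hends : h (-s) = 0) (h0 : h 0 = 1) :
    (∀ r ∈ Set.Icc (-s) 0, 0 ≤ h r ∧ h r ≤ 1 + r / s) ∧
      (0 < deriv h (-s) ∧ deriv h (-s) ≤ 1 / s) := by
  have hd1 : Differentiable ℝ h := hC2.differentiable (by norm_num)
  have hd2 : Differentiable ℝ (deriv h) := by
    have h2 : ContDiff ℝ ((1:ℕ∞)+1) h := by exact_mod_cast hC2
    exact (contDiff_succ_iff_deriv.mp h2).2.2.differentiable (by norm_num)
  have hcont : Continuous h := hd1.continuous
  have hode' : ∀ r ∈ Set.Icc (-s) 0, deriv (deriv h) r = -(K r * h r) := by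
    intro r hr; linarith [hode r hr]
  have hss : -s < 0 := by linarith
  -- Step 1: h ≥ 0 on [-s, 0]
  have hnonneg : ∀ r ∈ Set.Icc (-s) 0, 0 ≤ h r := by
    by_contra hcon
    push_neg at hcon
    obtain ⟨r0, hr0mem, hr0⟩ := hcon
    set A : Set ℝ := Icc (-s) r0 ∩ h ⁻¹' {0} with hA
    have hAne : A.Nonempty := ⟨-s, ⟨le_refl _, hr0mem.1⟩, by simp [hends]⟩
    have hAb : BddAbove A :=
      BddAbove.mono (Subset.trans inter_subset_left Icc_subset_Iic_self) bddAbove_Iic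
    have hAcl : IsClosed A := isClosed_Icc.inter (isClosed_singleton.preimage hcont)
    set a := sSup A with ha
    have haA : a ∈ A := hAcl.csSup_mem hAne hAb
    have haz : h a = 0 := haA.2
    have halt : a < r0 := lt_of_le_of_ne haA.1.2 (by intro he; rw [he] at haz; linarith)
    -- a zero to the right of r0
    have hBex : ∃ c ∈ Icc r0 0, h c = 0 := by
      have h0mem : (0:ℝ) ∈ Icc (h r0) (h 0) := ⟨hr0.le, by rw [h0]; norm_num⟩
      obtain ⟨c, hc, hc0⟩ := intermediate_value_Icc hr0mem.2 hcont.continuousOn h0mem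
      exact ⟨c, hc, hc0⟩
    obtain ⟨c0, hc0mem, hc0⟩ := hBex
    set B : Set ℝ := Icc r0 0 ∩ h ⁻¹' {0} with hB
    have hBne : B.Nonempty := ⟨c0, hc0mem, by simp [hc0]⟩
    have hBb : BddBelow B :=
      BddBelow.mono (Subset.trans inter_subset_left Icc_subset_Ici_self) bddBelow_Ici
    have hBcl : IsClosed B := isClosed_Icc.inter (isClosed_singleton.preimage hcont)
    set b := sInf B with hb
    have hbB : b ∈ B := hBcl.csInf_mem hBne hBb
    have hbz : h b = 0 := hbB.2
    have hblt : r0 < b := lt_of_le_of_ne hbB.1.1 (by intro he; rw [← he] at hbz; linarith)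
    -- h < 0 on (a, b)
    have hneg : ∀ r ∈ Ioo a b, h r < 0 := by
      intro r hr
      rcases le_or_gt r r0 with hle | hlt
      · by_contra hge
        push_neg at hge
        have h0' : (0:ℝ) ∈ Icc (h r0) (h r) := ⟨hr0.le, hge⟩
        obtain ⟨z, hzmem, hz⟩ := intermediate_value_Icc' hle hcont.continuousOn h0'
        have hzA : z ∈ A := ⟨⟨le_trans haA.1.1 (le_trans hr.1.le hzmem.1), hzmem.2⟩, by simp [hz]⟩
        have h1 : a < z := lt_of_lt_of_le hr.1 hzmem.1
        linarith [le_csSup hAb hzA]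
      · by_contra hge
        push_neg at hge
        have h0' : (0:ℝ) ∈ Icc (h r0) (h r) := ⟨hr0.le, hge⟩
        obtain ⟨z, hzmem, hz⟩ := intermediate_value_Icc hlt.le hcont.continuousOn h0'
        have hzB : z ∈ B := ⟨⟨hzmem.1, le_trans hzmem.2 (le_trans hr.2.le hbB.1.2)⟩, by simp [hz]⟩
        have h1 : z < b := lt_of_le_of_lt hzmem.2 hr.2
        linarith [csInf_le hBb hzB]
    have habIcc : Icc a b ⊆ Icc (-s) 0 := Icc_subset_Icc haA.1.1 hbB.1.2
    have hnonpos : ∀ r ∈ Icc a b, h r ≤ 0 := by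
      intro r hr
      rcases eq_or_lt_of_le hr.1 with he | h1
      · rw [← he, haz]
      rcases eq_or_lt_of_le hr.2 with he | h2
      · rw [he, hbz]
      exact (hneg r ⟨h1, h2⟩).le
    -- h concave on [a, b]
    have hconc : ConcaveOn ℝ (Icc a b) h := by
      apply concaveOn_of_deriv2_nonpos (convex_Icc a b) hcont.continuousOn
        hd1.differentiableOn hd2.differentiableOn
      intro x hx
      rw [interior_Icc] at hx
      have hxmem : x ∈ Icc (-s) 0 := habIcc (Ioo_subset_Icc_self hx)
      show deriv (deriv h) x ≤ 0
      rw [hode' x hxmem]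
      have hKh : 0 ≤ K x * h x := by
        rw [← neg_mul_neg]
        exact mul_nonneg (neg_nonneg.2 (hKnonpos x))
          (neg_nonneg.2 (hnonpos x (Ioo_subset_Icc_self hx)))
      linarith
    -- contradiction at r0
    set θ : ℝ := (b - r0) / (b - a) with hθ
    have hba : 0 < b - a := by linarith
    have hθ0 : 0 ≤ θ := div_nonneg (by linarith) hba.le
    have hθ1 : 0 ≤ 1 - θ := by
      rw [hθ, sub_nonneg]
      exact div_le_one_of_le₀ (by linarith) hba.le
    have hsum : θ + (1 - θ) = 1 := by ring
    have hcomb : θ • a + (1 - θ) • b = r0 := by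
      simp only [smul_eq_mul, hθ]
      field_simp
      ring
    have hfin := hconc.2 (left_mem_Icc.mpr (by linarith)) (right_mem_Icc.mpr (by linarith))
      hθ0 hθ1 hsum
    rw [hcomb, haz, hbz] at hfin
    simp only [smul_eq_mul, mul_zero, add_zero] at hfin
    linarith
  -- Step 2: h convex on [-s, 0]
  have hconv : ConvexOn ℝ (Icc (-s) 0) h := by
    apply convexOn_of_deriv2_nonneg (convex_Icc _ _) hcont.continuousOn
      hd1.differentiableOn hd2.differentiableOn
    intro x hx
    rw [interior_Icc] at hx
    have hxmem : x ∈ Icc (-s) 0 := Ioo_subset_Icc_self hx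
    show 0 ≤ deriv (deriv h) x
    rw [hode' x hxmem]
    have hKh : K x * h x ≤ 0 := mul_nonpos_iff.mpr (Or.inr ⟨hKnonpos x, hnonneg x hxmem⟩)
    linarith
  -- Step 3: upper bound from convexity
  have hub : ∀ r ∈ Icc (-s) 0, h r ≤ 1 + r / s := by
    intro r hr
    set θ : ℝ := -r / s with hθ
    have hθ0 : 0 ≤ θ := div_nonneg (by linarith [hr.2]) hs.le
    have hθ1 : 0 ≤ 1 - θ := by
      rw [hθ, sub_nonneg]
      exact div_le_one_of_le₀ (by linarith [hr.1]) hs.le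
    have hsum : θ + (1 - θ) = 1 := by ring
    have hcomb : θ • (-s) + (1 - θ) • (0:ℝ) = r := by
      simp only [smul_eq_mul, hθ, mul_zero, add_zero]
      field_simp
    have hfin := hconv.2 (left_mem_Icc.mpr hss.le) (right_mem_Icc.mpr hss.le) hθ0 hθ1 hsum
    rw [hcomb, hends, h0] at hfin
    simp only [smul_eq_mul, mul_zero, mul_one, zero_add] at hfin
    calc h r ≤ 1 - θ := hfin
    _ = 1 + r / s := by rw [hθ]; ring
  -- Step 4: slope limits at -s
  have hDa : HasDerivAt h (deriv h (-s)) (-s) := (hd1 (-s)).hasDerivAt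
  have hslope : Filter.Tendsto (slope h (-s)) (nhdsWithin (-s) (Ioi (-s))) (nhds (deriv h (-s))) :=
    (hasDerivAt_iff_tendsto_slope.mp hDa).mono_left
      (nhdsWithin_mono _ (fun x hx => ne_of_gt hx))
  have hmem : Ioo (-s) 0 ∈ nhdsWithin (-s) (Ioi (-s)) := Ioo_mem_nhdsGT_of_mem ⟨le_refl _, hss⟩
  have hub' : deriv h (-s) ≤ 1 / s := by
    refine le_of_tendsto hslope ?_
    filter_upwards [hmem] with r hr
    have hrs : 0 < r + s := by linarith [hr.1]
    have h1 : h r * s ≤ r + s := by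
      have h2 : h r ≤ (r + s) / s := by
        rw [add_div, div_self hs.ne', add_comm]
        exact hub r (Ioo_subset_Icc_self hr)
      exact (le_div_iff₀ hs).mp h2
    rw [slope_def_field, hends, sub_zero, sub_neg_eq_add, div_le_div_iff₀ hrs hs]
    linarith
  have hlb0 : 0 ≤ deriv h (-s) := by
    refine ge_of_tendsto hslope ?_
    filter_upwards [hmem] with r hr
    rw [slope_def_field, hends, sub_zero, sub_neg_eq_add]
    exact div_nonneg (hnonneg r (Ioo_subset_Icc_self hr)) (by linarith [hr.1])
  -- Step 5: strict positivity via Gronwall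
  have hpos : 0 < deriv h (-s) := by
    rcases hlb0.lt_or_eq with hlt | heq
    · exact hlt
    exfalso
    obtain ⟨C, hC⟩ := (isCompact_Icc : IsCompact (Icc (-s) 0)).exists_bound_of_continuousOn
      hKcont.continuousOn
    set C' : ℝ := max C 1 with hC'
    have hC'1 : (1:ℝ) ≤ C' := le_max_right _ _
    have hC'0 : (0:ℝ) ≤ C' := by linarith
    set f : ℝ → ℝ × ℝ := fun t => (h t, deriv h t) with hf
    have hfd : ∀ t : ℝ, HasDerivAt f (deriv h t, deriv (deriv h) t) t := fun t =>
      HasDerivAt.prodMk (hd1 t).hasDerivAt (hd2 t).hasDerivAt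
    have key := norm_le_gronwallBound_of_norm_deriv_right_le
      (f := f) (f' := fun t => (deriv h t, deriv (deriv h) t)) (δ := 0) (K := C') (ε := 0)
      (a := -s) (b := 0)
      ((hcont.prodMk hd2.continuous).continuousOn)
      (fun x _ => (hfd x).hasDerivWithinAt)
      (by
        have hfz : f (-s) = 0 := by
          simp only [hf, hends, ← heq, Prod.mk_eq_zero]
          simp
        rw [hfz, norm_zero])
      (by
        intro x hx
        have hxI : x ∈ Icc (-s) 0 := Ico_subset_Icc_self hx
        have hb1 : ‖deriv h x‖ ≤ C' * ‖f x‖ :=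
          le_trans (norm_snd_le (f x)) (le_mul_of_one_le_left (norm_nonneg _) hC'1)
        have hb2 : ‖deriv (deriv h) x‖ ≤ C' * ‖f x‖ := by
          rw [hode' x hxI, norm_neg, norm_mul]
          calc ‖K x‖ * ‖h x‖ ≤ C * ‖h x‖ :=
                mul_le_mul_of_nonneg_right (hC x hxI) (norm_nonneg _)
          _ ≤ C' * ‖f x‖ :=
                mul_le_mul (le_max_left _ _) (norm_fst_le (f x)) (norm_nonneg _) hC'0
        rw [add_zero, Prod.norm_def]
        exact max_le hb1 hb2)
    have hfin := key 0 (right_mem_Icc.mpr hss.le)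
    rw [gronwallBound_ε0, zero_mul] at hfin
    have hf0 : f 0 = 0 := norm_le_zero_iff.mp hfin
    have : h 0 = 0 := congrArg Prod.fst hf0
    linarith
  refine ⟨fun r hr => ⟨hnonneg r hr, hub r hr⟩, hpos, hub'⟩
end

section
/- Let K : ℝ → ℝ be continuous with K(r) ≤ 0 for all r. Let 0 < s₁ ≤ s₂, and for i = 1, 2 let hᵢ : ℝ → ℝ be twice continuously differentiable with hᵢ'' + K·hᵢ = 0, hᵢ(0) = 1, and hᵢ(-sᵢ) = 0. Then for every r ∈ [-s₁, 0], 0 ≤ h₂(r) - h₁(r) ≤ -r·(1/s₁ - 1/s₂). -/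
open Set

private lemma aux_deriv_diff {g : ℝ → ℝ} (h : ContDiff ℝ 2 g) :
    Differentiable ℝ g ∧ Differentiable ℝ (deriv g) := by
  have h' : ContDiff ℝ ((1:ℕ∞)+1) g := by exact_mod_cast h
  exact ⟨h.differentiable (by norm_num),
    ((contDiff_succ_iff_deriv.mp h').2.2).differentiable (by norm_num)⟩

/-- Where a solution of `h'' + K h = 0` (`K ≤ 0`) is nonnegative, it is convex. -/
private lemma aux_convexOn (K : ℝ → ℝ) (hK : ∀ r, K r ≤ 0) (h : ℝ → ℝ)
    (hC2 : ContDiff ℝ 2 h) (ode : ∀ r, deriv (deriv h) r + K r * h r = 0)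
    {a b : ℝ} (hpos : ∀ x ∈ Icc a b, 0 ≤ h x) : ConvexOn ℝ (Icc a b) h := by
  obtain ⟨hd1, hd2⟩ := aux_deriv_diff hC2
  refine convexOn_of_deriv2_nonneg (convex_Icc a b) hd1.continuous.continuousOn
    hd1.differentiableOn hd2.differentiableOn ?_
  intro x hx
  rw [interior_Icc] at hx
  have h2 : deriv^[2] h x = deriv (deriv h) x := by
    simp [Function.iterate_succ, Function.iterate_one]
  have hxm : x ∈ Icc a b := ⟨hx.1.le, hx.2.le⟩
  have := ode x
  have hKx := hK x
  have hhx := hpos x hxm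
  nlinarith [this]

/-- Where a solution of `h'' + K h = 0` (`K ≤ 0`) is nonpositive, it is concave. -/
private lemma aux_concaveOn (K : ℝ → ℝ) (hK : ∀ r, K r ≤ 0) (h : ℝ → ℝ)
    (hC2 : ContDiff ℝ 2 h) (ode : ∀ r, deriv (deriv h) r + K r * h r = 0)
    {a b : ℝ} (hneg : ∀ x ∈ Icc a b, h x ≤ 0) : ConcaveOn ℝ (Icc a b) h := by
  obtain ⟨hd1, hd2⟩ := aux_deriv_diff hC2
  refine concaveOn_of_deriv2_nonpos (convex_Icc a b) hd1.continuous.continuousOn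
    hd1.differentiableOn hd2.differentiableOn ?_
  intro x hx
  rw [interior_Icc] at hx
  have h2 : deriv^[2] h x = deriv (deriv h) x := by
    simp [Function.iterate_succ, Function.iterate_one]
  have hxm : x ∈ Icc a b := ⟨hx.1.le, hx.2.le⟩
  have := ode x
  have hKx := hK x
  have hhx := hneg x hxm
  nlinarith [this]

/-- Maximum principle: a solution of `g'' + K g = 0` with `K ≤ 0` that is
nonnegative at both endpoints of an interval is nonnegative on the interval. -/
private lemma aux_maxPrinciple (K : ℝ → ℝ) (hK : ∀ r, K r ≤ 0) (g : ℝ → ℝ)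
    (gC2 : ContDiff ℝ 2 g) (gode : ∀ r, deriv (deriv g) r + K r * g r = 0)
    {a b : ℝ} (ga : 0 ≤ g a) (gb : 0 ≤ g b) :
    ∀ x ∈ Icc a b, 0 ≤ g x := by
  by_contra hcon
  push_neg at hcon
  obtain ⟨m, hm, hgm⟩ := hcon
  have hcont : Continuous g := gC2.continuous
  -- the least zero of g to the right of m
  set Sb : Set ℝ := Icc m b ∩ {x | g x = 0} with hSbdef
  have hSbne : Sb.Nonempty := by
    obtain ⟨c, hc, hgc⟩ := intermediate_value_Icc hm.2 hcont.continuousOn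
      (⟨hgm.le, gb⟩ : (0:ℝ) ∈ Icc (g m) (g b))
    exact ⟨c, hc, hgc⟩
  have hSbcl : IsClosed Sb := isClosed_Icc.inter (isClosed_eq hcont continuous_const)
  have hSbbdd : BddBelow Sb := (bddBelow_Icc).mono inter_subset_left
  set β := sInf Sb with hβdef
  have hβmem : β ∈ Sb := hSbcl.csInf_mem hSbne hSbbdd
  have hgβ : g β = 0 := hβmem.2
  have hmβ : m ≤ β := hβmem.1.1
  have hnegR : ∀ x ∈ Ico m β, g x < 0 := by
    intro x hx
    by_contra hpos
    push_neg at hpos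
    obtain ⟨c, hc, hgc⟩ := intermediate_value_Icc hx.1 hcont.continuousOn
      (⟨hgm.le, hpos⟩ : (0:ℝ) ∈ Icc (g m) (g x))
    have hcb : c ≤ b := le_trans hc.2 (le_trans hx.2.le hβmem.1.2)
    have : β ≤ c := csInf_le hSbbdd ⟨⟨hc.1, hcb⟩, hgc⟩
    have : c < β := lt_of_le_of_lt hc.2 hx.2
    linarith
  -- the greatest zero of g to the left of m
  set Sa : Set ℝ := Icc a m ∩ {x | g x = 0} with hSadef
  have hSane : Sa.Nonempty := by
    obtain ⟨c, hc, hgc⟩ := intermediate_value_Icc' hm.1 hcont.continuousOn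
      (⟨hgm.le, ga⟩ : (0:ℝ) ∈ Icc (g m) (g a))
    exact ⟨c, hc, hgc⟩
  have hSacl : IsClosed Sa := isClosed_Icc.inter (isClosed_eq hcont continuous_const)
  have hSabdd : BddAbove Sa := (bddAbove_Icc (a := a) (b := m)).mono inter_subset_left
  set α := sSup Sa with hαdef
  have hαmem : α ∈ Sa := hSacl.csSup_mem hSane hSabdd
  have hgα : g α = 0 := hαmem.2
  have hαm : α ≤ m := hαmem.1.2
  have hnegL : ∀ x ∈ Ioc α m, g x < 0 := by
    intro x hx
    by_contra hpos
    push_neg at hpos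
    obtain ⟨c, hc, hgc⟩ := intermediate_value_Icc' hx.2 hcont.continuousOn
      (⟨hgm.le, hpos⟩ : (0:ℝ) ∈ Icc (g m) (g x))
    have hca : a ≤ c := le_trans hαmem.1.1 (le_trans hx.1.le hc.1)
    have : c ≤ α := le_csSup hSabdd ⟨⟨hca, hc.2⟩, hgc⟩
    have : α < c := lt_of_lt_of_le hx.1 hc.1
    linarith
  have hαβ : α ≤ β := le_trans hαm hmβ
  -- g ≤ 0 on [α, β]
  have hle : ∀ x ∈ Icc α β, g x ≤ 0 := by
    intro x hx
    rcases le_or_gt x m with h1 | h1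
    · rcases eq_or_lt_of_le hx.1 with h2 | h2
      · rw [← h2, hgα]
      · exact (hnegL x ⟨h2, h1⟩).le
    · rcases eq_or_lt_of_le hx.2 with h2 | h2
      · rw [h2, hgβ]
      · exact (hnegR x ⟨h1.le, h2⟩).le
  -- hence g is concave on [α, β], contradicting g m < 0 with zero endpoints
  have hconc : ConcaveOn ℝ (Icc α β) g := aux_concaveOn K hK g gC2 gode hle
  have hmseg : m ∈ segment ℝ α β := by
    rw [segment_eq_Icc hαβ]; exact ⟨hαm, hmβ⟩
  obtain ⟨u, v, hu, hv, huv, heq⟩ := hmseg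
  have := hconc.2 (left_mem_Icc.mpr hαβ) (right_mem_Icc.mpr hαβ) hu hv huv
  rw [heq] at this
  simp only [smul_eq_mul, hgα, hgβ, mul_zero, add_zero] at this
  linarith

/-- Intermediate claim in the proof of Proposition 4.1: monotonicity in `s` of
the two-point solutions `h_s` of `h'' + K h = 0` (`K ≤ 0`) with `h_s 0 = 1`,
`h_s (-s) = 0`, together with the quantitative bound coming from
`|∂_s h_s(r)| ≤ -r/s²`. -/
theorem stmt_4 (K : ℝ → ℝ) (hKcont : Continuous K) (hKnonpos : ∀ r : ℝ, K r ≤ 0)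
    (s₁ s₂ : ℝ) (hs₁ : 0 < s₁) (hs₁₂ : s₁ ≤ s₂)
    (h₁ h₂ : ℝ → ℝ)
    (h₁C2 : ContDiff ℝ 2 h₁) (h₂C2 : ContDiff ℝ 2 h₂)
    (h₁ode : ∀ r : ℝ, deriv (deriv h₁) r + K r * h₁ r = 0)
    (h₂ode : ∀ r : ℝ, deriv (deriv h₂) r + K r * h₂ r = 0)
    (h₁0 : h₁ 0 = 1) (h₂0 : h₂ 0 = 1)
    (h₁end : h₁ (-s₁) = 0) (h₂end : h₂ (-s₂) = 0) :
    ∀ r ∈ Set.Icc (-s₁) 0, 0 ≤ h₂ r - h₁ r ∧ h₂ r - h₁ r ≤ -r * (1 / s₁ - 1 / s₂) := by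
  have hs₂ : 0 < s₂ := lt_of_lt_of_le hs₁ hs₁₂
  -- h₂ is nonnegative, hence convex, on [-s₂, 0]
  have h2nn : ∀ x ∈ Icc (-s₂) 0, 0 ≤ h₂ x :=
    aux_maxPrinciple K hKnonpos h₂ h₂C2 h₂ode (by rw [h₂end]) (by rw [h₂0]; norm_num)
  have h2conv : ConvexOn ℝ (Icc (-s₂) 0) h₂ :=
    aux_convexOn K hKnonpos h₂ h₂C2 h₂ode h2nn
  -- chord bound: h₂(-s₁) ≤ 1 - s₁/s₂
  have key : h₂ (-s₁) ≤ 1 - s₁ / s₂ := by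
    have hu : (0:ℝ) ≤ s₁ / s₂ := by positivity
    have hv : (0:ℝ) ≤ 1 - s₁ / s₂ := by
      have : s₁ / s₂ ≤ 1 := (div_le_one hs₂).mpr hs₁₂
      linarith
    have hc := h2conv.2 (left_mem_Icc.mpr (by linarith)) (right_mem_Icc.mpr (by linarith))
      hu hv (by ring)
    have heq : (s₁ / s₂) • (-s₂) + (1 - s₁ / s₂) • (0:ℝ) = -s₁ := by
      rw [smul_eq_mul, smul_eq_mul, mul_zero, add_zero]
      field_simp
    rw [heq] at hc
    simpa [h₂end, h₂0] using hc
  -- g := h₂ - h₁ solves the same ODE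
  set g : ℝ → ℝ := fun x => h₂ x - h₁ x with hgdef
  obtain ⟨h1d1, h1d2⟩ := aux_deriv_diff h₁C2
  obtain ⟨h2d1, h2d2⟩ := aux_deriv_diff h₂C2
  have gC2 : ContDiff ℝ 2 g := h₂C2.sub h₁C2
  have gderiv : deriv g = fun x => deriv h₂ x - deriv h₁ x :=
    funext fun x => deriv_sub (h2d1 x) (h1d1 x)
  have gode : ∀ r, deriv (deriv g) r + K r * g r = 0 := by
    intro r
    have hdd : deriv (deriv g) r = deriv (deriv h₂) r - deriv (deriv h₁) r := by
      rw [gderiv]; exact deriv_sub (h2d2 r) (h1d2 r)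
    have e1 := h₁ode r
    have e2 := h₂ode r
    have : K r * g r = K r * h₂ r - K r * h₁ r := by simp [hgdef]; ring
    rw [hdd, this]
    linarith
  -- endpoints of g on [-s₁, 0]
  have hs₁mem : (-s₁) ∈ Icc (-s₂) 0 := ⟨by linarith, by linarith⟩
  have ga : 0 ≤ g (-s₁) := by
    have := h2nn _ hs₁mem
    simp [hgdef, h₁end]
    linarith
  have gb : 0 ≤ g 0 := by simp [hgdef, h₁0, h₂0]
  have gnn : ∀ x ∈ Icc (-s₁) 0, 0 ≤ g x :=
    aux_maxPrinciple K hKnonpos g gC2 gode ga gb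
  have gconv : ConvexOn ℝ (Icc (-s₁) 0) g :=
    aux_convexOn K hKnonpos g gC2 gode gnn
  intro r hr
  refine ⟨gnn r hr, ?_⟩
  -- chord bound for g on [-s₁, 0]: g r ≤ (-r/s₁) * g(-s₁)
  have hu : (0:ℝ) ≤ -r / s₁ := by
    have hr0 : 0 ≤ -r := by linarith [hr.2]
    positivity
  have hv : (0:ℝ) ≤ 1 + r / s₁ := by
    have h1 : -(1:ℝ) ≤ r / s₁ := by
      rw [neg_le, ← neg_div]
      exact (div_le_one hs₁).mpr (by linarith [hr.1])
    linarith
  have hc := gconv.2 (left_mem_Icc.mpr (by linarith)) (right_mem_Icc.mpr (by linarith))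
    hu hv (by ring)
  have heq : (-r / s₁) • (-s₁) + (1 + r / s₁) • (0:ℝ) = r := by
    rw [smul_eq_mul, smul_eq_mul, mul_zero, add_zero]
    field_simp
  have gb0 : g 0 = 0 := by simp [hgdef, h₂0, h₁0]
  rw [heq, gb0] at hc
  simp only [smul_eq_mul, mul_zero, add_zero] at hc
  -- hc : g r ≤ -r/s₁ * g (-s₁)
  have h1 : g (-s₁) ≤ 1 - s₁ / s₂ := by
    simp only [hgdef, h₁end, sub_zero]
    exact key
  have h2 : (-r / s₁) * g (-s₁) ≤ (-r / s₁) * (1 - s₁ / s₂) :=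
    mul_le_mul_of_nonneg_left h1 hu
  have h3 : (-r / s₁) * (1 - s₁ / s₂) = -r * (1 / s₁ - 1 / s₂) := by
    field_simp
  have hgr : g r = h₂ r - h₁ r := rfl
  linarith
end

section
/- Let K : (0, ∞) → ℝ be continuous, and let κ, k : (0, ∞) → ℝ be differentiable functions satisfying the Riccati equation u'(r) = -K(r) - u(r)² for all r > 0. Assume k(r) ≥ 0 for all r > 0, and that there exists δ > 0 such that κ(r) > k(r) for all 0 < r < δ. Then 0 < κ(r) - k(r) ≤ 1/r for all r > 0. -/
/-- Lemma 4.2 part (1) in scalar Riccati form: if `κ` and `k` both solve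
`u' = -K - u²` on `(0,∞)`, `k ≥ 0`, and `κ > k` near `0`, then
`0 < κ(r) - k(r) ≤ 1/r` for all `r > 0`. -/
theorem stmt_6 (K κ k : ℝ → ℝ)
    (hKcont : ContinuousOn K (Set.Ioi (0 : ℝ)))
    (hκ : ∀ r : ℝ, 0 < r → HasDerivAt κ (-K r - κ r ^ 2) r)
    (hk : ∀ r : ℝ, 0 < r → HasDerivAt k (-K r - k r ^ 2) r)
    (hknonneg : ∀ r : ℝ, 0 < r → 0 ≤ k r)
    (hnear : ∃ δ : ℝ, 0 < δ ∧ ∀ r : ℝ, 0 < r → r < δ → k r < κ r) :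
    ∀ r : ℝ, 0 < r → 0 < κ r - k r ∧ κ r - k r ≤ 1 / r := by
  obtain ⟨δ, hδ, hδlt⟩ := hnear
  set w : ℝ → ℝ := fun x => κ x - k x with hw_def
  set f : ℝ → ℝ := fun x => κ x + k x with hf_def
  have hwderiv : ∀ x : ℝ, 0 < x → HasDerivAt w (-(f x * w x)) x := by
    intro x hx
    have h : HasDerivAt (fun y => κ y - k y) _ x := (hκ x hx).sub (hk x hx)
    convert h using 1
    simp only [hf_def, hw_def]
    ring
  have hfcont : ∀ x : ℝ, 0 < x → ContinuousAt f x := fun x hx =>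
    (hκ x hx).continuousAt.add (hk x hx).continuousAt
  -- positivity of w on (0, ∞)
  have hwpos : ∀ r : ℝ, 0 < r → 0 < w r := by
    intro r hr
    by_cases hrδ : r < δ
    · exact sub_pos.mpr (hδlt r hr hrδ)
    push_neg at hrδ
    set a := δ / 2 with ha_def
    have ha : 0 < a := half_pos hδ
    have har : a ≤ r := le_trans (by linarith) hrδ
    have hwa : 0 < w a := sub_pos.mpr (hδlt a ha (by linarith))
    set F : ℝ → ℝ := fun x => ∫ t in a..x, f t with hF_def
    have hFderiv : ∀ x : ℝ, 0 < x → HasDerivAt F (f x) x := by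
      intro x hx
      apply intervalIntegral.integral_hasDerivAt_right
      · apply ContinuousOn.intervalIntegrable
        intro t ht
        have ht' : 0 < t := by
          rcases Set.mem_uIcc.mp ht with ⟨h1, _⟩ | ⟨h1, _⟩
          · linarith
          · linarith
        exact (hfcont t ht').continuousWithinAt
      · exact ContinuousOn.stronglyMeasurableAtFilter isOpen_Ioi
          (fun t ht => (hfcont t ht).continuousWithinAt) x hx
      · exact hfcont x hx
    set g : ℝ → ℝ := fun x => w x * Real.exp (F x) with hg_def
    have hgderiv : ∀ x : ℝ, 0 < x → HasDerivAt g 0 x := by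
      intro x hx
      have h : HasDerivAt (fun y => w y * Real.exp (F y)) _ x := (hwderiv x hx).mul ((hFderiv x hx).exp)
      convert h using 1
      ring
    have hconst := constant_of_has_deriv_right_zero (f := g) (a := a) (b := r)
      (fun x hx => (hgderiv x (lt_of_lt_of_le ha hx.1)).continuousAt.continuousWithinAt)
      (fun x hx => ((hgderiv x (lt_of_lt_of_le ha hx.1)).hasDerivWithinAt))
      r (Set.right_mem_Icc.mpr har)
    have hgr : w r * Real.exp (F r) = w a * Real.exp (F a) := hconst
    have hpos : 0 < w a * Real.exp (F a) := mul_pos hwa (Real.exp_pos _)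
    nlinarith [Real.exp_pos (F r), Real.exp_pos (F a)]
  -- the monotone auxiliary function ψ x = (w x)⁻¹ - x
  set ψ : ℝ → ℝ := fun x => (w x)⁻¹ - x with hψ_def
  have hψderiv : ∀ x : ℝ, 0 < x →
      HasDerivAt ψ (-(-(f x * w x)) / w x ^ 2 - 1) x := by
    intro x hx
    exact ((hwderiv x hx).inv (ne_of_gt (hwpos x hx))).sub (hasDerivAt_id x)
  have hψmono : MonotoneOn ψ (Set.Ioi (0 : ℝ)) := by
    apply monotoneOn_of_hasDerivWithinAt_nonneg (convex_Ioi 0)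
      (f' := fun x => -(-(f x * w x)) / w x ^ 2 - 1)
    · intro x hx
      exact (hψderiv x hx).continuousAt.continuousWithinAt
    · intro x hx
      rw [interior_Ioi] at hx
      exact (hψderiv x hx).hasDerivWithinAt
    · intro x hx
      rw [interior_Ioi] at hx
      have hwx := hwpos x hx
      have hkx := hknonneg x hx
      have hfw : w x ≤ f x := by simp only [hf_def, hw_def]; linarith
      rw [sub_nonneg, neg_neg, le_div_iff₀ (by positivity)]
      nlinarith
  intro r hr
  refine ⟨hwpos r hr, ?_⟩
  have hinv : r ≤ (w r)⁻¹ := by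
    apply le_of_forall_pos_le_add
    intro ε hε
    set s := min ε r with hs_def
    have hs : 0 < s := lt_min hε hr
    have hsr : s ≤ r := min_le_right _ _
    have := hψmono (Set.mem_Ioi.mpr hs) (Set.mem_Ioi.mpr hr) hsr
    have hws : 0 < (w s)⁻¹ := inv_pos.mpr (hwpos s hs)
    have hsε : s ≤ ε := min_le_left _ _
    simp only [hψ_def] at this
    linarith
  have hwr := hwpos r hr
  rw [le_div_iff₀ hr]
  have h1 : (w r)⁻¹ * w r = 1 := inv_mul_cancel₀ (ne_of_gt hwr)
  nlinarith
end

section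
/- Let K₀, K₁ be constants with 0 ≥ K₀ ≥ K₁, and let K : (-∞, 0] → ℝ be continuous with K₁ ≤ K(r) ≤ K₀ for all r ≤ 0. Suppose k : (-∞, 0] → ℝ is differentiable, bounded (there is C with |k(r)| ≤ C for all r ≤ 0), satisfies k(r) ≥ 0 for all r ≤ 0, and solves the Riccati equation k'(r) = -K(r) - k(r)² for all r ≤ 0. Then √(-K₀) ≤ k(r) ≤ √(-K₁) for all r ≤ 0. -/
open Set

/-- Auxiliary: a bounded solution with `k' ≤ b² - k²` on `Iic 0` (`b ≥ 0`) satisfies `k ≤ b`. -/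
lemma riccati_upper_aux (b : ℝ) (hb : 0 ≤ b) (k f : ℝ → ℝ)
    (hk : ∀ r : ℝ, r ≤ 0 → HasDerivWithinAt k (f r) (Set.Iic (0 : ℝ)) r)
    (hf : ∀ r : ℝ, r ≤ 0 → f r ≤ b ^ 2 - k r ^ 2)
    (C : ℝ) (hC : ∀ r : ℝ, r ≤ 0 → k r ≤ C) :
    ∀ r : ℝ, r ≤ 0 → k r ≤ b := by
  intro r₀ hr₀
  by_contra hlt
  push_neg at hlt
  have hkc : ContinuousOn k (Iic (0 : ℝ)) := fun x hx => (hk x hx).continuousWithinAt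
  -- derivative at interior points
  have hderiv : ∀ x : ℝ, x < 0 → HasDerivAt k (f x) x := fun x hx =>
    (hk x hx.le).hasDerivAt (Iic_mem_nhds hx)
  -- Step 1: invariance: k r ≥ k r₀ for all r ≤ r₀
  have hinv : ∀ r : ℝ, r ≤ r₀ → k r₀ ≤ k r := by
    intro r₁ hr₁
    by_contra h1
    push_neg at h1
    have hmax : max b (k r₁) < k r₀ := max_lt hlt h1
    obtain ⟨c, hc1, hc2⟩ := exists_between hmax
    have hbc : b < c := (le_max_left _ _).trans_lt hc1
    have hr₁c : k r₁ ≤ c := ((le_max_right b (k r₁)).trans_lt hc1).le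
    have hr₁r₀ : r₁ ≤ r₀ := hr₁
    set S : Set ℝ := {t ∈ Icc r₁ r₀ | k t ≤ c} with hS
    have hSsub : S ⊆ Icc r₁ r₀ := fun t ht => ht.1
    have hSne : S.Nonempty := ⟨r₁, ⟨le_refl _, hr₁r₀⟩, hr₁c⟩
    have hSbdd : BddAbove S := ⟨r₀, fun t ht => ht.1.2⟩
    have hScl : IsClosed S := by
      have : S = Icc r₁ r₀ ∩ k ⁻¹' Iic c := by
        ext t; simp [hS, Set.mem_setOf_eq, and_comm]
      rw [this]
      exact ContinuousOn.preimage_isClosed_of_isClosed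
        (hkc.mono (fun t ht => ht.2.trans hr₀)) isClosed_Icc isClosed_Iic
    set t₀ := sSup S with ht₀
    have ht₀S : t₀ ∈ S := hScl.csSup_mem hSne hSbdd
    have ht₀lt : t₀ < r₀ := by
      rcases lt_or_eq_of_le ht₀S.1.2 with h | h
      · exact h
      · exfalso; rw [h] at ht₀S; exact absurd ht₀S.2 (not_le.mpr hc2)
    -- on (t₀, r₀], k > c
    have hgt : ∀ x ∈ Ioc t₀ r₀, c < k x := by
      intro x hx
      by_contra hcx
      push_neg at hcx
      have hxS : x ∈ S := ⟨⟨ht₀S.1.1.trans hx.1.le, hx.2⟩, hcx⟩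
      exact absurd (le_csSup hSbdd hxS) (not_le.mpr hx.1)
    -- strict antitone on Icc t₀ r₀
    have hanti : StrictAntiOn k (Icc t₀ r₀) := by
      apply strictAntiOn_of_hasDerivWithinAt_neg (convex_Icc _ _)
        (hkc.mono (fun t ht => ht.2.trans hr₀)) (f' := f)
      · intro x hx
        rw [interior_Icc] at hx
        exact ((hderiv x (hx.2.trans_le hr₀)).hasDerivWithinAt)
      · intro x hx
        rw [interior_Icc] at hx
        have hxle : x ≤ 0 := (hx.2.trans_le hr₀).le
        have hcx : c < k x := hgt x ⟨hx.1, hx.2.le⟩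
        have : k x ^ 2 > b ^ 2 := by nlinarith
        have := hf x hxle
        linarith
    have := hanti ⟨le_refl _, ht₀lt.le⟩ ⟨ht₀lt.le, le_refl _⟩ ht₀lt
    -- k r₀ < k t₀ ≤ c < k r₀ : contradiction
    have hkt₀ : k t₀ ≤ c := ht₀S.2
    linarith
  -- Step 2: linear growth backwards
  set δ : ℝ := k r₀ ^ 2 - b ^ 2 with hδ
  have hδpos : 0 < δ := by nlinarith
  have hgrow : ∀ r : ℝ, r ≤ r₀ → k r₀ + δ * (r₀ - r) ≤ k r := by
    intro r hr
    have hanti : AntitoneOn (fun t => k t + δ * t) (Icc r r₀) := by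
      apply antitoneOn_of_deriv_nonpos (convex_Icc _ _)
      · exact ContinuousOn.add (hkc.mono (fun t ht => ht.2.trans hr₀)) (by fun_prop)
      · intro x hx
        rw [interior_Icc] at hx
        exact (((hderiv x (hx.2.trans_le hr₀)).add
          ((hasDerivAt_id x).const_mul δ)).differentiableAt).differentiableWithinAt
      · intro x hx
        rw [interior_Icc] at hx
        have hxle : x ≤ 0 := (hx.2.trans_le hr₀).le
        have hD : HasDerivAt (fun t => k t + δ * t) (f x + δ * 1)  x :=
          (hderiv x (hx.2.trans_le hr₀)).add ((hasDerivAt_id x).const_mul δ)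
        rw [hD.deriv]
        have h1 := hf x hxle
        have h2 : k r₀ ≤ k x := hinv x hx.2.le
        have h3 : 0 ≤ k r₀ := hb.trans hlt.le
        nlinarith
    have := hanti ⟨le_refl _, hr⟩ ⟨hr, le_refl _⟩ hr
    simp only at this
    nlinarith
  -- choose r far enough back
  have hCk : k r₀ ≤ C := hC r₀ hr₀
  have hq : 0 ≤ (C + 1 - k r₀) / δ := div_nonneg (by linarith) hδpos.le
  have hrle : r₀ - (C + 1 - k r₀) / δ ≤ r₀ := by linarith
  have h1 := hgrow _ hrle
  have hval : δ * (r₀ - (r₀ - (C + 1 - k r₀) / δ)) = C + 1 - k r₀ := by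
    field_simp
    ring
  rw [hval] at h1
  have h2 := hC _ (hrle.trans hr₀)
  linarith

/-- Auxiliary: a nonnegative solution with `k' ≥ a² - k²` on `Iic 0` (`a > 0`) satisfies `k ≥ a`. -/
lemma riccati_lower_aux (a : ℝ) (ha : 0 < a) (k f : ℝ → ℝ)
    (hk : ∀ r : ℝ, r ≤ 0 → HasDerivWithinAt k (f r) (Set.Iic (0 : ℝ)) r)
    (hf : ∀ r : ℝ, r ≤ 0 → a ^ 2 - k r ^ 2 ≤ f r)
    (hpos : ∀ r : ℝ, r ≤ 0 → 0 ≤ k r) :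
    ∀ r : ℝ, r ≤ 0 → a ≤ k r := by
  intro r₀ hr₀
  by_contra hlt
  push_neg at hlt
  have hkc : ContinuousOn k (Iic (0 : ℝ)) := fun x hx => (hk x hx).continuousWithinAt
  have hderiv : ∀ x : ℝ, x < 0 → HasDerivAt k (f x) x := fun x hx =>
    (hk x hx.le).hasDerivAt (Iic_mem_nhds hx)
  -- Step 1: invariance: k r ≤ k r₀ for all r ≤ r₀
  have hinv : ∀ r : ℝ, r ≤ r₀ → k r ≤ k r₀ := by
    intro r₁ hr₁
    by_contra h1
    push_neg at h1
    have hmin : k r₀ < min a (k r₁) := lt_min hlt h1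
    obtain ⟨c, hc1, hc2⟩ := exists_between hmin
    have hca : c < a := hc2.trans_le (min_le_left _ _)
    have hr₁c : c ≤ k r₁ := (hc2.trans_le (min_le_right a (k r₁))).le
    set S : Set ℝ := {t ∈ Icc r₁ r₀ | c ≤ k t} with hS
    have hSne : S.Nonempty := ⟨r₁, ⟨le_refl _, hr₁⟩, hr₁c⟩
    have hSbdd : BddAbove S := ⟨r₀, fun t ht => ht.1.2⟩
    have hScl : IsClosed S := by
      have : S = Icc r₁ r₀ ∩ k ⁻¹' Ici c := by
        ext t; simp [hS, Set.mem_setOf_eq, and_comm]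
      rw [this]
      exact ContinuousOn.preimage_isClosed_of_isClosed
        (hkc.mono (fun t ht => ht.2.trans hr₀)) isClosed_Icc isClosed_Ici
    set t₀ := sSup S with ht₀
    have ht₀S : t₀ ∈ S := hScl.csSup_mem hSne hSbdd
    have ht₀lt : t₀ < r₀ := by
      rcases lt_or_eq_of_le ht₀S.1.2 with h | h
      · exact h
      · exfalso; rw [h] at ht₀S; exact absurd ht₀S.2 (not_le.mpr hc1)
    have hltc : ∀ x ∈ Ioc t₀ r₀, k x < c := by
      intro x hx
      by_contra hcx
      push_neg at hcx
      have hxS : x ∈ S := ⟨⟨ht₀S.1.1.trans hx.1.le, hx.2⟩, hcx⟩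
      exact absurd (le_csSup hSbdd hxS) (not_le.mpr hx.1)
    have hmono : StrictMonoOn k (Icc t₀ r₀) := by
      apply strictMonoOn_of_hasDerivWithinAt_pos (convex_Icc _ _)
        (hkc.mono (fun t ht => ht.2.trans hr₀)) (f' := f)
      · intro x hx
        rw [interior_Icc] at hx
        exact ((hderiv x (hx.2.trans_le hr₀)).hasDerivWithinAt)
      · intro x hx
        rw [interior_Icc] at hx
        have hxle : x ≤ 0 := (hx.2.trans_le hr₀).le
        have hcx : k x < c := hltc x ⟨hx.1, hx.2.le⟩
        have h0 : 0 ≤ k x := hpos x hxle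
        have h1 := hf x hxle
        nlinarith
    have := hmono ⟨le_refl _, ht₀lt.le⟩ ⟨ht₀lt.le, le_refl _⟩ ht₀lt
    have hkt₀ : c ≤ k t₀ := ht₀S.2
    linarith
  -- Step 2: linear decay backwards
  set δ : ℝ := a ^ 2 - k r₀ ^ 2 with hδ
  have h0r₀ : 0 ≤ k r₀ := hpos r₀ hr₀
  have hδpos : 0 < δ := by nlinarith
  have hgrow : ∀ r : ℝ, r ≤ r₀ → k r ≤ k r₀ - δ * (r₀ - r) := by
    intro r hr
    have hmono : MonotoneOn (fun t => k t - δ * t) (Icc r r₀) := by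
      apply monotoneOn_of_deriv_nonneg (convex_Icc _ _)
      · exact ContinuousOn.sub (hkc.mono (fun t ht => ht.2.trans hr₀)) (by fun_prop)
      · intro x hx
        rw [interior_Icc] at hx
        exact (((hderiv x (hx.2.trans_le hr₀)).sub
          ((hasDerivAt_id x).const_mul δ)).differentiableAt).differentiableWithinAt
      · intro x hx
        rw [interior_Icc] at hx
        have hxle : x ≤ 0 := (hx.2.trans_le hr₀).le
        have hD : HasDerivAt (fun t => k t - δ * t) (f x - δ * 1) x :=
          (hderiv x (hx.2.trans_le hr₀)).sub ((hasDerivAt_id x).const_mul δ)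
        rw [hD.deriv]
        have h1 := hf x hxle
        have h2 : k x ≤ k r₀ := hinv x hx.2.le
        have h3 : 0 ≤ k x := hpos x hxle
        nlinarith
    have := hmono ⟨le_refl _, hr⟩ ⟨hr, le_refl _⟩ hr
    simp only at this
    nlinarith
  have hq : 0 ≤ (k r₀ + 1) / δ := div_nonneg (by linarith) hδpos.le
  have hrle : r₀ - (k r₀ + 1) / δ ≤ r₀ := by linarith
  have hg := hgrow _ hrle
  have hval : δ * (r₀ - (r₀ - (k r₀ + 1) / δ)) = k r₀ + 1 := by
    field_simp
    ring
  rw [hval] at hg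
  have := hpos _ (hrle.trans hr₀)
  linarith

/-- Lemma 4.2 part (2) in scalar Riccati form: a nonnegative bounded solution
of `k' = -K - k²` on `(-∞, 0]` with `K₁ ≤ K ≤ K₀ ≤ 0` is pinched between
`√(-K₀)` and `√(-K₁)`. -/
theorem stmt_7 (K₀ K₁ : ℝ) (hK₀ : K₀ ≤ 0) (hK₁₀ : K₁ ≤ K₀)
    (K : ℝ → ℝ) (hKcont : ContinuousOn K (Set.Iic (0 : ℝ)))
    (hKpinch : ∀ r : ℝ, r ≤ 0 → K₁ ≤ K r ∧ K r ≤ K₀)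
    (k : ℝ → ℝ)
    (hk : ∀ r : ℝ, r ≤ 0 → HasDerivWithinAt k (-K r - k r ^ 2) (Set.Iic (0 : ℝ)) r)
    (hkbdd : ∃ C : ℝ, ∀ r : ℝ, r ≤ 0 → |k r| ≤ C)
    (hknonneg : ∀ r : ℝ, r ≤ 0 → 0 ≤ k r) :
    ∀ r : ℝ, r ≤ 0 → Real.sqrt (-K₀) ≤ k r ∧ k r ≤ Real.sqrt (-K₁) := by
  obtain ⟨C, hC⟩ := hkbdd
  have hK₁ : K₁ ≤ 0 := hK₁₀.trans hK₀
  have hb : Real.sqrt (-K₁) ^ 2 = -K₁ := Real.sq_sqrt (by linarith)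
  intro r hr
  constructor
  · rcases eq_or_lt_of_le hK₀ with h | h
    · rw [h]; simpa using hknonneg r hr
    · have ha : Real.sqrt (-K₀) ^ 2 = -K₀ := Real.sq_sqrt (by linarith)
      refine riccati_lower_aux (Real.sqrt (-K₀)) (Real.sqrt_pos.mpr (by linarith))
        k (fun r => -K r - k r ^ 2) hk ?_ hknonneg r hr
      intro s hs
      have h2 := (hKpinch s hs).2
      show Real.sqrt (-K₀) ^ 2 - k s ^ 2 ≤ -K s - k s ^ 2
      rw [ha]; linarith
  · refine riccati_upper_aux (Real.sqrt (-K₁)) (Real.sqrt_nonneg _)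
      k (fun r => -K r - k r ^ 2) hk ?_ C (fun s hs => (abs_le.mp (hC s hs)).2) r hr
    intro s hs
    have h1 := (hKpinch s hs).1
    show -K s - k s ^ 2 ≤ Real.sqrt (-K₁) ^ 2 - k s ^ 2
    rw [hb]; linarith
end

section
/- Let K₀ ≤ 0 be a constant and let κ : (0, ∞) → ℝ be differentiable with κ'(r) ≥ -K₀ - κ(r)² for all r > 0 and lim_{r→0⁺} r·κ(r) = 1. Then for all r > 0: if K₀ < 0, κ(r) ≥ √(-K₀)·coth(√(-K₀)·r), and if K₀ = 0, κ(r) ≥ 1/r. -/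
open Real Filter Set MeasureTheory intervalIntegral Topology

lemma riccati_compare (K₀ : ℝ) (κ c : ℝ → ℝ)
    (hdiff : ∀ r : ℝ, 0 < r → DifferentiableAt ℝ κ r)
    (hineq : ∀ r : ℝ, 0 < r → -K₀ - κ r ^ 2 ≤ deriv κ r)
    (hinit : Tendsto (fun r : ℝ => r * κ r) (𝓝[>] 0) (𝓝 1))
    (hcd : ∀ r : ℝ, 0 < r → HasDerivAt c (-K₀ - c r ^ 2) r)
    (hc0 : Tendsto (fun r : ℝ => r * c r) (𝓝[>] 0) (𝓝 1)) :
    ∀ r : ℝ, 0 < r → c r ≤ κ r := by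
  intro r₀ hr₀
  by_contra hcon
  push_neg at hcon
  -- continuity facts
  have hκc : ∀ r : ℝ, 0 < r → ContinuousAt κ r := fun r hr => (hdiff r hr).continuousAt
  have hcc : ∀ r : ℝ, 0 < r → ContinuousAt c r := fun r hr => (hcd r hr).differentiableAt.continuousAt
  set P : ℝ → ℝ := fun r => κ r + c r with hP
  have hPc : ContinuousOn P (Ioi 0) := fun r hr =>
    ((hκc r hr).add (hcc r hr)).continuousWithinAt
  set F : ℝ → ℝ := fun r => ∫ t in r₀..r, P t with hF
  have hsub : ∀ a b : ℝ, 0 < a → 0 < b → Set.uIcc a b ⊆ Ioi 0 := by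
    intro a b ha hb x hx
    exact lt_of_lt_of_le (lt_min ha hb) hx.1
  have hint : ∀ a b : ℝ, 0 < a → 0 < b → IntervalIntegrable P volume a b := by
    intro a b ha hb
    exact (hPc.mono (hsub a b ha hb)).intervalIntegrable
  have hFd : ∀ r : ℝ, 0 < r → HasDerivAt F (P r) r := by
    intro r hr
    exact integral_hasDerivAt_right (hint r₀ r hr₀ hr)
      (hPc.stronglyMeasurableAtFilter isOpen_Ioi r hr) ((hκc r hr).add (hcc r hr))
  set g : ℝ → ℝ := fun r => κ r - c r with hg
  set h : ℝ → ℝ := fun r => Real.exp (F r) * g r with hh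
  have hhd : ∀ r : ℝ, 0 < r → HasDerivAt h
      (Real.exp (F r) * P r * g r + Real.exp (F r) * (deriv κ r - (-K₀ - c r ^ 2))) r := by
    intro r hr
    have h1 : HasDerivAt (fun x => Real.exp (F x)) (Real.exp (F r) * P r) r :=
      (Real.hasDerivAt_exp (F r)).comp r (hFd r hr)
    have h2 : HasDerivAt g (deriv κ r - (-K₀ - c r ^ 2)) r :=
      ((hdiff r hr).hasDerivAt).sub (hcd r hr)
    exact h1.mul h2
  have hderiv_nonneg : ∀ r : ℝ, 0 < r → 0 ≤ deriv h r := by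
    intro r hr
    rw [(hhd r hr).deriv]
    have h1 : 0 ≤ deriv κ r - (-K₀ - κ r ^ 2) := sub_nonneg.2 (hineq r hr)
    have key : Real.exp (F r) * P r * g r + Real.exp (F r) * (deriv κ r - (-K₀ - c r ^ 2))
        = Real.exp (F r) * (deriv κ r - (-K₀ - κ r ^ 2)) := by
      simp only [hP, hg]; ring
    rw [key]
    positivity
  have hmono : MonotoneOn h (Ioi 0) := by
    apply monotoneOn_of_deriv_nonneg (convex_Ioi 0)
    · exact fun r hr => ((hhd r hr).differentiableAt.continuousAt).continuousWithinAt
    · intro r hr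
      rw [interior_Ioi] at hr
      exact (hhd r hr).differentiableAt.differentiableWithinAt
    · intro r hr
      rw [interior_Ioi] at hr
      exact hderiv_nonneg r hr
  have hFr₀ : F r₀ = 0 := by simp [hF]
  have hh_r₀ : h r₀ = g r₀ := by simp [hh, hFr₀]
  have hgneg : g r₀ < 0 := sub_neg.2 hcon
  -- get δ
  have hev : ∀ᶠ r in 𝓝[>] (0:ℝ), 3/4 ≤ r * κ r ∧ 3/4 ≤ r * c r ∧ r < r₀ := by
    filter_upwards [hinit.eventually (eventually_ge_nhds (by norm_num : (3/4:ℝ) < 1)),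
      hc0.eventually (eventually_ge_nhds (by norm_num : (3/4:ℝ) < 1)),
      eventually_nhdsWithin_of_eventually_nhds (eventually_lt_nhds hr₀)] with r h1 h2 h3
    exact ⟨h1, h2, h3⟩
  obtain ⟨δ, hδ0, hδ⟩ := (mem_nhdsGT_iff_exists_Ioc_subset).1 hev
  rw [mem_Ioi] at hδ0
  have hδr₀ : δ < r₀ := (hδ ⟨hδ0, le_refl δ⟩).2.2
  -- lower bound on P on Ioc 0 δ
  have hPlow : ∀ t : ℝ, t ∈ Ioc 0 δ → (3/2) * (1/t) ≤ P t := by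
    intro t ht
    obtain ⟨h1, h2, _⟩ := hδ ht
    have ht0 : 0 < t := ht.1
    rw [mul_one_div, div_le_iff₀ ht0]
    simp only [hP]
    nlinarith
  set Cδ : ℝ := ∫ t in δ..r₀, P t with hCδ
  -- main estimate for r ∈ Ioo 0 δ
  have main : ∀ r : ℝ, r ∈ Ioo 0 δ →
      r * g r ≤ (g r₀ * Real.exp Cδ * δ * Real.sqrt δ) / Real.sqrt r := by
    intro r hr
    obtain ⟨hr0, hrδ⟩ := hr
    have hrr₀ : r < r₀ := lt_trans hrδ hδr₀
    have hmono' : h r ≤ h r₀ := hmono (mem_Ioi.2 hr0) (mem_Ioi.2 hr₀) hrr₀.le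
    rw [hh_r₀] at hmono'
    have hgr : g r ≤ g r₀ * Real.exp (-F r) := by
      have := mul_le_mul_of_nonneg_left hmono' (Real.exp_pos (-F r)).le
      calc g r = Real.exp (-F r) * (Real.exp (F r) * g r) := by
            rw [← mul_assoc, ← Real.exp_add]; simp
      _ ≤ Real.exp (-F r) * g r₀ := this
      _ = g r₀ * Real.exp (-F r) := by ring
    -- split integral
    have hsplit : -F r = (∫ t in r..δ, P t) + Cδ := by
      rw [hF]
      simp only
      rw [← intervalIntegral.integral_symm]
      rw [intervalIntegral.integral_add_adjacent_intervals (hint r δ hr0 hδ0) (hint δ r₀ hδ0 hr₀)]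
    have hlog : (3/2) * Real.log (δ/r) ≤ ∫ t in r..δ, P t := by
      have hm : (∫ t in r..δ, (3/2) * (1/t)) ≤ ∫ t in r..δ, P t := by
        apply intervalIntegral.integral_mono_on hrδ.le _ (hint r δ hr0 hδ0)
        · intro t ht
          exact hPlow t ⟨lt_of_lt_of_le hr0 ht.1, ht.2⟩
        · apply ContinuousOn.intervalIntegrable
          apply ContinuousOn.mul continuousOn_const
          apply ContinuousOn.div continuousOn_const continuousOn_id
          intro t ht
          exact ne_of_gt (lt_of_lt_of_le (lt_min hr0 hδ0) ht.1)
      calc (3/2) * Real.log (δ/r) = ∫ t in r..δ, (3/2) * (1/t) := by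
            rw [intervalIntegral.integral_const_mul, integral_one_div_of_pos hr0 hδ0]
      _ ≤ _ := hm
    have hFrle : (3/2) * Real.log (δ/r) + Cδ ≤ -F r := by rw [hsplit]; linarith
    -- exp bound
    have hδr : 0 < δ / r := div_pos hδ0 hr0
    have hexp : (δ/r) * Real.sqrt (δ/r) * Real.exp Cδ ≤ Real.exp (-F r) := by
      have : Real.exp ((3/2) * Real.log (δ/r) + Cδ) ≤ Real.exp (-F r) :=
        Real.exp_le_exp.2 hFrle
      calc (δ/r) * Real.sqrt (δ/r) * Real.exp Cδ
          = Real.exp (Real.log (δ/r)) * Real.exp (Real.log (δ/r) / 2) * Real.exp Cδ := by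
            rw [Real.exp_log hδr, Real.exp_half, Real.exp_log hδr]
      _ = Real.exp ((3/2) * Real.log (δ/r) + Cδ) := by
            rw [← Real.exp_add, ← Real.exp_add]; ring_nf
      _ ≤ Real.exp (-F r) := this
    have hgr2 : g r ≤ g r₀ * ((δ/r) * Real.sqrt (δ/r) * Real.exp Cδ) := by
      calc g r ≤ g r₀ * Real.exp (-F r) := hgr
      _ ≤ g r₀ * ((δ/r) * Real.sqrt (δ/r) * Real.exp Cδ) :=
          mul_le_mul_of_nonpos_left hexp hgneg.le
    have := mul_le_mul_of_nonneg_left hgr2 hr0.le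
    calc r * g r ≤ r * (g r₀ * ((δ/r) * Real.sqrt (δ/r) * Real.exp Cδ)) := this
    _ = (g r₀ * Real.exp Cδ * δ * Real.sqrt δ) / Real.sqrt r := by
        rw [Real.sqrt_div hδ0.le r]
        field_simp
  -- conclusion: contradiction with r * g r → 0
  set B : ℝ := g r₀ * Real.exp Cδ * δ * Real.sqrt δ with hB
  have hBneg : B < 0 := by
    have h1 : 0 < Real.exp Cδ * δ * Real.sqrt δ := by positivity
    nlinarith
  have htend : Tendsto (fun r : ℝ => r * g r) (𝓝[>] 0) (𝓝 0) := by
    have := hinit.sub hc0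
    simp only [sub_self] at this
    apply this.congr
    intro r
    simp only [hg]
    ring
  have hev2 : ∀ᶠ r in 𝓝[>] (0:ℝ), -1 < r * g r :=
    htend.eventually (eventually_gt_nhds (by norm_num : (-1:ℝ) < 0))
  have hsqrt : Tendsto (fun r : ℝ => Real.sqrt r) (𝓝[>] 0) (𝓝 0) := by
    have := (Real.continuous_sqrt.tendsto 0).mono_left (nhdsWithin_le_nhds (s := Ioi (0:ℝ)))
    simpa using this
  have hev3 : ∀ᶠ r in 𝓝[>] (0:ℝ), Real.sqrt r < -B :=
    hsqrt.eventually (eventually_lt_nhds (by linarith : (0:ℝ) < -B))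
  have hev4 : ∀ᶠ r in 𝓝[>] (0:ℝ), r ∈ Ioo 0 δ := by
    filter_upwards [eventually_nhdsWithin_of_eventually_nhds (eventually_lt_nhds hδ0),
      self_mem_nhdsWithin] with r h1 h2
    exact ⟨h2, h1⟩
  obtain ⟨r, hr1, hr2, hr3⟩ := (hev2.and (hev3.and hev4)).exists
  have hb := main r hr3
  have hsr : 0 < Real.sqrt r := Real.sqrt_pos.2 hr3.1
  have hlt : B / Real.sqrt r < -1 := by
    rw [div_lt_iff₀ hsr]
    linarith
  exact absurd hb (not_le.2 (lt_trans hlt hr1))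


/-- Lemma 4.2 part (3) in scalar Riccati form: a solution of the differential
inequality `κ' ≥ -K₀ - κ²` on `(0,∞)` with `r·κ(r) → 1` as `r → 0⁺`
dominates the curvature of circles in the space form of constant curvature
`K₀ ≤ 0` (where `coth x = cosh x / sinh x`). -/
theorem stmt_8 (K₀ : ℝ) (hK₀ : K₀ ≤ 0)
    (κ : ℝ → ℝ) (hdiff : ∀ r : ℝ, 0 < r → DifferentiableAt ℝ κ r)
    (hineq : ∀ r : ℝ, 0 < r → -K₀ - κ r ^ 2 ≤ deriv κ r)
    (hinit : Filter.Tendsto (fun r : ℝ => r * κ r) (nhdsWithin 0 (Set.Ioi 0)) (nhds 1)) :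
    ∀ r : ℝ, 0 < r →
      (K₀ < 0 → Real.sqrt (-K₀) * (Real.cosh (Real.sqrt (-K₀) * r) / Real.sinh (Real.sqrt (-K₀) * r)) ≤ κ r) ∧
      (K₀ = 0 → 1 / r ≤ κ r) := by
  intro r hr
  constructor
  · intro hK
    set s : ℝ := Real.sqrt (-K₀) with hs_def
    have hs : 0 < s := Real.sqrt_pos.2 (by linarith)
    have hs2 : s ^ 2 = -K₀ := Real.sq_sqrt (by linarith)
    set c : ℝ → ℝ := fun x => s * (Real.cosh (s * x) / Real.sinh (s * x)) with hc_def
    have hcd : ∀ t : ℝ, 0 < t → HasDerivAt c (-K₀ - c t ^ 2) t := by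
      intro t ht
      have hst : 0 < s * t := mul_pos hs ht
      have hsinh : 0 < Real.sinh (s * t) := Real.sinh_pos_iff.2 hst
      have h1 : HasDerivAt (fun x : ℝ => s * x) s t := by
        simpa using (hasDerivAt_id t).const_mul s
      have hcosh : HasDerivAt (fun x => Real.cosh (s * x)) (Real.sinh (s * t) * s) t :=
        (Real.hasDerivAt_cosh (s * t)).comp t h1
      have hsinh' : HasDerivAt (fun x => Real.sinh (s * x)) (Real.cosh (s * t) * s) t :=
        (Real.hasDerivAt_sinh (s * t)).comp t h1
      have hdiv := (hcosh.div hsinh' hsinh.ne').const_mul s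
      refine hdiv.congr_deriv ?_
      have hid := Real.cosh_sq_sub_sinh_sq (s * t)
      simp only [hc_def]
      field_simp
      nlinarith [hid, hsinh]
    have hc0 : Tendsto (fun x : ℝ => x * c x) (𝓝[>] 0) (𝓝 1) := by
      have hslope : Tendsto (fun x : ℝ => Real.sinh x / x) (𝓝[≠] (0:ℝ)) (𝓝 1) := by
        have := (Real.hasDerivAt_sinh 0)
        rw [hasDerivAt_iff_tendsto_slope] at this
        simp only [Real.cosh_zero] at this
        apply this.congr
        intro x
        simp [slope_def_field]
      have hφ : Tendsto (fun x : ℝ => Real.cosh x / (Real.sinh x / x)) (𝓝[≠] (0:ℝ)) (𝓝 1) := by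
        have hcoshT : Tendsto Real.cosh (𝓝[≠] (0:ℝ)) (𝓝 1) := by
          have := (Real.continuous_cosh.tendsto 0).mono_left (nhdsWithin_le_nhds (s := {(0:ℝ)}ᶜ))
          simpa using this
        have := hcoshT.div hslope one_ne_zero
        rw [div_one] at this
        exact this
      have hu : Tendsto (fun x : ℝ => s * x) (𝓝[>] (0:ℝ)) (𝓝[≠] (0:ℝ)) := by
        apply tendsto_nhdsWithin_of_tendsto_nhds_of_eventually_within
        · have hcont : Continuous (fun x : ℝ => s * x) := continuous_const.mul continuous_id
          have := (hcont.tendsto 0).mono_left (nhdsWithin_le_nhds (s := Ioi (0:ℝ)))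
          simpa using this
        · filter_upwards [self_mem_nhdsWithin] with x hx
          exact (mul_pos hs hx).ne'
      have hcomp := hφ.comp hu
      apply hcomp.congr'
      filter_upwards [self_mem_nhdsWithin] with x hx
      have hx0 : (0:ℝ) < x := hx
      have hsinh : 0 < Real.sinh (s * x) := Real.sinh_pos_iff.2 (mul_pos hs hx0)
      simp only [Function.comp, hc_def]
      field_simp
    exact riccati_compare K₀ κ c hdiff hineq hinit hcd hc0 r hr
  · intro hK
    subst hK
    have hcd : ∀ t : ℝ, 0 < t → HasDerivAt (fun x : ℝ => 1 / x) (-(0:ℝ) - (1 / t) ^ 2) t := by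
      intro t ht
      have := hasDerivAt_inv ht.ne'
      have e : (fun x : ℝ => 1 / x) = fun y => y⁻¹ := by ext x; rw [one_div]
      rw [e]
      exact this.congr_deriv (by rw [one_div, inv_pow, neg_zero, zero_sub])
    have hc0 : Tendsto (fun x : ℝ => x * (1 / x)) (𝓝[>] (0:ℝ)) (𝓝 1) := by
      apply Tendsto.congr' _ tendsto_const_nhds
      filter_upwards [self_mem_nhdsWithin] with x hx
      field_simp [ne_of_gt (mem_Ioi.1 hx)]
    exact riccati_compare 0 κ (fun x => 1 / x) hdiff hineq hinit hcd hc0 r hr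
end

section
/- Let ε, C > 0, set η' = min(1/2, ε/(2C)) and δ = η'/(2√2·(1 + C²)^{1/2}). Let I ⊂ ℝ be an open interval of diameter at most δ, let B ⊂ I be a compact set, and let φ : I × I → ℝ be twice continuously differentiable satisfying: (H1) |∂²_s φ(s,t)| ≥ ε/4 at every point (s,t) ∈ I × I where |∂_s φ(s,t)| ≤ η'; (H2) |∂²_s φ(s,t)| ≤ C for all (s,t) ∈ I × I; (H3) |∂_t ∂_s φ(s,t)| ≤ 1 for all (s,t) ∈ I × I. Then: (a) if ∂_s φ(s₀,t₀) = 0 for some (s₀,t₀) ∈ I × I, then |∂²_s φ(s,t)| ≥ ε/4 for all (s,t) ∈ I × I; and (b) if ∂_s φ is nowhere vanishing on I × I, then |∂_s φ(s,t)| ≥ min(η'/2, dist(B, ℝ∖I)·ε/4) for all s, t ∈ B. -/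
open Set Filter Topology

lemma sign_pos_aux (α β : ℝ) (f : ℝ → ℝ) (hc : ContinuousOn f (Set.Ioo α β))
    (hne : ∀ x ∈ Set.Ioo α β, f x ≠ 0) {x y : ℝ} (hx : x ∈ Set.Ioo α β)
    (hy : y ∈ Set.Ioo α β) (hfx : 0 < f x) : 0 < f y := by
  by_contra hy0
  have hfy : f y < 0 := lt_of_le_of_ne (not_lt.1 hy0) (hne y hy)
  rcases le_total x y with hxy | hyx
  · have hsub : Set.Icc x y ⊆ Set.Ioo α β := fun z hz =>
      ⟨lt_of_lt_of_le hx.1 hz.1, lt_of_le_of_lt hz.2 hy.2⟩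
    have := intermediate_value_Icc' hxy (hc.mono hsub)
    obtain ⟨z, hz, hz0⟩ := this ⟨hfy.le, hfx.le⟩
    exact hne z (hsub hz) hz0
  · have hsub : Set.Icc y x ⊆ Set.Ioo α β := fun z hz =>
      ⟨lt_of_lt_of_le hy.1 hz.1, lt_of_le_of_lt hz.2 hx.2⟩
    have := intermediate_value_Icc hyx (hc.mono hsub)
    obtain ⟨z, hz, hz0⟩ := this ⟨hfy.le, hfx.le⟩
    exact hne z (hsub hz) hz0

lemma lower_bound_aux (α β ε : ℝ) (f g : ℝ → ℝ)
    (hder : ∀ x ∈ Set.Ioo α β, HasDerivAt f (g x) x)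
    (hg : ∀ x ∈ Set.Ioo α β, ε / 4 ≤ g x)
    (hf : ∀ x ∈ Set.Ioo α β, f x ≠ 0)
    (hε : 0 < ε)
    {s : ℝ} (hs : s ∈ Set.Ioo α β) :
    ε / 4 * min (s - α) (β - s) ≤ |f s| := by
  have hcont : ContinuousOn f (Set.Ioo α β) := fun x hx =>
    ((hder x hx).continuousAt).continuousWithinAt
  have hdiff : DifferentiableOn ℝ f (interior (Set.Ioo α β)) := by
    rw [interior_Ioo]
    exact fun x hx => ((hder x hx).differentiableAt).differentiableWithinAt
  have key : ∀ x ∈ Set.Ioo α β, ∀ y ∈ Set.Ioo α β, x ≤ y →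
      ε / 4 * (y - x) ≤ f y - f x := by
    intro x hx y hy hxy
    refine (convex_Ioo α β).mul_sub_le_image_sub_of_le_deriv hcont hdiff ?_ x hx y hy hxy
    intro z hz
    rw [interior_Ioo] at hz
    rw [(hder z hz).deriv]
    exact hg z hz
  rcases lt_or_gt_of_ne (hf s hs) with hneg | hpos
  · -- f < 0 on Ioo; use points to the right
    have hub : ε / 4 * (β - s) ≤ -f s := by
      have hlim : Tendsto (fun x => ε / 4 * (x - s)) (𝓝[<] β) (𝓝 (ε / 4 * (β - s))) :=
        ((continuous_const.mul (continuous_id.sub continuous_const)).tendsto β).mono_left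
          nhdsWithin_le_nhds
      refine le_of_tendsto hlim ?_
      filter_upwards [Ioo_mem_nhdsLT_of_mem (⟨hs.2, le_refl β⟩ : β ∈ Set.Ioc s β)] with x hx
      have hxI : x ∈ Set.Ioo α β := ⟨hs.1.trans hx.1, hx.2⟩
      have hfx : f x < 0 := by
        by_contra h
        exact absurd (sign_pos_aux α β f hcont hf hxI hs
          (lt_of_le_of_ne (not_lt.1 h) (Ne.symm (hf x hxI)))) (not_lt.2 hneg.le)
      have := key s hs x hxI hx.1.le
      linarith
    calc ε / 4 * min (s - α) (β - s) ≤ ε / 4 * (β - s) := by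
          apply mul_le_mul_of_nonneg_left (min_le_right _ _) (by linarith)
      _ ≤ -f s := hub
      _ ≤ |f s| := neg_le_abs _
  · -- f > 0 on Ioo; use points to the left
    have hub : ε / 4 * (s - α) ≤ f s := by
      have hlim : Tendsto (fun x => ε / 4 * (s - x)) (𝓝[>] α) (𝓝 (ε / 4 * (s - α))) :=
        ((continuous_const.mul (continuous_const.sub continuous_id)).tendsto α).mono_left
          nhdsWithin_le_nhds
      refine le_of_tendsto hlim ?_
      filter_upwards [Ioo_mem_nhdsGT_of_mem (⟨le_refl α, hs.1⟩ : α ∈ Set.Ico α s)] with x hx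
      have hxI : x ∈ Set.Ioo α β := ⟨hx.1, hx.2.trans hs.2⟩
      have hfx : 0 < f x := sign_pos_aux α β f hcont hf hs hxI hpos
      have := key x hxI s hs hx.2.le
      linarith
    calc ε / 4 * min (s - α) (β - s) ≤ ε / 4 * (s - α) := by
          apply mul_le_mul_of_nonneg_left (min_le_left _ _) (by linarith)
      _ ≤ f s := hub
      _ ≤ |f s| := le_abs_self _

-- reflection version: g ≤ -ε/4
lemma lower_bound_aux' (α β ε : ℝ) (f g : ℝ → ℝ)
    (hder : ∀ x ∈ Set.Ioo α β, HasDerivAt f (g x) x)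
    (hg : ∀ x ∈ Set.Ioo α β, g x ≤ -(ε / 4))
    (hf : ∀ x ∈ Set.Ioo α β, f x ≠ 0)
    (hε : 0 < ε)
    {s : ℝ} (hs : s ∈ Set.Ioo α β) :
    ε / 4 * min (s - α) (β - s) ≤ |f s| := by
  have hmem : ∀ x : ℝ, x ∈ Set.Ioo α β → α + β - x ∈ Set.Ioo α β := by
    intro x hx; exact ⟨by linarith [hx.2], by linarith [hx.1]⟩
  have h := lower_bound_aux α β ε (fun x => f (α + β - x)) (fun x => -g (α + β - x))
    (fun x hx => by
      have := (hder (α + β - x) (hmem x hx)).comp x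
        (((hasDerivAt_id x).const_sub (α + β)) : HasDerivAt (fun y => (α + β) - y) (-1) x)
      have h2 : HasDerivAt (fun y => f (α + β - y)) (g (α + β - x) * -1) x := this
      rw [mul_neg_one] at h2; exact h2)
    (fun x hx => by have := hg (α + β - x) (hmem x hx); linarith)
    (fun x hx => hf _ (hmem x hx)) hε (hmem s hs)
  have e1 : α + β - (α + β - s) = s := by ring
  have e2 : (α + β - s) - α = β - s := by ring
  have e3 : β - (α + β - s) = s - α := by ring
  rw [e2, e3, min_comm] at h
  simpa [e1] using h

/-- Abstract calculus content of Lemma 4.3 (uniform phase-function bounds).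
Here `∂_s φ(s,t) = deriv (fun x => φ x t) s`, `∂²_s φ(s,t) =
deriv (deriv (fun x => φ x t)) s`, and `∂_t ∂_s φ(s,t) =
deriv (fun y => deriv (fun x => φ x y) s) t`. -/
theorem stmt_9 (ε C : ℝ) (hε : 0 < ε) (hC : 0 < C)
    (η' δ : ℝ)
    (hη' : η' = min (1 / 2) (ε / (2 * C)))
    (hδ : δ = η' / (2 * Real.sqrt 2 * Real.sqrt (1 + C ^ 2)))
    (α β : ℝ) (hαβ : β - α ≤ δ)
    (B : Set ℝ) (hBcompact : IsCompact B) (hBsub : B ⊆ Set.Ioo α β)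
    (φ : ℝ → ℝ → ℝ)
    (hφC2 : ContDiffOn ℝ 2 (fun p : ℝ × ℝ => φ p.1 p.2) (Set.Ioo α β ×ˢ Set.Ioo α β))
    (H1 : ∀ s ∈ Set.Ioo α β, ∀ t ∈ Set.Ioo α β,
      |deriv (fun x => φ x t) s| ≤ η' → ε / 4 ≤ |deriv (deriv (fun x => φ x t)) s|)
    (H2 : ∀ s ∈ Set.Ioo α β, ∀ t ∈ Set.Ioo α β,
      |deriv (deriv (fun x => φ x t)) s| ≤ C)
    (H3 : ∀ s ∈ Set.Ioo α β, ∀ t ∈ Set.Ioo α β,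
      |deriv (fun y => deriv (fun x => φ x y) s) t| ≤ 1) :
    ((∃ s₀ ∈ Set.Ioo α β, ∃ t₀ ∈ Set.Ioo α β, deriv (fun x => φ x t₀) s₀ = 0) →
      ∀ s ∈ Set.Ioo α β, ∀ t ∈ Set.Ioo α β, ε / 4 ≤ |deriv (deriv (fun x => φ x t)) s|) ∧
    ((∀ s ∈ Set.Ioo α β, ∀ t ∈ Set.Ioo α β, deriv (fun x => φ x t) s ≠ 0) →
      ∀ s ∈ B, ∀ t ∈ B,
        min (η' / 2) (sInf (Set.image2 dist B (Set.Ioo α β)ᶜ) * ε / 4) ≤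
          |deriv (fun x => φ x t) s|) := by
  have hIopen : IsOpen (Set.Ioo α β) := isOpen_Ioo
  have hUopen : IsOpen (Set.Ioo α β ×ˢ Set.Ioo α β) := hIopen.prod hIopen
  set Φ : ℝ × ℝ → ℝ := fun p => φ p.1 p.2 with hΦ
  set ψ : ℝ × ℝ → ℝ := fun p => fderiv ℝ Φ p (1, 0) with hψdef
  -- positivity of constants
  have hη'pos : 0 < η' := by
    rw [hη']; exact lt_min (by norm_num) (by positivity)
  have hsqrt2 : (0:ℝ) < Real.sqrt 2 := Real.sqrt_pos.2 (by norm_num)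
  have hsqrtC : (0:ℝ) < Real.sqrt (1 + C ^ 2) := Real.sqrt_pos.2 (by positivity)
  have hδpos : 0 < δ := by rw [hδ]; positivity
  have hsum : (1 + C) ≤ Real.sqrt 2 * Real.sqrt (1 + C ^ 2) := by
    rw [← Real.sqrt_mul (by norm_num : (0:ℝ) ≤ 2)]
    rw [show (1:ℝ) + C = Real.sqrt ((1 + C) ^ 2) from (Real.sqrt_sq (by positivity)).symm]
    exact Real.sqrt_le_sqrt (by nlinarith [sq_nonneg (1 - C)])
  have hδkey : (1 + C) * δ ≤ η' / 2 := by
    rw [hδ, ← mul_div_assoc, div_le_div_iff₀ (by positivity) (by norm_num)]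
    nlinarith [mul_le_mul_of_nonneg_left hsum (by positivity : (0:ℝ) ≤ 2 * η')]
  have hCδ : C * δ ≤ η' / 2 := by nlinarith [hδpos]
  -- derivative facts
  have hΦdiff : ∀ p ∈ Set.Ioo α β ×ˢ Set.Ioo α β, DifferentiableAt ℝ Φ p := by
    intro p hp
    exact (hφC2.differentiableOn (by norm_num)).differentiableAt (hUopen.mem_nhds hp)
  have F1 : ∀ s ∈ Set.Ioo α β, ∀ t ∈ Set.Ioo α β,
      HasDerivAt (fun x => φ x t) (ψ (s, t)) s := by
    intro s hs t ht
    have hline : HasDerivAt (fun x : ℝ => ((x, t) : ℝ × ℝ)) ((1 : ℝ), (0 : ℝ)) s :=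
      (hasDerivAt_id s).prodMk (hasDerivAt_const s t)
    exact ((hΦdiff (s, t) ⟨hs, ht⟩).hasFDerivAt.comp_hasDerivAt s hline)
  have F1' : ∀ s ∈ Set.Ioo α β, ∀ t ∈ Set.Ioo α β,
      deriv (fun x => φ x t) s = ψ (s, t) := fun s hs t ht => (F1 s hs t ht).deriv
  -- ψ is C¹ on U
  have hψC1 : ContDiffOn ℝ 1 ψ (Set.Ioo α β ×ˢ Set.Ioo α β) := by
    have h1 : ContDiffOn ℝ 1 (fderiv ℝ Φ) (Set.Ioo α β ×ˢ Set.Ioo α β) :=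
      hφC2.fderiv_of_isOpen hUopen (by norm_num)
    exact h1.clm_apply contDiffOn_const
  have hψdiff : ∀ p ∈ Set.Ioo α β ×ˢ Set.Ioo α β, DifferentiableAt ℝ ψ p := by
    intro p hp
    exact (hψC1.differentiableOn (by norm_num)).differentiableAt (hUopen.mem_nhds hp)
  set a : ℝ × ℝ → ℝ := fun p => fderiv ℝ ψ p (1, 0) with ha
  set b : ℝ × ℝ → ℝ := fun p => fderiv ℝ ψ p (0, 1) with hb
  have F2a : ∀ s ∈ Set.Ioo α β, ∀ t ∈ Set.Ioo α β,
      HasDerivAt (fun x => ψ (x, t)) (a (s, t)) s := by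
    intro s hs t ht
    have hline : HasDerivAt (fun x : ℝ => ((x, t) : ℝ × ℝ)) ((1 : ℝ), (0 : ℝ)) s :=
      (hasDerivAt_id s).prodMk (hasDerivAt_const s t)
    exact ((hψdiff (s, t) ⟨hs, ht⟩).hasFDerivAt.comp_hasDerivAt s hline)
  have F2b : ∀ s ∈ Set.Ioo α β, ∀ t ∈ Set.Ioo α β,
      HasDerivAt (fun y => ψ (s, y)) (b (s, t)) t := by
    intro s hs t ht
    have hline : HasDerivAt (fun y : ℝ => ((s, y) : ℝ × ℝ)) ((0 : ℝ), (1 : ℝ)) t :=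
      (hasDerivAt_const t s).prodMk (hasDerivAt_id t)
    exact ((hψdiff (s, t) ⟨hs, ht⟩).hasFDerivAt.comp_hasDerivAt t hline)
  have F3 : ∀ s ∈ Set.Ioo α β, ∀ t ∈ Set.Ioo α β,
      deriv (deriv (fun x => φ x t)) s = a (s, t) := by
    intro s hs t ht
    have hev : deriv (fun x => φ x t) =ᶠ[𝓝 s] fun x => ψ (x, t) := by
      filter_upwards [hIopen.mem_nhds hs] with x hx
      exact F1' x hx t ht
    rw [hev.deriv_eq, (F2a s hs t ht).deriv]
  have F4 : ∀ s ∈ Set.Ioo α β, ∀ t ∈ Set.Ioo α β,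
      deriv (fun y => deriv (fun x => φ x y) s) t = b (s, t) := by
    intro s hs t ht
    have hev : (fun y => deriv (fun x => φ x y) s) =ᶠ[𝓝 t] fun y => ψ (s, y) := by
      filter_upwards [hIopen.mem_nhds ht] with y hy
      exact F1' s hs y hy
    rw [hev.deriv_eq, (F2b s hs t ht).deriv]
  -- translated hypotheses
  have H1' : ∀ s ∈ Set.Ioo α β, ∀ t ∈ Set.Ioo α β,
      |ψ (s, t)| ≤ η' → ε / 4 ≤ |a (s, t)| := by
    intro s hs t ht h
    have := H1 s hs t ht (by rwa [F1' s hs t ht])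
    rwa [F3 s hs t ht] at this
  have H2' : ∀ s ∈ Set.Ioo α β, ∀ t ∈ Set.Ioo α β, |a (s, t)| ≤ C := by
    intro s hs t ht
    have := H2 s hs t ht; rwa [F3 s hs t ht] at this
  have H3' : ∀ s ∈ Set.Ioo α β, ∀ t ∈ Set.Ioo α β, |b (s, t)| ≤ 1 := by
    intro s hs t ht
    have := H3 s hs t ht; rwa [F4 s hs t ht] at this
  -- Lipschitz estimates
  have Lip_s : ∀ t ∈ Set.Ioo α β, ∀ x ∈ Set.Ioo α β, ∀ y ∈ Set.Ioo α β,
      |ψ (y, t) - ψ (x, t)| ≤ C * |y - x| := by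
    intro t ht x hx y hy
    have := (convex_Ioo α β).norm_image_sub_le_of_norm_hasDerivWithin_le
      (f := fun x => ψ (x, t)) (f' := fun x => a (x, t))
      (fun z hz => (F2a z hz t ht).hasDerivWithinAt)
      (fun z hz => by simpa using H2' z hz t ht) hx hy
    simpa [Real.norm_eq_abs] using this
  have Lip_t : ∀ s ∈ Set.Ioo α β, ∀ x ∈ Set.Ioo α β, ∀ y ∈ Set.Ioo α β,
      |ψ (s, y) - ψ (s, x)| ≤ 1 * |y - x| := by
    intro s hs x hx y hy
    have := (convex_Ioo α β).norm_image_sub_le_of_norm_hasDerivWithin_le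
      (f := fun y => ψ (s, y)) (f' := fun y => b (s, y))
      (fun z hz => (F2b s hs z hz).hasDerivWithinAt)
      (fun z hz => by simpa using H3' s hs z hz) hx hy
    simpa [Real.norm_eq_abs] using this
  have habs : ∀ x ∈ Set.Ioo α β, ∀ y ∈ Set.Ioo α β, |y - x| ≤ δ := by
    intro x hx y hy
    rw [abs_sub_le_iff]
    constructor <;> [skip; skip] <;>
      (first | linarith [hx.1, hx.2, hy.1, hy.2, hαβ])
  constructor
  · -- part (a)
    rintro ⟨s₀, hs₀, t₀, ht₀, h0⟩ s hs t ht
    have hψ0 : ψ (s₀, t₀) = 0 := by rw [← F1' s₀ hs₀ t₀ ht₀]; exact h0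
    have hsmall : |ψ (s, t)| ≤ η' := by
      have h1 := Lip_s t ht s₀ hs₀ s hs
      have h2 := Lip_t s₀ hs₀ t₀ ht₀ t ht
      have h3 := habs s₀ hs₀ s hs
      have h4 := habs t₀ ht₀ t ht
      have : |ψ (s, t)| ≤ |ψ (s, t) - ψ (s₀, t)| + |ψ (s₀, t) - ψ (s₀, t₀)| := by
        rw [hψ0] at *
        calc |ψ (s, t)| = |(ψ (s, t) - ψ (s₀, t)) + (ψ (s₀, t) - 0)| := by ring_nf
          _ ≤ |ψ (s, t) - ψ (s₀, t)| + |ψ (s₀, t) - 0| := abs_add_le _ _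
      rw [hψ0] at this h2
      have hC1 : C * |s - s₀| ≤ C * δ := mul_le_mul_of_nonneg_left h3 hC.le
      have hC2 : 1 * |t - t₀| ≤ 1 * δ := mul_le_mul_of_nonneg_left h4 (by norm_num)
      nlinarith [hδkey, hδpos]
    rw [F3 s hs t ht]
    exact H1' s hs t ht hsmall
  · -- part (b)
    intro hne s hsB t htB
    have hs : s ∈ Set.Ioo α β := hBsub hsB
    have ht : t ∈ Set.Ioo α β := hBsub htB
    rw [F1' s hs t ht]
    by_cases hcase : η' / 2 ≤ |ψ (s, t)|
    · exact le_trans (min_le_left _ _) hcase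
    push_neg at hcase
    -- everywhere small in s, hence |a| ≥ ε/4 along the slice
    have hsmall : ∀ x ∈ Set.Ioo α β, |ψ (x, t)| ≤ η' := by
      intro x hx
      have h1 := Lip_s t ht s hs x hx
      have h3 := habs s hs x hx
      have hC1 : C * |x - s| ≤ C * δ := mul_le_mul_of_nonneg_left h3 hC.le
      have : |ψ (x, t)| ≤ |ψ (x, t) - ψ (s, t)| + |ψ (s, t)| := by
        calc |ψ (x, t)| = |(ψ (x, t) - ψ (s, t)) + ψ (s, t)| := by ring_nf
          _ ≤ |ψ (x, t) - ψ (s, t)| + |ψ (s, t)| := abs_add_le _ _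
      nlinarith [hCδ]
    have halarge : ∀ x ∈ Set.Ioo α β, ε / 4 ≤ |a (x, t)| := fun x hx =>
      H1' x hx t ht (hsmall x hx)
    have hane : ∀ x ∈ Set.Ioo α β, a (x, t) ≠ 0 := by
      intro x hx h
      have := halarge x hx
      rw [h, abs_zero] at this; linarith
    have hψne : ∀ x ∈ Set.Ioo α β, ψ (x, t) ≠ 0 := by
      intro x hx
      rw [← F1' x hx t ht]; exact hne x hx t ht
    have hacont : ContinuousOn (fun x => a (x, t)) (Set.Ioo α β) := by
      have hf : ContinuousOn (fderiv ℝ ψ) (Set.Ioo α β ×ˢ Set.Ioo α β) :=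
        hψC1.continuousOn_fderiv_of_isOpen hUopen le_rfl
      have hc2 : ContinuousOn (fun x : ℝ => ((x, t) : ℝ × ℝ)) (Set.Ioo α β) :=
        (continuous_id.prodMk continuous_const).continuousOn
      have hcomp : ContinuousOn (fun x : ℝ => fderiv ℝ ψ (x, t)) (Set.Ioo α β) :=
        hf.comp hc2 (fun x hx => ⟨hx, ht⟩)
      exact hcomp.clm_apply continuousOn_const
    -- pointwise lower bound via the aux lemma
    have hlow : ε / 4 * min (s - α) (β - s) ≤ |ψ (s, t)| := by
      rcases lt_or_gt_of_ne (hane s hs) with hneg | hpos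
      · -- a(·,t) < 0 on the slice
        have hneg' : ∀ x ∈ Set.Ioo α β, a (x, t) ≤ -(ε / 4) := by
          intro x hx
          have h0 : ¬(0 < a (x, t)) := by
            intro h
            have := sign_pos_aux α β (fun x => a (x, t)) hacont hane hx hs h
            linarith
          have := halarge x hx
          rw [abs_of_nonpos (not_lt.1 h0)] at this
          linarith
        exact lower_bound_aux' α β ε (fun x => ψ (x, t)) (fun x => a (x, t))
          (fun x hx => F2a x hx t ht) hneg' hψne hε hs
      · -- a(·,t) > 0 on the slice
        have hpos' : ∀ x ∈ Set.Ioo α β, ε / 4 ≤ a (x, t) := by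
          intro x hx
          have h := sign_pos_aux α β (fun x => a (x, t)) hacont hane hs hx hpos
          have := halarge x hx
          rwa [abs_of_pos h] at this
        exact lower_bound_aux α β ε (fun x => ψ (x, t)) (fun x => a (x, t))
          (fun x hx => F2a x hx t ht) hpos' hψne hε hs
    -- distance comparison
    refine le_trans (min_le_right _ _) ?_
    have hd1 : sInf (Set.image2 dist B (Set.Ioo α β)ᶜ) ≤ s - α := by
      have hmem : dist s α ∈ Set.image2 dist B (Set.Ioo α β)ᶜ :=
        Set.mem_image2_of_mem hsB (by simp [Set.mem_Ioo])
      have hbdd : BddBelow (Set.image2 dist B (Set.Ioo α β)ᶜ) := by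
        refine ⟨0, fun x hx => ?_⟩
        rcases hx with ⟨u, hu, v, hv, rfl⟩
        exact dist_nonneg
      have := csInf_le hbdd hmem
      rwa [Real.dist_eq, abs_of_pos (by linarith [hs.1] : (0:ℝ) < s - α)] at this
    have hd2 : sInf (Set.image2 dist B (Set.Ioo α β)ᶜ) ≤ β - s := by
      have hmem : dist s β ∈ Set.image2 dist B (Set.Ioo α β)ᶜ :=
        Set.mem_image2_of_mem hsB (by simp [Set.mem_Ioo])
      have hbdd : BddBelow (Set.image2 dist B (Set.Ioo α β)ᶜ) := by
        refine ⟨0, fun x hx => ?_⟩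
        rcases hx with ⟨u, hu, v, hv, rfl⟩
        exact dist_nonneg
      have := csInf_le hbdd hmem
      rwa [Real.dist_eq, abs_of_neg (by linarith [hs.2] : s - β < 0), neg_sub] at this
    have hdmin : sInf (Set.image2 dist B (Set.Ioo α β)ᶜ) ≤ min (s - α) (β - s) :=
      le_min hd1 hd2
    calc sInf (Set.image2 dist B (Set.Ioo α β)ᶜ) * ε / 4
        ≤ min (s - α) (β - s) * ε / 4 := by
          apply div_le_div_of_nonneg_right ?_ (by norm_num)
          exact mul_le_mul_of_nonneg_right hdmin hε.le
      _ = ε / 4 * min (s - α) (β - s) := by ring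
      _ ≤ |ψ (s, t)| := hlow
end

section
/- Let a > 0, let U ⊂ ℝ² be a convex open set, let φ : U → ℝ be twice continuously differentiable, and let x₀ ∈ U with ∇φ(x₀) = 0. Suppose that at every point of U the Hessian of φ satisfies |∂²_{11} φ| ≥ a, |∂²_{22} φ| ≥ a, and |∂²_{12} φ| ≤ a/2. Then |∇φ(x)| ≥ (a/(2√2))·|x - x₀| for all x ∈ U. -/
set_option maxHeartbeats 1000000


/-- The mean-value-theorem step in the proof of Proposition 2.3: a `C²`
function on a convex open set of the Euclidean plane whose Hessian has
diagonal entries of absolute value `≥ a` and off-diagonal entry of absolute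
value `≤ a/2`, and whose gradient vanishes at `x₀`, satisfies
`‖∇φ(x)‖ ≥ (a/(2√2))·‖x - x₀‖`. -/
theorem stmt_10 (a : ℝ) (ha : 0 < a)
    (U : Set (EuclideanSpace ℝ (Fin 2))) (hUopen : IsOpen U) (hUconv : Convex ℝ U)
    (φ : EuclideanSpace ℝ (Fin 2) → ℝ) (hφ : ContDiffOn ℝ 2 φ U)
    (x₀ : EuclideanSpace ℝ (Fin 2)) (hx₀ : x₀ ∈ U) (hcrit : gradient φ x₀ = 0)
    (H11 : ∀ x ∈ U,
      a ≤ |fderiv ℝ (fun y => fderiv ℝ φ y (EuclideanSpace.single 0 1)) x (EuclideanSpace.single 0 1)|)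
    (H22 : ∀ x ∈ U,
      a ≤ |fderiv ℝ (fun y => fderiv ℝ φ y (EuclideanSpace.single 1 1)) x (EuclideanSpace.single 1 1)|)
    (H12 : ∀ x ∈ U,
      |fderiv ℝ (fun y => fderiv ℝ φ y (EuclideanSpace.single 1 1)) x (EuclideanSpace.single 0 1)| ≤ a / 2) :
    ∀ x ∈ U, a / (2 * Real.sqrt 2) * ‖x - x₀‖ ≤ ‖gradient φ x‖ := by
  intro x hx
  set e1 : EuclideanSpace ℝ (Fin 2) := EuclideanSpace.single 0 1 with he1
  set e2 : EuclideanSpace ℝ (Fin 2) := EuclideanSpace.single 1 1 with he2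
  set v : EuclideanSpace ℝ (Fin 2) := x - x₀ with hv
  -- differentiability facts
  have hdiff : ∀ ξ ∈ U, DifferentiableAt ℝ (fderiv ℝ φ) ξ := by
    intro ξ hξ
    have hC : ContDiffAt ℝ 2 φ ξ := hφ.contDiffAt (hUopen.mem_nhds hξ)
    exact (hC.fderiv_right (m := 1) (by norm_num)).differentiableAt one_ne_zero
  have hgw : ∀ (w : EuclideanSpace ℝ (Fin 2)), ∀ ξ ∈ U,
      DifferentiableAt ℝ (fun y => fderiv ℝ φ y w) ξ := fun w ξ hξ =>
    (hdiff ξ hξ).clm_apply (differentiableAt_const w)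
  have hfd : ∀ (w : EuclideanSpace ℝ (Fin 2)), ∀ ξ ∈ U, ∀ u,
      fderiv ℝ (fun y => fderiv ℝ φ y w) ξ u = fderiv ℝ (fderiv ℝ φ) ξ u w := by
    intro w ξ hξ u
    rw [fderiv_clm_apply (hdiff ξ hξ) (differentiableAt_const w)]
    simp
  have hsymm : ∀ ξ ∈ U,
      fderiv ℝ (fun y => fderiv ℝ φ y e1) ξ e2 = fderiv ℝ (fun y => fderiv ℝ φ y e2) ξ e1 := by
    intro ξ hξ
    rw [hfd e1 ξ hξ e2, hfd e2 ξ hξ e1]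
    exact ((hφ.contDiffAt (hUopen.mem_nhds hξ)).isSymmSndFDerivAt (by norm_num)) e2 e1
  -- fderiv at x₀ vanishes
  have h0 : fderiv ℝ φ x₀ = 0 := by
    have h1 : fderiv ℝ φ x₀ = InnerProductSpace.toDual ℝ _ (gradient φ x₀) := by
      rw [gradient, LinearIsometryEquiv.apply_symm_apply]
    rw [h1, hcrit, map_zero]
  -- mean value theorem along the segment
  have key : ∀ w : EuclideanSpace ℝ (Fin 2), ∃ ξ ∈ U,
      fderiv ℝ φ x w = fderiv ℝ (fun y => fderiv ℝ φ y w) ξ v := by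
    intro w
    have hline : ∀ t : ℝ, t ∈ Set.Icc (0:ℝ) 1 → x₀ + t • v ∈ U := by
      intro t ht
      have heq : x₀ + t • v = (1 - t) • x₀ + t • x := by
        rw [hv]; module
      rw [heq]
      exact hUconv hx₀ hx (by linarith [ht.2]) ht.1 (by ring)
    have hψ : ∀ t ∈ Set.Icc (0:ℝ) 1, HasDerivAt (fun s : ℝ => fderiv ℝ φ (x₀ + s • v) w)
        (fderiv ℝ (fun y => fderiv ℝ φ y w) (x₀ + t • v) v) t := by
      intro t ht
      have h1 : HasDerivAt (fun s : ℝ => x₀ + s • v) v t := by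
        simpa using ((hasDerivAt_id t).smul_const v).const_add x₀
      exact (hgw w _ (hline t ht)).hasFDerivAt.comp_hasDerivAt t h1
    obtain ⟨c, hc, hceq⟩ := exists_hasDerivAt_eq_slope
      (fun s : ℝ => fderiv ℝ φ (x₀ + s • v) w)
      (fun s : ℝ => fderiv ℝ (fun y => fderiv ℝ φ y w) (x₀ + s • v) v)
      one_pos
      (fun t ht => (hψ t ht).continuousAt.continuousWithinAt)
      (fun t ht => hψ t (Set.mem_Icc_of_Ioo ht))
    refine ⟨x₀ + c • v, hline c (Set.mem_Icc_of_Ioo hc), ?_⟩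
    rw [hceq]
    have hx1 : x₀ + (1:ℝ) • v = x := by rw [hv]; module
    have hx0 : x₀ + (0:ℝ) • v = x₀ := by module
    rw [hx1, hx0, h0]
    simp
  -- decomposition of v
  have hvdec : v = v 0 • e1 + v 1 • e2 := by
    ext i
    fin_cases i <;>
      simp [he1, he2, EuclideanSpace.single_apply, PiLp.add_apply, PiLp.smul_apply]
  -- lower bound for the first component
  obtain ⟨ξ, hξ, hkey1⟩ := key e1
  obtain ⟨η, hη, hkey2⟩ := key e2
  have hexp1 : fderiv ℝ φ x e1 =
      v 0 * fderiv ℝ (fun y => fderiv ℝ φ y e1) ξ e1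
      + v 1 * fderiv ℝ (fun y => fderiv ℝ φ y e1) ξ e2 := by
    rw [hkey1]
    nth_rewrite 1 [hvdec]
    rw [map_add, map_smul, map_smul]
    simp [smul_eq_mul]
  have hexp2 : fderiv ℝ φ x e2 =
      v 0 * fderiv ℝ (fun y => fderiv ℝ φ y e2) η e1
      + v 1 * fderiv ℝ (fun y => fderiv ℝ φ y e2) η e2 := by
    rw [hkey2]
    nth_rewrite 1 [hvdec]
    rw [map_add, map_smul, map_smul]
    simp [smul_eq_mul]
  have habs : ∀ p q : ℝ, |p| - |q| ≤ |p + q| := by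
    intro p q
    have := abs_add_le (p + q) (-q)
    simp only [add_neg_cancel_right, abs_neg] at this
    linarith
  have hA : a * |v 0| - a / 2 * |v 1| ≤ |fderiv ℝ φ x e1| := by
    rw [hexp1]
    have h11 := H11 ξ hξ
    have h12 : |fderiv ℝ (fun y => fderiv ℝ φ y e1) ξ e2| ≤ a / 2 := by
      rw [hsymm ξ hξ]; exact H12 ξ hξ
    have h1 := habs (v 0 * fderiv ℝ (fun y => fderiv ℝ φ y e1) ξ e1)
      (v 1 * fderiv ℝ (fun y => fderiv ℝ φ y e1) ξ e2)
    rw [abs_mul, abs_mul] at h1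
    nlinarith [abs_nonneg (v 0), abs_nonneg (v 1),
      abs_nonneg (fderiv ℝ (fun y => fderiv ℝ φ y e1) ξ e2)]
  have hB : a * |v 1| - a / 2 * |v 0| ≤ |fderiv ℝ φ x e2| := by
    rw [hexp2, add_comm (v 0 * fderiv ℝ (fun y => fderiv ℝ φ y e2) η e1)]
    have h22 := H22 η hη
    have h12 := H12 η hη
    have h1 := habs (v 1 * fderiv ℝ (fun y => fderiv ℝ φ y e2) η e2)
      (v 0 * fderiv ℝ (fun y => fderiv ℝ φ y e2) η e1)
    rw [abs_mul, abs_mul] at h1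
    nlinarith [abs_nonneg (v 0), abs_nonneg (v 1),
      abs_nonneg (fderiv ℝ (fun y => fderiv ℝ φ y e2) η e1)]
  -- components are bounded by the gradient norm
  have hinner : ∀ w : EuclideanSpace ℝ (Fin 2), ‖w‖ = 1 →
      |fderiv ℝ φ x w| ≤ ‖gradient φ x‖ := by
    intro w hw
    have h1 : fderiv ℝ φ x w = (inner ℝ (gradient φ x) w : ℝ) := by
      rw [gradient, InnerProductSpace.toDual_symm_apply]
    rw [h1]
    calc |(inner ℝ (gradient φ x) w : ℝ)| ≤ ‖gradient φ x‖ * ‖w‖ := abs_real_inner_le_norm _ _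
      _ = ‖gradient φ x‖ := by rw [hw, mul_one]
  have hne1 : ‖e1‖ = 1 := by rw [he1, EuclideanSpace.norm_single]; norm_num
  have hne2 : ‖e2‖ = 1 := by rw [he2, EuclideanSpace.norm_single]; norm_num
  have hN1 := hinner e1 hne1
  have hN2 := hinner e2 hne2
  -- norm of v
  have hnv : ‖v‖ ^ 2 = (v 0) ^ 2 + (v 1) ^ 2 := by
    rw [EuclideanSpace.norm_eq, Real.sq_sqrt (by positivity)]
    simp [Fin.sum_univ_two, Real.norm_eq_abs, sq_abs]
  have hs : (0:ℝ) < Real.sqrt 2 := Real.sqrt_pos.mpr (by norm_num)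
  have hs2 : Real.sqrt 2 ^ 2 = 2 := Real.sq_sqrt (by norm_num)
  set N := ‖gradient φ x‖ with hN
  have hNnn : 0 ≤ N := norm_nonneg _
  rcases le_total (|v 1|) (|v 0|) with hc | hc
  · have hvle : ‖v‖ ≤ Real.sqrt 2 * |v 0| := by
      have h2 : ‖v‖ ^ 2 ≤ (Real.sqrt 2 * |v 0|) ^ 2 := by
        rw [mul_pow, hs2, hnv]
        nlinarith [sq_abs (v 0), sq_abs (v 1), abs_nonneg (v 0), abs_nonneg (v 1)]
      calc ‖v‖ = Real.sqrt (‖v‖ ^ 2) := (Real.sqrt_sq (norm_nonneg v)).symm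
        _ ≤ Real.sqrt ((Real.sqrt 2 * |v 0|) ^ 2) := Real.sqrt_le_sqrt h2
        _ = Real.sqrt 2 * |v 0| := Real.sqrt_sq (by positivity)
    have hhalf : a / 2 * |v 0| ≤ N := by
      have := mul_le_mul_of_nonneg_left hc (by linarith : (0:ℝ) ≤ a / 2)
      linarith
    calc a / (2 * Real.sqrt 2) * ‖v‖ ≤ a / (2 * Real.sqrt 2) * (Real.sqrt 2 * |v 0|) := by
          apply mul_le_mul_of_nonneg_left hvle (by positivity)
      _ = a / 2 * |v 0| := by field_simp
      _ ≤ N := hhalf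
  · have hvle : ‖v‖ ≤ Real.sqrt 2 * |v 1| := by
      have h2 : ‖v‖ ^ 2 ≤ (Real.sqrt 2 * |v 1|) ^ 2 := by
        rw [mul_pow, hs2, hnv]
        nlinarith [sq_abs (v 0), sq_abs (v 1), abs_nonneg (v 0), abs_nonneg (v 1)]
      calc ‖v‖ = Real.sqrt (‖v‖ ^ 2) := (Real.sqrt_sq (norm_nonneg v)).symm
        _ ≤ Real.sqrt ((Real.sqrt 2 * |v 1|) ^ 2) := Real.sqrt_le_sqrt h2
        _ = Real.sqrt 2 * |v 1| := Real.sqrt_sq (by positivity)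
    have hhalf : a / 2 * |v 1| ≤ N := by
      have := mul_le_mul_of_nonneg_left hc (by linarith : (0:ℝ) ≤ a / 2)
      linarith
    calc a / (2 * Real.sqrt 2) * ‖v‖ ≤ a / (2 * Real.sqrt 2) * (Real.sqrt 2 * |v 1|) := by
          apply mul_le_mul_of_nonneg_left hvle (by positivity)
      _ = a / 2 * |v 1| := by field_simp
      _ ≤ N := hhalf
end

section
/- Let K_n (n ∈ ℕ) and K be continuous functions ℝ → ℝ with K_n(r) ≤ 0 and K(r) ≤ 0 for all r, and suppose K_n → K uniformly on every compact subset of ℝ. For each n let h_n : ℝ → ℝ be twice continuously differentiable with h_n'' + K_n·h_n = 0, h_n(0) = 1, and h_n bounded on (-∞, 0]; and let h : ℝ → ℝ be twice continuously differentiable with h'' + K·h = 0, h(0) = 1, and h bounded on (-∞, 0]. Then h_n → h uniformly on every compact subset of ℝ, and in particular h_n'(0) → h'(0). -/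
open Set Filter Real

lemma diff_of_C2 {f : ℝ → ℝ} (hf : ContDiff ℝ 2 f) :
    Differentiable ℝ f ∧ Differentiable ℝ (deriv f) := by
  have h2 : ContDiff ℝ ((1 : WithTop ℕ∞) + 1) f := by
    convert hf using 2; exact one_add_one_eq_two
  have h := contDiff_succ_iff_deriv.mp h2
  exact ⟨h.1, h.2.2.differentiable one_ne_zero⟩


lemma convex_w {v : ℝ → ℝ} (hv : ContDiff ℝ 2 v) (c : ℝ) {D : Set ℝ} (hD : Convex ℝ D)
    (hpos : ∀ x ∈ D, 0 ≤ v x * deriv (deriv v) x + c) :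
    ConvexOn ℝ D (fun r => v r * v r + c * (r * r)) := by
  obtain ⟨hd1, hd2⟩ := diff_of_C2 hv
  have hw1 : ∀ r : ℝ, HasDerivAt (fun r => v r * v r + c * (r * r))
      (deriv v r * v r + v r * deriv v r + c * (1 * r + r * 1)) r := by
    intro r
    exact (((hd1 r).hasDerivAt.mul (hd1 r).hasDerivAt).add
      (((hasDerivAt_id r).mul (hasDerivAt_id r)).const_mul c))
  have hdw : deriv (fun r => v r * v r + c * (r * r))
      = fun r => deriv v r * v r + v r * deriv v r + c * (1 * r + r * 1) :=
    funext fun r => (hw1 r).deriv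
  have hw2 : ∀ r : ℝ, HasDerivAt (fun r => deriv v r * v r + v r * deriv v r + c * (1 * r + r * 1))
      ((deriv (deriv v) r * v r + deriv v r * deriv v r)
        + (deriv v r * deriv v r + v r * deriv (deriv v) r) + c * (1 * 1 + 1 * 1)) r := by
    intro r
    have h1 : HasDerivAt (fun r => deriv v r * v r)
        (deriv (deriv v) r * v r + deriv v r * deriv v r) r :=
      (hd2 r).hasDerivAt.mul (hd1 r).hasDerivAt
    have h2 : HasDerivAt (fun r => v r * deriv v r)
        (deriv v r * deriv v r + v r * deriv (deriv v) r) r :=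
      (hd1 r).hasDerivAt.mul (hd2 r).hasDerivAt
    have h3 : HasDerivAt (fun r : ℝ => c * (1 * r + r * 1)) (c * (1 * 1 + 1 * 1)) r :=
      (((hasDerivAt_id r).const_mul (1:ℝ)).add ((hasDerivAt_id r).mul_const (1:ℝ))).const_mul c
    exact (h1.add h2).add h3
  have hdw2 : ∀ r, deriv^[2] (fun r => v r * v r + c * (r * r)) r
      = (deriv (deriv v) r * v r + deriv v r * deriv v r)
        + (deriv v r * deriv v r + v r * deriv (deriv v) r) + c * (1 * 1 + 1 * 1) := by
    intro r
    have : deriv^[2] (fun r => v r * v r + c * (r * r)) r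
        = deriv (deriv (fun r => v r * v r + c * (r * r))) r := by
      simp [Function.iterate_succ, Function.comp]
    rw [this, hdw]
    exact (hw2 r).deriv
  refine convexOn_of_deriv2_nonneg' hD ?_ ?_ ?_
  · intro x _
    exact (((hd1.mul hd1).add
      ((differentiable_id.mul differentiable_id).const_mul c)) x).differentiableWithinAt
  · rw [hdw]
    intro x _
    have : Differentiable ℝ (fun r => deriv v r * v r + v r * deriv v r + c * (1 * r + r * 1)) := by
      exact ((hd2.mul hd1).add (hd1.mul hd2)).add
        (((differentiable_id.const_mul (1:ℝ)).add (differentiable_id.mul_const (1:ℝ))).const_mul c)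
    exact (this x).differentiableWithinAt
  · intro x hx
    rw [hdw2 x]
    have := hpos x hx
    nlinarith [sq_nonneg (deriv v x), sq_nonneg (v x)]


lemma convex_bdd_left {w : ℝ → ℝ} (hw : ConvexOn ℝ Set.univ w) {C : ℝ}
    (hbdd : ∀ r ≤ (0:ℝ), w r ≤ C) : ∀ r ≤ (0:ℝ), w r ≤ w 0 := by
  intro r hr
  rcases eq_or_lt_of_le hr with rfl | hr
  · exact le_rfl
  rcases le_or_gt (C - w 0) 0 with hC | hC
  · linarith [hbdd r hr.le]
  refine le_of_forall_pos_le_add ?_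
  intro eta heta
  set t : ℝ := min (r - 1) (r * (C - w 0) / eta) with ht
  have htr : t < r := lt_of_le_of_lt (min_le_left _ _) (by linarith)
  have htneg : t < 0 := htr.trans hr
  have hlpos : 0 < r / t := div_pos_of_neg_of_neg hr htneg
  have hllt : r / t < 1 := by
    rw [div_lt_one_of_neg htneg]; exact htr
  have ht0 : t ≠ 0 := ne_of_lt htneg
  have hcomb : (r / t) • t + (1 - r / t) • (0:ℝ) = r := by
    simp [smul_eq_mul, div_mul_cancel₀ _ ht0]
  have hconv := hw.2 (Set.mem_univ t) (Set.mem_univ (0:ℝ)) hlpos.le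
    (by linarith : (0:ℝ) ≤ 1 - r / t) (by ring : r / t + (1 - r / t) = 1)
  rw [hcomb] at hconv
  have hwt : w t ≤ C := hbdd t htneg.le
  have hlamle : r / t ≤ eta / (C - w 0) := by
    have h1 : t * eta ≤ r * (C - w 0) := by
      have := min_le_right (r - 1) (r * (C - w 0) / eta)
      rw [← ht] at this
      calc t * eta ≤ (r * (C - w 0) / eta) * eta := by nlinarith
        _ = r * (C - w 0) := by field_simp
    have h2 : r / t = (-r) / (-t) := by rw [neg_div_neg_eq]
    rw [h2, div_le_div_iff₀ (by linarith : (0:ℝ) < -t) hC]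
    nlinarith
  have hfin : (r / t) * (C - w 0) ≤ eta := by
    have := mul_le_mul_of_nonneg_right hlamle (le_of_lt hC)
    rwa [div_mul_cancel₀ _ (ne_of_gt hC)] at this
  calc w r ≤ (r / t) * w t + (1 - r / t) * w 0 := by simpa using hconv
    _ ≤ (r / t) * C + (1 - r / t) * w 0 := by nlinarith
    _ = w 0 + (r / t) * (C - w 0) := by ring
    _ ≤ w 0 + eta := by linarith

lemma abs_le_one_left {g Kf : ℝ → ℝ} (hg : ContDiff ℝ 2 g)
    (hode : ∀ r, deriv (deriv g) r + Kf r * g r = 0) (hK : ∀ r, Kf r ≤ 0)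
    (hg0 : g 0 = 1) (hbdd : ∃ C, ∀ r ≤ (0:ℝ), |g r| ≤ C) : ∀ r ≤ (0:ℝ), |g r| ≤ 1 := by
  obtain ⟨C, hC⟩ := hbdd
  have hconv : ConvexOn ℝ Set.univ (fun r => g r * g r + 0 * (r * r)) := by
    refine convex_w hg 0 convex_univ ?_
    intro x _
    have hx := hode x
    have : deriv (deriv g) x = -(Kf x * g x) := by linarith
    rw [this]
    nlinarith [hK x, sq_nonneg (g x)]
  have hb2 : ∀ r ≤ (0:ℝ), (fun r => g r * g r + 0 * (r * r)) r ≤ C * C := by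
    intro r hr
    simp only [zero_mul, add_zero]
    calc g r * g r = |g r| * |g r| := (abs_mul_abs_self _).symm
      _ ≤ C * C := by
          have := hC r hr
          nlinarith [abs_nonneg (g r)]
  intro r hr
  have := convex_bdd_left hconv hb2 r hr
  simp only [zero_mul, add_zero, hg0, mul_one] at this
  nlinarith [abs_nonneg (g r), abs_mul_abs_self (g r)]

set_option maxHeartbeats 1000000 in
/-- Continuity part of Proposition 4.1 in scalar form: if `Kₙ → K` locally
uniformly (all nonpositive and continuous) and `hₙ`, `h` are the bounded
solutions of the respective Jacobi equations normalized by `hₙ 0 = h 0 = 1`,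
then `hₙ → h` locally uniformly and `hₙ'(0) → h'(0)`. -/
theorem stmt_18 (K : ℕ → ℝ → ℝ) (Klim : ℝ → ℝ)
    (hKcont : ∀ n, Continuous (K n)) (hKlimcont : Continuous Klim)
    (hKnonpos : ∀ n, ∀ r : ℝ, K n r ≤ 0) (hKlimnonpos : ∀ r : ℝ, Klim r ≤ 0)
    (hKconv : ∀ s : Set ℝ, IsCompact s →
      TendstoUniformlyOn (fun n r => K n r) Klim Filter.atTop s)
    (h : ℕ → ℝ → ℝ) (hlim : ℝ → ℝ)
    (hhC2 : ∀ n, ContDiff ℝ 2 (h n))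
    (hhode : ∀ n, ∀ r : ℝ, deriv (deriv (h n)) r + K n r * h n r = 0)
    (hh0 : ∀ n, h n 0 = 1)
    (hhbdd : ∀ n, ∃ C : ℝ, ∀ r : ℝ, r ≤ 0 → |h n r| ≤ C)
    (hlimC2 : ContDiff ℝ 2 hlim)
    (hlimode : ∀ r : ℝ, deriv (deriv hlim) r + Klim r * hlim r = 0)
    (hlim0 : hlim 0 = 1)
    (hlimbdd : ∃ C : ℝ, ∀ r : ℝ, r ≤ 0 → |hlim r| ≤ C) :
    (∀ s : Set ℝ, IsCompact s →
      TendstoUniformlyOn (fun n r => h n r) hlim Filter.atTop s) ∧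
      Filter.Tendsto (fun n => deriv (h n) 0) Filter.atTop (nhds (deriv hlim 0)) := by
  obtain ⟨hdl1, hdl2⟩ := diff_of_C2 hlimC2
  set v : ℕ → ℝ → ℝ := fun n r => h n r - hlim r with hv_def
  have hdn : ∀ n, Differentiable ℝ (h n) ∧ Differentiable ℝ (deriv (h n)) :=
    fun n => diff_of_C2 (hhC2 n)
  have hvC2 : ∀ n, ContDiff ℝ 2 (v n) := fun n => (hhC2 n).sub hlimC2
  have hvdn : ∀ n, Differentiable ℝ (v n) ∧ Differentiable ℝ (deriv (v n)) :=
    fun n => diff_of_C2 (hvC2 n)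
  have hdv : ∀ n r, deriv (v n) r = deriv (h n) r - deriv hlim r :=
    fun n r => deriv_sub ((hdn n).1 r) (hdl1 r)
  have hddv : ∀ n r, deriv (deriv (v n)) r
      = -(K n r) * v n r + (Klim r - K n r) * hlim r := by
    intro n r
    have e1 : deriv (v n) = fun r => deriv (h n) r - deriv hlim r := funext (hdv n)
    rw [e1, deriv_fun_sub ((hdn n).2 r) (hdl2 r)]
    have o1 := hhode n r
    have o2 := hlimode r
    simp only [hv_def]
    ring_nf
    ring_nf at o1 o2
    linarith
  have hv0 : ∀ n, v n 0 = 0 := by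
    intro n; simp [hv_def, hh0 n, hlim0]
  have hb1 : ∀ n, ∀ r ≤ (0:ℝ), |h n r| ≤ 1 :=
    fun n => abs_le_one_left (hhC2 n) (hhode n) (hKnonpos n) (hh0 n) (hhbdd n)
  have hbl : ∀ r ≤ (0:ℝ), |hlim r| ≤ 1 :=
    abs_le_one_left hlimC2 hlimode hKlimnonpos hlim0 hlimbdd
  have hvb : ∀ n, ∀ r ≤ (0:ℝ), |v n r| ≤ 2 := by
    intro n r hr
    have := hb1 n r hr
    have := hbl r hr
    simp only [hv_def]
    calc |h n r - hlim r| ≤ |h n r| + |hlim r| := abs_sub _ _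
      _ ≤ 2 := by linarith
  -- Step A : uniform convergence on [-a, 0]
  have stepA : ∀ a : ℝ, 0 < a → ∀ ε : ℝ, 0 < ε →
      ∀ᶠ n in atTop, ∀ r ∈ Icc (-a) (0:ℝ), |h n r - hlim r| ≤ ε := by
    intro a ha ε hε
    set T : ℝ := max a (16 * a / ε ^ 2) with hT_def
    have hTa : a ≤ T := le_max_left _ _
    have hTpos : 0 < T := lt_of_lt_of_le ha hTa
    have hT2 : 16 * a / ε ^ 2 ≤ T := le_max_right _ _
    set δ : ℝ := ε ^ 2 / (4 * a * T) with hδ_def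
    have hδpos : 0 < δ := by positivity
    have hev := (Metric.tendstoUniformlyOn_iff.mp
      (hKconv (Icc (-T) 0) isCompact_Icc)) δ hδpos
    filter_upwards [hev] with n hn
    intro r hr
    have hrT : r ∈ Icc (-T) (0:ℝ) := ⟨by linarith [hr.1], hr.2⟩
    have hKd : ∀ x ∈ Icc (-T) (0:ℝ), |Klim x - K n x| ≤ δ := by
      intro x hx
      have := hn x hx
      rw [Real.dist_eq] at this
      exact this.le
    -- convexity of w = v² + 2δ x²
    have hw : ConvexOn ℝ (Icc (-T) 0) (fun x => v n x * v n x + (2*δ) * (x*x)) := by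
      refine convex_w (hvC2 n) _ (convex_Icc _ _) ?_
      intro x hx
      rw [hddv n x]
      have he : |(Klim x - K n x) * hlim x| ≤ δ := by
        rw [abs_mul]
        calc |Klim x - K n x| * |hlim x| ≤ δ * 1 :=
          mul_le_mul (hKd x hx) (hbl x hx.2) (abs_nonneg _) hδpos.le
          _ = δ := mul_one _
      have hve : |v n x * ((Klim x - K n x) * hlim x)| ≤ 2 * δ := by
        rw [abs_mul]
        exact mul_le_mul (hvb n x hx.2) he (abs_nonneg _) (by norm_num)
      have h1 := abs_le.mp hve
      have h2 : 0 ≤ -(K n x) * (v n x * v n x) :=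
        mul_nonneg (by linarith [hKnonpos n x]) (mul_self_nonneg _)
      nlinarith
    -- apply convexity at r
    have hmem1 : (-T) ∈ Icc (-T) (0:ℝ) := ⟨le_refl _, by linarith⟩
    have hmem0 : (0:ℝ) ∈ Icc (-T) (0:ℝ) := ⟨by linarith, le_refl _⟩
    have hl1 : 0 ≤ -r / T := div_nonneg (by linarith [hr.2]) hTpos.le
    have hl2 : -r / T ≤ 1 := by
      rw [div_le_one hTpos]; linarith [hr.1]
    have hcomb : (-r / T) • (-T) + (1 - (-r / T)) • (0:ℝ) = r := by
      have hT0 : T ≠ 0 := ne_of_gt hTpos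
      simp only [smul_eq_mul, mul_zero, add_zero]
      field_simp
    have hconv := hw.2 hmem1 hmem0 hl1 (by linarith) (by ring : -r/T + (1 - -r/T) = 1)
    rw [hcomb] at hconv
    simp only [smul_eq_mul] at hconv
    have hw0 : v n 0 * v n 0 + (2*δ) * ((0:ℝ)*0) = 0 := by
      rw [hv0 n]; ring
    have hwT : v n (-T) * v n (-T) + (2*δ) * ((-T)*(-T)) ≤ 4 + 2*δ*T^2 := by
      have := abs_le.mp (hvb n (-T) (by linarith))
      nlinarith
    have hwTnn : 0 ≤ v n (-T) * v n (-T) + (2*δ) * ((-T)*(-T)) := by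
      nlinarith [mul_self_nonneg (v n (-T))]
    have hlam_le : -r / T ≤ a / T := by
      gcongr
      linarith [hr.1]
    have hstep : v n r * v n r ≤ (a/T) * (4 + 2*δ*T^2) := by
      calc v n r * v n r ≤ v n r * v n r + (2*δ)*(r*r) := by nlinarith [mul_self_nonneg r]
        _ ≤ (-r/T) * (v n (-T) * v n (-T) + (2*δ)*((-T)*(-T)))
            + (1 - -r/T) * (v n 0 * v n 0 + (2*δ)*((0:ℝ)*0)) := hconv
        _ = (-r/T) * (v n (-T) * v n (-T) + (2*δ)*((-T)*(-T))) := by rw [hw0]; ring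
        _ ≤ (a/T) * (4 + 2*δ*T^2) :=
            mul_le_mul hlam_le hwT hwTnn (div_nonneg ha.le hTpos.le)
    have e0 : (a/T) * (4 + 2*δ*T^2) = 4*a/T + 2*δ*a*T := by
      field_simp
    have e1 : 4*a/T ≤ ε^2/4 := by
      rw [div_le_div_iff₀ hTpos (by norm_num : (0:ℝ) < 4)]
      have h16 : 16*a ≤ T * ε^2 := by
        rw [div_le_iff₀ (by positivity : (0:ℝ) < ε^2)] at hT2
        linarith
      linarith
    have e2 : 2*δ*a*T = ε^2/2 := by
      rw [hδ_def]
      field_simp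
      ring
    clear_value T δ
    set q : ℝ := v n r with hq_def
    have habs : q * q ≤ ε * ε := by
      clear_value q
      have e3 : ε * ε = ε ^ 2 := by ring
      linarith only [hstep, e0, e1, e2, e3, sq_nonneg ε]
    have : |q| ≤ ε := by
      clear_value q
      rw [← abs_mul_abs_self] at habs
      nlinarith [abs_nonneg q]
    simpa [hq_def, hv_def] using this
  -- Step B : convergence of derivatives at 0
  have stepB : ∀ ε : ℝ, 0 < ε → ∀ᶠ n in atTop, |deriv (h n) 0 - deriv hlim 0| ≤ ε := by
    intro ε hε
    obtain ⟨M₁', hM₁'⟩ := (isCompact_Icc (a := (-1:ℝ)) (b := 0)).exists_bound_of_continuousOn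
      hKlimcont.continuousOn
    set M₁ : ℝ := max M₁' 0 with hM₁_def
    have hM₁nn : 0 ≤ M₁ := le_max_right _ _
    have hM₁ : ∀ x ∈ Icc (-1:ℝ) 0, |Klim x| ≤ M₁ := by
      intro x hx
      calc |Klim x| = ‖Klim x‖ := (Real.norm_eq_abs _).symm
        _ ≤ M₁' := hM₁' x hx
        _ ≤ M₁ := le_max_left _ _
    set B : ℝ := 2 * M₁ + 4 with hB_def
    have hBpos : 0 < B := by positivity
    set t : ℝ := min 1 (ε / (2 * B)) with ht_def
    have ht0 : 0 < t := lt_min one_pos (by positivity)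
    have ht1 : t ≤ 1 := min_le_left _ _
    have htB : B * t ≤ ε / 2 := by
      have h1 : t ≤ ε / (2 * B) := min_le_right _ _
      calc B * t ≤ B * (ε / (2 * B)) := by
            exact mul_le_mul_of_nonneg_left h1 hBpos.le
        _ = ε / 2 := by field_simp
    have hev2 := (Metric.tendstoUniformlyOn_iff.mp
      (hKconv (Icc (-1) 0) isCompact_Icc)) 1 one_pos
    filter_upwards [stepA 1 one_pos (ε * t / 4) (by positivity), hev2] with n hA hK1
    clear_value M₁ B t
    -- bound on the second derivative of v n on [-1, 0]
    have hvb2 : ∀ x ∈ Icc (-t) (0:ℝ), |deriv (deriv (v n)) x| ≤ B := by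
      intro x hx
      have hx1 : x ∈ Icc (-1:ℝ) 0 := ⟨by linarith [hx.1], hx.2⟩
      rw [hddv n x]
      have hKn : |K n x| ≤ M₁ + 1 := by
        have hd := hK1 x hx1
        rw [Real.dist_eq] at hd
        have := hM₁ x hx1
        calc |K n x| = |Klim x - (Klim x - K n x)| := by ring_nf
          _ ≤ |Klim x| + |Klim x - K n x| := abs_sub _ _
          _ ≤ M₁ + 1 := by linarith [hd.le]
      have hd := hK1 x hx1
      rw [Real.dist_eq] at hd
      calc |(-(K n x)) * v n x + (Klim x - K n x) * hlim x|
          ≤ |(-(K n x)) * v n x| + |(Klim x - K n x) * hlim x| := abs_add_le _ _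
        _ = |K n x| * |v n x| + |Klim x - K n x| * |hlim x| := by
            rw [abs_mul, abs_mul, abs_neg]
        _ ≤ (M₁ + 1) * 2 + 1 * 1 := by
            have h1 := hvb n x hx1.2
            have h2 := hbl x hx1.2
            have h3 := hd.le
            exact add_le_add (mul_le_mul hKn h1 (abs_nonneg _) (by linarith))
              (mul_le_mul h3 h2 (abs_nonneg _) one_pos.le)
        _ ≤ B := by rw [hB_def]; linarith
    -- mean value estimates
    have hder2 : ∀ x ∈ Icc (-t) (0:ℝ),
        HasDerivWithinAt (deriv (v n)) (deriv (deriv (v n)) x) (Icc (-t) 0) x :=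
      fun x _ => (((hvdn n).2 x).hasDerivAt).hasDerivWithinAt
    have hlip : ∀ x ∈ Icc (-t) (0:ℝ), |deriv (v n) x - deriv (v n) 0| ≤ B * t := by
      intro x hx
      have h0mem : (0:ℝ) ∈ Icc (-t) (0:ℝ) := ⟨by linarith, le_refl _⟩
      have := (convex_Icc (-t) (0:ℝ)).norm_image_sub_le_of_norm_hasDerivWithin_le hder2
        (fun y hy => by rw [Real.norm_eq_abs]; exact hvb2 y hy) h0mem hx
      rw [Real.norm_eq_abs, Real.norm_eq_abs, sub_zero] at this
      calc |deriv (v n) x - deriv (v n) 0| ≤ B * |x| := this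
        _ ≤ B * t := by
            apply mul_le_mul_of_nonneg_left _ hBpos.le
            rw [abs_le]
            constructor <;> linarith [hx.1, hx.2]
    -- apply MVT to g = v - v'(0)·x
    have hg : ∀ x ∈ Icc (-t) (0:ℝ),
        HasDerivWithinAt (fun y => v n y - deriv (v n) 0 * y)
          (deriv (v n) x - deriv (v n) 0) (Icc (-t) 0) x := by
      intro x _
      have h1 : HasDerivAt (fun y => v n y - deriv (v n) 0 * y)
          (deriv (v n) x - deriv (v n) 0 * 1) x :=
        (((hvdn n).1 x).hasDerivAt).sub ((hasDerivAt_id x).const_mul (deriv (v n) 0))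
      simpa using h1.hasDerivWithinAt
    have h0mem : (0:ℝ) ∈ Icc (-t) (0:ℝ) := ⟨by linarith, le_refl _⟩
    have htmem : (-t) ∈ Icc (-t) (0:ℝ) := ⟨le_refl _, by linarith⟩
    have hMVT := (convex_Icc (-t) (0:ℝ)).norm_image_sub_le_of_norm_hasDerivWithin_le hg
      (fun y hy => by rw [Real.norm_eq_abs]; exact hlip y hy) h0mem htmem
    rw [Real.norm_eq_abs, Real.norm_eq_abs] at hMVT
    have hg0 : v n 0 - deriv (v n) 0 * 0 = 0 := by rw [hv0 n]; ring
    have hvt : |v n (-t)| ≤ ε * t / 4 := by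
      have := hA (-t) ⟨by linarith, by linarith⟩
      simpa [hv_def] using this
    -- conclude
    have hkey : |deriv (v n) 0| * t ≤ B * t * t + ε * t / 4 := by
      have e1 : (fun y => v n y - deriv (v n) 0 * y) (-t)
          - (fun y => v n y - deriv (v n) 0 * y) 0
          = v n (-t) + deriv (v n) 0 * t := by simp [hv0 n]
      rw [e1] at hMVT
      have e2 : |(-t) - 0| = t := by rw [sub_zero, abs_neg, abs_of_pos ht0]
      rw [e2] at hMVT
      have e3 : |deriv (v n) 0 * t| ≤ |v n (-t) + deriv (v n) 0 * t| + |v n (-t)| := by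
        calc |deriv (v n) 0 * t| = |(v n (-t) + deriv (v n) 0 * t) - v n (-t)| := by ring_nf
          _ ≤ |v n (-t) + deriv (v n) 0 * t| + |v n (-t)| := abs_sub _ _
      rw [abs_mul, abs_of_pos ht0] at e3
      linarith
    have hfin : |deriv (v n) 0| ≤ ε := by
      have h1 : |deriv (v n) 0| ≤ B * t + ε / 4 := by
        refine le_of_mul_le_mul_right ?_ ht0
        calc |deriv (v n) 0| * t ≤ B * t * t + ε * t / 4 := hkey
          _ = (B * t + ε / 4) * t := by ring
      linarith [htB, hε.le]
    have : deriv (h n) 0 - deriv hlim 0 = deriv (v n) 0 := (hdv n 0).symm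
    rw [this]
    exact hfin
  -- Step C : uniform convergence on [0, R] via Gronwall
  have stepC : ∀ R : ℝ, 0 < R → ∀ ε : ℝ, 0 < ε →
      ∀ᶠ n in atTop, ∀ r ∈ Icc (0:ℝ) R, |h n r - hlim r| ≤ ε := by
    intro R hR ε hε
    obtain ⟨M', hM'⟩ := (isCompact_Icc (a := (0:ℝ)) (b := R)).exists_bound_of_continuousOn
      hKlimcont.continuousOn
    set M : ℝ := max M' 0 with hM_def
    have hMnn : 0 ≤ M := le_max_right _ _
    have hM : ∀ x ∈ Icc (0:ℝ) R, |Klim x| ≤ M := by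
      intro x hx
      calc |Klim x| = ‖Klim x‖ := (Real.norm_eq_abs _).symm
        _ ≤ M' := hM' x hx
        _ ≤ M := le_max_left _ _
    obtain ⟨H', hH'⟩ := (isCompact_Icc (a := (0:ℝ)) (b := R)).exists_bound_of_continuousOn
      hdl1.continuous.continuousOn
    set H : ℝ := max H' 0 with hH_def
    have hHnn : 0 ≤ H := le_max_right _ _
    have hH : ∀ x ∈ Icc (0:ℝ) R, |hlim x| ≤ H := by
      intro x hx
      calc |hlim x| = ‖hlim x‖ := (Real.norm_eq_abs _).symm
        _ ≤ H' := hH' x hx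
        _ ≤ H := le_max_left _ _
    set L : ℝ := M + 2 with hL_def
    have hL1 : 1 ≤ L := by linarith
    have hLpos : 0 < L := by linarith
    set δ : ℝ := ε / 2 * Real.exp (-(L * R)) with hδ_def
    have hδpos : 0 < δ := by positivity
    have hev3 := (Metric.tendstoUniformlyOn_iff.mp
      (hKconv (Icc 0 R) isCompact_Icc)) (min 1 (δ / (H + 1)))
      (lt_min one_pos (by positivity))
    filter_upwards [stepB δ hδpos, hev3] with n hB0 hKn
    set f : ℝ → ℝ × ℝ := fun r => (v n r, deriv (v n) r) with hf_def
    have hf' : ∀ x ∈ Ico (0:ℝ) R,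
        HasDerivWithinAt f (deriv (v n) x, deriv (deriv (v n)) x) (Ici x) x :=
      fun x _ => ((((hvdn n).1 x).hasDerivAt.prodMk
        (((hvdn n).2 x).hasDerivAt))).hasDerivWithinAt
    have hfc : ContinuousOn f (Icc 0 R) :=
      ((hvdn n).1.continuous.prodMk (hvdn n).2.continuous).continuousOn
    have hf0 : ‖f 0‖ ≤ δ := by
      rw [Prod.norm_def]
      apply max_le
      · simp [hf_def, hv0 n, hδpos.le]
      · have : deriv (v n) 0 = deriv (h n) 0 - deriv hlim 0 := hdv n 0
        simp only [hf_def, Real.norm_eq_abs, this]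
        exact hB0
    have hbound : ∀ x ∈ Ico (0:ℝ) R,
        ‖(deriv (v n) x, deriv (deriv (v n)) x)‖ ≤ L * ‖f x‖ + δ := by
      intro x hx
      have hxI : x ∈ Icc (0:ℝ) R := ⟨hx.1, hx.2.le⟩
      have hfnn : (0:ℝ) ≤ ‖f x‖ := norm_nonneg _
      have hv_le : |v n x| ≤ ‖f x‖ := by
        rw [Prod.norm_def, Real.norm_eq_abs]; exact le_max_left _ _
      have hdv_le : |deriv (v n) x| ≤ ‖f x‖ := by
        rw [Prod.norm_def, Real.norm_eq_abs, Real.norm_eq_abs]; exact le_max_right _ _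
      have hd := hKn x hxI
      rw [Real.dist_eq] at hd
      have hd1 : |Klim x - K n x| ≤ 1 := le_trans hd.le (min_le_left _ _)
      have hd2 : |Klim x - K n x| ≤ δ / (H + 1) := le_trans hd.le (min_le_right _ _)
      have hKnb : |K n x| ≤ M + 1 := by
        calc |K n x| = |Klim x - (Klim x - K n x)| := by ring_nf
          _ ≤ |Klim x| + |Klim x - K n x| := abs_sub _ _
          _ ≤ M + 1 := add_le_add (hM x hxI) hd1
      rw [Prod.norm_def]
      apply max_le
      · rw [Real.norm_eq_abs]
        nlinarith [mul_nonneg (sub_nonneg.mpr hL1) hfnn]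
      · rw [Real.norm_eq_abs, hddv n x]
        have he2 : |Klim x - K n x| * |hlim x| ≤ δ := by
          calc |Klim x - K n x| * |hlim x| ≤ (δ / (H + 1)) * H :=
              mul_le_mul hd2 (hH x hxI) (abs_nonneg _) (by positivity)
            _ ≤ δ := by
                rw [div_mul_eq_mul_div, div_le_iff₀ (by positivity : (0:ℝ) < H + 1)]
                nlinarith
        calc |(-(K n x)) * v n x + (Klim x - K n x) * hlim x|
            ≤ |(-(K n x)) * v n x| + |(Klim x - K n x) * hlim x| := abs_add_le _ _
          _ = |K n x| * |v n x| + |Klim x - K n x| * |hlim x| := by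
              rw [abs_mul, abs_mul, abs_neg]
          _ ≤ (M + 1) * ‖f x‖ + δ := by
              have h1 : |K n x| * |v n x| ≤ (M + 1) * ‖f x‖ :=
                mul_le_mul hKnb hv_le (abs_nonneg _) (by linarith)
              linarith
          _ ≤ L * ‖f x‖ + δ := by nlinarith
    have hgron := norm_le_gronwallBound_of_norm_deriv_right_le hfc hf' hf0 hbound
    intro r hr
    have hgr := hgron r hr
    have hvfr : |v n r| ≤ ‖f r‖ := by
      rw [Prod.norm_def, Real.norm_eq_abs]; exact le_max_left _ _
    rw [gronwallBound_of_K_ne_0 (ne_of_gt hLpos)] at hgr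
    set E : ℝ := Real.exp (L * R) with hE_def
    have hEpos : 0 < E := Real.exp_pos _
    have hexp1 : Real.exp (L * (r - 0)) ≤ E := by
      rw [hE_def]
      apply Real.exp_le_exp.mpr
      have := hr.2
      nlinarith
    have hexp0 : 1 ≤ Real.exp (L * (r - 0)) := by
      rw [← Real.exp_zero]
      apply Real.exp_le_exp.mpr
      have := hr.1
      nlinarith
    have hδL : δ / L ≤ δ := by
      rw [div_le_iff₀ hLpos]
      nlinarith
    have hδLnn : 0 ≤ δ / L := by positivity
    have hterm2 : δ / L * (Real.exp (L * (r - 0)) - 1) ≤ δ * E :=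
      mul_le_mul hδL (by linarith) (by linarith) hδpos.le
    have hterm1 : δ * Real.exp (L * (r - 0)) ≤ δ * E :=
      mul_le_mul_of_nonneg_left hexp1 hδpos.le
    have h2δE : 2 * (δ * E) = ε := by
      rw [hδ_def, hE_def]
      have : Real.exp (-(L * R)) * Real.exp (L * R) = 1 := by
        rw [← Real.exp_add]; simp
      nlinarith
    have : |v n r| ≤ ε := by
      calc |v n r| ≤ ‖f r‖ := hvfr
        _ ≤ δ * Real.exp (L * (r - 0)) + δ / L * (Real.exp (L * (r - 0)) - 1) := hgr
        _ ≤ δ * E + δ * E := by linarith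
        _ = ε := by linarith
    simpa [hv_def] using this
  constructor
  · intro s hs
    rw [Metric.tendstoUniformlyOn_iff]
    intro ε hε
    obtain ⟨R0, hR0⟩ := hs.isBounded.subset_closedBall 0
    set R : ℝ := max R0 1 with hR_def
    have hRpos : (0:ℝ) < R := lt_of_lt_of_le one_pos (le_max_right _ _)
    have hsub : s ⊆ Icc (-R) R := by
      refine subset_trans hR0 ?_
      rw [Real.closedBall_eq_Icc]
      apply Icc_subset_Icc <;> simp [hR_def] <;> linarith [le_max_left R0 1]
    filter_upwards [stepA R hRpos (ε/2) (by positivity),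
      stepC R hRpos (ε/2) (by positivity)] with n hA hC
    intro x hx
    have hx' := hsub hx
    rw [Real.dist_eq, abs_sub_comm]
    rcases le_total x 0 with hx0 | hx0
    · have := hA x ⟨hx'.1, hx0⟩
      linarith
    · have := hC x ⟨hx0, hx'.2⟩
      linarith
  · rw [Metric.tendsto_nhds]
    intro ε hε
    filter_upwards [stepB (ε/2) (by positivity)] with n hn
    rw [Real.dist_eq]
    linarith
end
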